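/- arXiv:2003.13944 — 5 statements merged into one kernel-verified Lean document; each statement's English description precedes it below -/
import Mathlib

section
/- Let C be a linear code in F_q^n and let C^⊥ be its dual code. Then the Hamming weight enumerator satisfies W_{C^⊥}(X,Y) = (1/|C|) · W_C(X+(q-1)Y, X-Y), where W_C(X,Y) = Σ_{c∈C} X^{n-wt(c)} Y^{wt(c)}. -/
open Finset

private lemma addChar_map_sum {A M : Type*} [AddCommMonoid A] [CommMonoid M]
    (χ : AddChar A M) {ι : Type*} (s : Finset ι) (v : ι → A) :
    χ (∑ i ∈ s, v i) = ∏ i ∈ s, χ (v i) := by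
  classical
  induction s using Finset.induction with
  | empty => simp
  | insert _ _ h ih => simp [Finset.sum_insert h, Finset.prod_insert h, AddChar.map_add_eq_mul, ih]

private lemma prod_ite_wt {F : Type*} [Zero F] [DecidableEq F] {n : ℕ} (y : Fin n → F)
    {E : Type*} [CommMonoid E] (A B : E) :
    (∏ i, if y i = 0 then A else B) =
      A ^ (n - (univ.filter fun i => y i ≠ 0).card) * B ^ (univ.filter fun i => y i ≠ 0).card := by
  rw [Finset.prod_ite, Finset.prod_const, Finset.prod_const]
  congr 2
  have h1 : (univ.filter fun i : Fin n => ¬ y i = 0) = (univ.filter fun i => y i ≠ 0) := rfl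
  have := Finset.card_filter_add_card_filter_not (s := (univ : Finset (Fin n)))
    (p := fun i => y i = 0)
  simp only [card_univ, Fintype.card_fin, h1] at this
  omega

private lemma macwilliams_aux (F : Type*) [Field F] [Fintype F] [DecidableEq F]
    (n : ℕ) (C : Submodule F (Fin n → F)) [DecidablePred (· ∈ C)]
    (E : Type*) [Field E] (χ : AddChar F E) (hχ : χ.IsPrimitive) (X Y : E) :
    (Fintype.card C : E) *
      ∑ y ∈ univ.filter (fun y : Fin n → F => ∀ x ∈ C, ∑ i, x i * y i = 0),
        X ^ (n - (univ.filter fun i => y i ≠ 0).card) * Y ^ ((univ.filter fun i => y i ≠ 0).card)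
    = ∑ x ∈ univ.filter (· ∈ C),
        (X + ((Fintype.card F : E) - 1) * Y) ^ (n - (univ.filter fun i => x i ≠ 0).card)
          * (X - Y) ^ ((univ.filter fun i => x i ≠ 0).card) := by
  classical
  have hzero : (0 : AddChar F E) = 1 := rfl
  -- sum of a nontrivial multiplicative-shifted character vanishes
  have hsum0 : ∀ a : F, a ≠ 0 → ∑ t : F, χ (a * t) = 0 := by
    intro a ha
    have h1 : ∑ t : F, (χ.mulShift a) t = 0 := by
      rw [AddChar.sum_eq_ite, if_neg]
      intro h; exact hχ ha (hzero ▸ h)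
    simpa [AddChar.mulShift_apply] using h1
  -- cardinality of C as a filter
  have hcardC : (univ.filter (· ∈ C)).card = Fintype.card C := by
    rw [Fintype.card_subtype]
  -- orthogonality
  have key : ∀ y : Fin n → F, ∑ x ∈ univ.filter (· ∈ C), χ (∑ i, x i * y i) =
      if (∀ x ∈ C, ∑ i, x i * y i = 0) then (Fintype.card C : E) else 0 := by
    intro y
    by_cases h : ∀ x ∈ C, ∑ i, x i * y i = 0
    · rw [if_pos h, Finset.sum_congr rfl (fun x hx => ?_), Finset.sum_const, hcardC,
        nsmul_eq_mul, mul_one]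
      rw [h x (by simpa using hx)]; exact χ.map_zero_eq_one
    · rw [if_neg h]
      push_neg at h
      obtain ⟨x0, hx0C, hs⟩ := h
      set s := ∑ i, x0 i * y i with hsdef
      obtain ⟨u, hu⟩ := AddChar.ne_one_iff.1 (hχ hs)
      set c := u • x0 with hc
      have hcC : c ∈ C := C.smul_mem u hx0C
      have hφc : (∑ i, c i * y i) = s * u := by
        have h2 : ∑ i, c i * y i = u * ∑ i, x0 i * y i := by
          rw [Finset.mul_sum]
          exact Finset.sum_congr rfl fun i _ => by simp [hc, mul_assoc]
        rw [h2, ← hsdef, mul_comm]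
      rw [Finset.sum_subtype (p := fun x : Fin n → F => x ∈ C)
        (univ.filter (· ∈ C)) (by simp) (fun x => χ (∑ i, x i * y i))]
      have hu' : χ (s * u) ≠ 1 := by simpa [AddChar.mulShift_apply] using hu
      have htrans : χ (s * u) * (∑ x : C, χ (∑ i, (x : Fin n → F) i * y i))
          = ∑ x : C, χ (∑ i, (x : Fin n → F) i * y i) := by
        have h3 := Equiv.sum_comp (Equiv.addLeft (⟨c, hcC⟩ : C))
          (fun x : C => χ (∑ i, (x : Fin n → F) i * y i))
        conv_rhs => rw [← h3]
        rw [Finset.mul_sum]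
        refine Finset.sum_congr rfl fun x _ => ?_
        have h4 : (∑ i, ((⟨c, hcC⟩ + x : C) : Fin n → F) i * y i)
            = (s * u) + ∑ i, (x : Fin n → F) i * y i := by
          rw [← hφc, ← Finset.sum_add_distrib]
          exact Finset.sum_congr rfl fun i _ => by simp [add_mul]
        show χ (s * u) * χ (∑ i, (x : Fin n → F) i * y i)
          = χ (∑ i, ((⟨c, hcC⟩ + x : C) : Fin n → F) i * y i)
        rw [h4, AddChar.map_add_eq_mul]
      have h5 : (χ (s * u) - 1) * (∑ x : C, χ (∑ i, (x : Fin n → F) i * y i)) = 0 := by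
        rw [sub_mul, htrans, one_mul, sub_self]
      rcases mul_eq_zero.1 h5 with h6 | h6
      · exact absurd (sub_eq_zero.1 h6) hu'
      · exact h6
  -- the single-coordinate Fourier computation
  have inner : ∀ a : F, ∑ t : F, χ (a * t) * (if t = 0 then X else Y)
      = if a = 0 then X + ((Fintype.card F : E) - 1) * Y else X - Y := by
    intro a
    by_cases ha : a = 0
    · rw [if_pos ha]
      simp only [ha, zero_mul, AddChar.map_zero_eq_one, one_mul]
      rw [Finset.sum_ite, Finset.sum_const, Finset.sum_const, Finset.filter_eq']
      have hcard1 : ∀ t : F, ¬ t = 0 ↔ t ≠ 0 := fun t => Iff.rfl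
      have h7 := Finset.card_filter_add_card_filter_not
        (s := (univ : Finset F)) (p := fun t : F => t = 0)
      simp only [Finset.card_univ] at h7
      have h8 : (Finset.filter (fun t : F => ¬ t = 0) univ).card = Fintype.card F - 1 := by
        have h7' : (Finset.filter (fun t : F => t = 0) univ).card = 1 := by
          rw [Finset.filter_eq']; simp
        omega
      rw [h8]
      simp only [Finset.mem_univ, if_pos, Finset.card_singleton, one_nsmul, nsmul_eq_mul]
      have hq1 : (1 : ℕ) ≤ Fintype.card F := Fintype.card_pos
      push_cast [Nat.cast_sub hq1]
      ring
    · rw [if_neg ha]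
      have h9 : ∀ t : F, χ (a * t) * (if t = 0 then X else Y)
          = χ (a * t) * Y + (if t = 0 then X - Y else 0) := by
        intro t; by_cases ht : t = 0 <;> simp [ht]
      rw [Finset.sum_congr rfl fun t _ => h9 t, Finset.sum_add_distrib, ← Finset.sum_mul,
        hsum0 a ha, zero_mul, zero_add, Finset.sum_ite_eq' univ (0 : F) (fun _ => X - Y)]
      simp
  -- the Fourier transform of the weight function
  have fourier : ∀ x : Fin n → F,
      ∑ y : Fin n → F, χ (∑ i, x i * y i) *
        (X ^ (n - (univ.filter fun i => y i ≠ 0).card) * Y ^ ((univ.filter fun i => y i ≠ 0).card))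
      = (X + ((Fintype.card F : E) - 1) * Y) ^ (n - (univ.filter fun i => x i ≠ 0).card)
          * (X - Y) ^ ((univ.filter fun i => x i ≠ 0).card) := by
    intro x
    have h10 : ∀ y : Fin n → F, χ (∑ i, x i * y i) *
        (X ^ (n - (univ.filter fun i => y i ≠ 0).card) * Y ^ ((univ.filter fun i => y i ≠ 0).card))
        = ∏ i, (χ (x i * y i) * (if y i = 0 then X else Y)) := by
      intro y
      rw [← prod_ite_wt y X Y, addChar_map_sum, ← Finset.prod_mul_distrib]
    have h12 := Fintype.prod_sum (fun (i : Fin n) (t : F) => χ (x i * t) * (if t = 0 then X else Y))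
    rw [Finset.sum_congr rfl fun y _ => h10 y, ← h12, ← prod_ite_wt x _ _]
    exact Finset.prod_congr rfl fun i _ => inner (x i)
  -- putting it all together
  calc (Fintype.card C : E) *
      ∑ y ∈ univ.filter (fun y : Fin n → F => ∀ x ∈ C, ∑ i, x i * y i = 0),
        X ^ (n - (univ.filter fun i => y i ≠ 0).card) * Y ^ ((univ.filter fun i => y i ≠ 0).card)
      = ∑ y : Fin n → F, (if (∀ x ∈ C, ∑ i, x i * y i = 0) then (Fintype.card C : E) else 0) *
          (X ^ (n - (univ.filter fun i => y i ≠ 0).card) *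
            Y ^ ((univ.filter fun i => y i ≠ 0).card)) := by
        have h11 : ∀ y : Fin n → F,
            (if (∀ x ∈ C, ∑ i, x i * y i = 0) then (Fintype.card C : E) else 0) *
              (X ^ (n - (univ.filter fun i => y i ≠ 0).card) *
                Y ^ ((univ.filter fun i => y i ≠ 0).card))
            = if (∀ x ∈ C, ∑ i, x i * y i = 0) then
                (Fintype.card C : E) * (X ^ (n - (univ.filter fun i => y i ≠ 0).card) *
                  Y ^ ((univ.filter fun i => y i ≠ 0).card)) else 0 := by
          intro y; split <;> simp
        rw [Finset.sum_congr rfl fun y _ => h11 y, ← Finset.sum_filter, Finset.mul_sum]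
    _ = ∑ y : Fin n → F, (∑ x ∈ univ.filter (· ∈ C), χ (∑ i, x i * y i)) *
          (X ^ (n - (univ.filter fun i => y i ≠ 0).card) *
            Y ^ ((univ.filter fun i => y i ≠ 0).card)) := by
        exact Finset.sum_congr rfl fun y _ => by rw [key y]
    _ = ∑ x ∈ univ.filter (· ∈ C), ∑ y : Fin n → F, χ (∑ i, x i * y i) *
          (X ^ (n - (univ.filter fun i => y i ≠ 0).card) *
            Y ^ ((univ.filter fun i => y i ≠ 0).card)) := by
        rw [Finset.sum_comm]
        exact Finset.sum_congr rfl fun y _ => by rw [Finset.sum_mul]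
    _ = _ := Finset.sum_congr rfl fun x _ => fourier x

/-- **MacWilliams theorem.**  Let `C` be a linear code in `F_q^n` and `C^⊥` its dual code.
Then the Hamming weight enumerator satisfies
`W_{C^⊥}(X,Y) = (1/|C|) · W_C(X+(q-1)Y, X-Y)`,
where `W_C(X,Y) = Σ_{c∈C} X^{n-wt(c)} Y^{wt(c)}`. -/
theorem macwilliams_identity (F : Type*) [Field F] [Fintype F] (q : ℕ)
    (hq : q = Fintype.card F) (n : ℕ) (C : Submodule F (Fin n → F)) (X Y : ℚ) :
    (∑ᶠ y ∈ {y : Fin n → F | ∀ x ∈ C, ∑ i, x i * y i = 0},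
        X ^ (n - Nat.card {i | y i ≠ 0}) * Y ^ (Nat.card {i | y i ≠ 0})) =
      (1 / (Nat.card C : ℚ)) *
        ∑ᶠ c ∈ (C : Set (Fin n → F)),
          (X + ((q : ℚ) - 1) * Y) ^ (n - Nat.card {i | c i ≠ 0}) *
            (X - Y) ^ (Nat.card {i | c i ≠ 0}) := by
  classical
  subst hq
  -- a primitive additive character of `F` with values in a cyclotomic extension of `ℚ`
  have hp : (ringChar F).Prime := CharP.char_is_prime F (ringChar F)
  have hne : ringChar ℚ ≠ ringChar F := by
    rw [ringChar.eq_zero]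
    exact fun h => hp.ne_zero h.symm
  obtain ⟨m, χ, hχ⟩ := AddChar.FiniteField.primitiveChar F ℚ hne
  set E := CyclotomicField m ℚ with hE
  haveI : CharZero E := charZero_of_injective_algebraMap (algebraMap ℚ E).injective
  -- rewrite the finsums as finite sums
  have hD : {y : Fin n → F | ∀ x ∈ C, ∑ i, x i * y i = 0} =
      ↑(univ.filter fun y : Fin n → F => ∀ x ∈ C, ∑ i, x i * y i = 0) := by
    ext y; simp
  have hC : (C : Set (Fin n → F)) = ↑(univ.filter (· ∈ C)) := by ext x; simp
  rw [hD, finsum_mem_coe_finset, hC, finsum_mem_coe_finset]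
  have hwt : ∀ y : Fin n → F, Nat.card {i | y i ≠ 0} = (univ.filter fun i => y i ≠ 0).card := by
    intro y
    rw [Nat.card_eq_fintype_card]
    exact Fintype.card_subtype _
  simp only [hwt, Nat.card_eq_fintype_card]
  -- reduce to the identity proved over `E`
  have hcard : (Fintype.card C : ℚ) ≠ 0 := Nat.cast_ne_zero.2 Fintype.card_ne_zero
  rw [one_div, eq_comm, inv_mul_eq_iff_eq_mul₀ hcard, eq_comm]
  apply (algebraMap ℚ E).injective
  have h := macwilliams_aux F n C E χ hχ (algebraMap ℚ E X) (algebraMap ℚ E Y)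
  simpa only [map_mul, map_sum, map_pow, map_add, map_sub, map_one, map_natCast] using h
end

section
/- Let C₁, C₂ be linear codes in F_q^n. Define the second weight enumerator W^{[2]}_{C₁,C₂}(X,Y) = Σ_{c₁∈C₁, c₂∈C₂} X^{n-wt(c₁,c₂)} Y^{wt(c₁,c₂)}, where wt(c₁,c₂) is the number of coordinates in which c₁ and c₂ are not both zero. Then W^{[2]}_{C₁^⊥, C₂^⊥}(X,Y) = (1/(|C₁|·|C₂|)) · W^{[2]}_{C₁,C₂}(X+(q²-1)Y, X-Y). -/
open Finset

section MacWilliamsAux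
variable {F : Type*} [Field F] [Fintype F] [DecidableEq F]

private lemma mw_sum_ite_zero_field (u v : ℚ) :
    ∑ a : F, (if a = 0 then u else v) = u + ((Fintype.card F : ℚ) - 1) * v := by
  have h : ∀ a : F, (if a = 0 then u else v) = (if a = 0 then u - v else 0) + v := by
    intro a; split_ifs <;> ring
  simp only [h, Finset.sum_add_distrib]
  rw [Finset.sum_ite_eq' Finset.univ (0:F) (fun _ => u - v)]
  simp [Finset.card_univ]
  ring

private lemma mw_lemM : ∀ (n : ℕ) (c : Fin n → F) (u v : Fin n → ℚ),
    (Fintype.card F : ℚ) * ∑ z : Fin n → F,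
      (if (∑ i, c i * z i) = 0 then (1:ℚ) else 0) * ∏ i, (if z i = 0 then u i else v i)
    = (∏ i, (u i + ((Fintype.card F : ℚ) - 1) * v i))
      + ((Fintype.card F : ℚ) - 1) *
        ∏ i, (if c i = 0 then u i + ((Fintype.card F : ℚ) - 1) * v i else u i - v i) := by
  intro n
  induction n with
  | zero =>
    intro c u v
    simp
  | succ n ih =>
    intro c u v
    have hq0 : (Fintype.card F : ℚ) ≠ 0 := by
      simp [Fintype.card_ne_zero]
    rw [← Equiv.sum_comp (Fin.consEquiv (fun _ : Fin (n+1) => F))]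
    rw [Fintype.sum_prod_type]
    simp only [Fin.consEquiv_apply, Fin.sum_univ_succ, Fin.prod_univ_succ, Fin.cons_zero,
      Fin.cons_succ]
    by_cases h0 : c 0 = 0
    · simp only [h0, zero_mul, zero_add, eq_self_iff_true, if_true]
      have h1 : ∀ a : F, ∑ t : Fin n → F,
          (if (∑ i, c i.succ * t i) = 0 then (1:ℚ) else 0) *
            ((if a = 0 then u 0 else v 0) * ∏ i, (if t i = 0 then u i.succ else v i.succ))
          = (if a = 0 then u 0 else v 0) * ∑ t : Fin n → F,
              (if (∑ i, c i.succ * t i) = 0 then (1:ℚ) else 0) *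
                ∏ i, (if t i = 0 then u i.succ else v i.succ) := by
        intro a
        rw [Finset.mul_sum]
        exact Finset.sum_congr rfl (fun t _ => by ring)
      simp only [h1]
      rw [← Finset.sum_mul]
      rw [mw_sum_ite_zero_field]
      have := ih (fun i => c i.succ) (fun i => u i.succ) (fun i => v i.succ)
      linear_combination (u 0 + ((Fintype.card F : ℚ) - 1) * v 0) * this
    · rw [if_neg h0]
      have key : ∀ t : Fin n → F, ∑ a : F,
          (if c 0 * a + (∑ i, c i.succ * t i) = 0 then (1:ℚ) else 0) *
            ((if a = 0 then u 0 else v 0) * ∏ i, (if t i = 0 then u i.succ else v i.succ))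
          = (if (∑ i, c i.succ * t i) = 0 then u 0 else v 0) *
              ∏ i, (if t i = 0 then u i.succ else v i.succ) := by
        intro t
        set R := ∑ i, c i.succ * t i with hR
        have ha : ∀ a : F, (c 0 * a + R = 0) ↔ (a = -R / c 0) := by
          intro a
          rw [eq_div_iff h0]
          constructor
          · intro h; linear_combination h
          · intro h; linear_combination h
        simp only [ha, boole_mul]
        rw [Finset.sum_ite_eq' Finset.univ (-R / c 0)
          (fun a => (if a = 0 then u 0 else v 0) * ∏ i, (if t i = 0 then u i.succ else v i.succ))]
        have hz : (-R / c 0 = 0) ↔ R = 0 := by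
          simp [div_eq_zero_iff, h0, neg_eq_zero]
        simp only [Finset.mem_univ, if_pos, hz]
      rw [Finset.sum_comm]
      simp only [key]
      have h2 : ∀ t : Fin n → F,
          (if (∑ i, c i.succ * t i) = 0 then u 0 else v 0) *
              ∏ i, (if t i = 0 then u i.succ else v i.succ)
          = (u 0 - v 0) * ((if (∑ i, c i.succ * t i) = 0 then (1:ℚ) else 0) *
              ∏ i, (if t i = 0 then u i.succ else v i.succ))
            + v 0 * ∏ i, (if t i = 0 then u i.succ else v i.succ) := by
        intro t; split_ifs <;> ring
      simp only [h2]
      rw [Finset.sum_add_distrib, ← Finset.mul_sum, ← Finset.mul_sum]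
      have ihc := ih (fun i => c i.succ) (fun i => u i.succ) (fun i => v i.succ)
      have tot0 := ih (fun _ => (0:F)) (fun i => u i.succ) (fun i => v i.succ)
      simp only [zero_mul, Finset.sum_const_zero, eq_self_iff_true, if_true, one_mul] at tot0
      have htot : ∑ t : Fin n → F, ∏ i, (if t i = 0 then u i.succ else v i.succ)
          = ∏ i : Fin n, (u i.succ + ((Fintype.card F : ℚ) - 1) * v i.succ) := by
        apply mul_left_cancel₀ hq0
        rw [tot0]; ring
      rw [htot]
      linear_combination (u 0 - v 0) * ihc

private lemma mw_lemM2 (n : ℕ) (c : Fin n → F) (u v : Fin n → ℚ) :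
    ∑ z : Fin n → F, ((Fintype.card F : ℚ) * (if (∑ i, c i * z i) = 0 then 1 else 0) - 1)
        * ∏ i, (if z i = 0 then u i else v i)
    = ((Fintype.card F : ℚ) - 1) *
        ∏ i, (if c i = 0 then u i + ((Fintype.card F : ℚ) - 1) * v i else u i - v i) := by
  have hq0 : (Fintype.card F : ℚ) ≠ 0 := by simp [Fintype.card_ne_zero]
  have h1 := mw_lemM n c u v
  have h0 := mw_lemM n (fun _ => (0:F)) u v
  simp only [zero_mul, Finset.sum_const_zero, eq_self_iff_true, if_true, one_mul] at h0
  have htot : ∑ z : Fin n → F, ∏ i, (if z i = 0 then u i else v i)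
      = ∏ i, (u i + ((Fintype.card F : ℚ) - 1) * v i) := by
    apply mul_left_cancel₀ hq0
    rw [h0]; ring
  have expand : ∀ z : Fin n → F,
      ((Fintype.card F : ℚ) * (if (∑ i, c i * z i) = 0 then 1 else 0) - 1)
        * ∏ i, (if z i = 0 then u i else v i)
      = (Fintype.card F : ℚ) * ((if (∑ i, c i * z i) = 0 then (1:ℚ) else 0)
          * ∏ i, (if z i = 0 then u i else v i))
        - ∏ i, (if z i = 0 then u i else v i) := by
    intro z; ring
  simp only [expand]
  rw [Finset.sum_sub_distrib, ← Finset.mul_sum, h1, htot]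
  ring

set_option linter.unusedSectionVars false in
private lemma mw_weight_prod (n : ℕ) (y₁ y₂ : Fin n → F) (X Y : ℚ) :
    X ^ (n - Nat.card {i : Fin n | y₁ i ≠ 0 ∨ y₂ i ≠ 0}) *
      Y ^ (Nat.card {i : Fin n | y₁ i ≠ 0 ∨ y₂ i ≠ 0})
    = ∏ i, (if y₁ i = 0 ∧ y₂ i = 0 then X else Y) := by
  have hcard : Nat.card {i : Fin n | y₁ i ≠ 0 ∨ y₂ i ≠ 0}
      = (Finset.univ.filter (fun i => ¬(y₁ i = 0 ∧ y₂ i = 0))).card := by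
    rw [Nat.card_coe_set_eq, Set.ncard_eq_toFinset_card', Set.toFinset_setOf]
    congr 1
    ext i
    simp only [Set.mem_setOf_eq, not_and_or]
  rw [Finset.prod_ite (f := fun _ => X) (g := fun _ => Y), Finset.prod_const, Finset.prod_const,
    hcard]
  congr 2
  have := Finset.card_filter_add_card_filter_not
    (s := (Finset.univ : Finset (Fin n))) (p := fun i => y₁ i = 0 ∧ y₂ i = 0)
  simp only [Finset.card_univ, Fintype.card_fin] at this
  omega

open scoped Classical in
private lemma mw_dual_indicator (n : ℕ) (C : Submodule F (Fin n → F))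
    (s : Finset (Fin n → F)) (hs : ∀ x, x ∈ s ↔ x ∈ C) (y : Fin n → F) :
    ∑ c ∈ s, ((Fintype.card F : ℚ) * (if (∑ i, c i * y i) = 0 then 1 else 0) - 1)
    = (if (∀ x ∈ C, ∑ i, x i * y i = 0) then (1:ℚ) else 0) * (Nat.card C) *
        ((Fintype.card F : ℚ) - 1) := by
  have hscard : s.card = Nat.card C := by
    rw [← Nat.card_eq_finsetCard]
    exact Nat.card_congr (Equiv.subtypeEquivRight (fun x => hs x))
  by_cases hdual : ∀ x ∈ C, ∑ i, x i * y i = 0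
  · rw [if_pos hdual, one_mul]
    have h1 : ∀ c ∈ s,
        ((Fintype.card F : ℚ) * (if (∑ i, c i * y i) = 0 then 1 else 0) - 1)
        = (Fintype.card F : ℚ) - 1 := by
      intro c hc
      rw [if_pos (hdual c ((hs c).1 hc))]
      ring
    rw [Finset.sum_congr rfl h1, Finset.sum_const, hscard, nsmul_eq_mul]
  · rw [if_neg hdual, zero_mul, zero_mul]
    push_neg at hdual
    obtain ⟨x₀, hx₀C, hx₀⟩ := hdual
    set φ : C →ₗ[F] F :=
      { toFun := fun x => ∑ i, (x : Fin n → F) i * y i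
        map_add' := by
          intro a b
          simp [add_mul, Finset.sum_add_distrib]
        map_smul' := by
          intro m a
          simp [Finset.mul_sum, mul_assoc] } with hφ
    have hval : φ ⟨x₀, hx₀C⟩ ≠ 0 := hx₀
    have hsurj : Function.Surjective φ := by
      intro b
      refine ⟨(b * (φ ⟨x₀, hx₀C⟩)⁻¹) • ⟨x₀, hx₀C⟩, ?_⟩
      rw [map_smul, smul_eq_mul]
      field_simp
    set ψ : C →+ F := φ.toAddMonoidHom with hψ
    have hψsurj : Function.Surjective ψ := hsurj
    have hcards : Nat.card C = Fintype.card F * Nat.card ψ.ker := by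
      rw [AddSubgroup.card_eq_card_quotient_mul_card_addSubgroup ψ.ker]
      congr 1
      rw [Nat.card_congr (QuotientAddGroup.quotientKerEquivOfSurjective ψ hψsurj).toEquiv]
      exact Nat.card_eq_fintype_card
    have hN : (s.filter (fun c => ∑ i, c i * y i = 0)).card = Nat.card ψ.ker := by
      rw [← Nat.card_eq_finsetCard]
      apply Nat.card_congr
      refine ⟨fun x => ⟨⟨x.1, (hs x.1).1 (Finset.mem_filter.1 x.2).1⟩, ?_⟩,
        fun k => ⟨k.1.1, Finset.mem_filter.2 ⟨(hs k.1.1).2 k.1.2, ?_⟩⟩, ?_, ?_⟩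
      · rw [AddMonoidHom.mem_ker]
        exact (Finset.mem_filter.1 x.2).2
      · have := k.2
        rw [AddMonoidHom.mem_ker] at this
        exact this
      · intro x; rfl
      · intro k; rfl
    have hsum : ∑ c ∈ s, (if (∑ i, c i * y i) = 0 then (1:ℚ) else 0)
        = ((s.filter (fun c => ∑ i, c i * y i = 0)).card : ℚ) := by
      rw [Finset.sum_boole]
    rw [Finset.sum_sub_distrib, ← Finset.mul_sum, hsum, Finset.sum_const, hN, hscard, hcards]
    push_cast
    ring

end MacWilliamsAux

/-- **MacWilliams theorem for the second weight enumerator.**  For linear codes `C₁, C₂ ⊆ F_q^n`,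
`W^{[2]}_{C₁^⊥,C₂^⊥}(X,Y) = (1/(|C₁|·|C₂|)) · W^{[2]}_{C₁,C₂}(X+(q²-1)Y, X-Y)`, where
`W^{[2]}_{C₁,C₂}(X,Y) = Σ_{c₁∈C₁,c₂∈C₂} X^{n-wt(c₁,c₂)} Y^{wt(c₁,c₂)}` and `wt(c₁,c₂)` counts
the coordinates at which `c₁` and `c₂` are not both zero. -/
theorem macwilliams_identity_second (F : Type*) [Field F] [Fintype F] (q : ℕ)
    (hq : q = Fintype.card F) (n : ℕ) (C₁ C₂ : Submodule F (Fin n → F)) (X Y : ℚ) :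
    (∑ᶠ y₁ ∈ {y : Fin n → F | ∀ x ∈ C₁, ∑ i, x i * y i = 0},
      ∑ᶠ y₂ ∈ {y : Fin n → F | ∀ x ∈ C₂, ∑ i, x i * y i = 0},
        X ^ (n - Nat.card {i | y₁ i ≠ 0 ∨ y₂ i ≠ 0}) *
          Y ^ (Nat.card {i | y₁ i ≠ 0 ∨ y₂ i ≠ 0})) =
      (1 / ((Nat.card C₁ : ℚ) * (Nat.card C₂ : ℚ))) *
        ∑ᶠ c₁ ∈ (C₁ : Set (Fin n → F)), ∑ᶠ c₂ ∈ (C₂ : Set (Fin n → F)),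
          (X + ((q : ℚ) ^ 2 - 1) * Y) ^ (n - Nat.card {i | c₁ i ≠ 0 ∨ c₂ i ≠ 0}) *
            (X - Y) ^ (Nat.card {i | c₁ i ≠ 0 ∨ c₂ i ≠ 0}) := by
  classical
  subst hq
  -- abbreviations
  set q' : ℚ := (Fintype.card F : ℚ) with hq'
  have hq0 : q' ≠ 0 := by simp [hq', Fintype.card_ne_zero]
  have hq1 : q' - 1 ≠ 0 := by
    have : (1 : ℚ) < q' := by
      rw [hq']
      exact_mod_cast Fintype.one_lt_card
    linarith
  have hM₁ : (Nat.card C₁ : ℚ) ≠ 0 := by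
    have : 0 < Nat.card C₁ := Nat.card_pos
    positivity
  have hM₂ : (Nat.card C₂ : ℚ) ≠ 0 := by
    have : 0 < Nat.card C₂ := Nat.card_pos
    positivity
  -- finsets for the codes
  have hfin1 : ((C₁ : Set (Fin n → F))).Finite := Set.toFinite _
  have hfin2 : ((C₂ : Set (Fin n → F))).Finite := Set.toFinite _
  set s₁ : Finset (Fin n → F) := hfin1.toFinset with hs₁def
  set s₂ : Finset (Fin n → F) := hfin2.toFinset with hs₂def
  have hs₁ : ∀ x, x ∈ s₁ ↔ x ∈ C₁ := fun x => by
    rw [hs₁def, Set.Finite.mem_toFinset, SetLike.mem_coe]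
  have hs₂ : ∀ x, x ∈ s₂ ↔ x ∈ C₂ := fun x => by
    rw [hs₂def, Set.Finite.mem_toFinset, SetLike.mem_coe]
  -- finsets for the dual conditions
  have hfd1 : ({y : Fin n → F | ∀ x ∈ C₁, ∑ i, x i * y i = 0}).Finite := Set.toFinite _
  have hfd2 : ({y : Fin n → F | ∀ x ∈ C₂, ∑ i, x i * y i = 0}).Finite := Set.toFinite _
  -- convert all finsums to finset sums
  rw [finsum_mem_eq_finite_toFinset_sum _ hfd1]
  have hinner : ∀ y₁ : Fin n → F,
      (∑ᶠ y₂ ∈ {y : Fin n → F | ∀ x ∈ C₂, ∑ i, x i * y i = 0},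
        X ^ (n - Nat.card {i | y₁ i ≠ 0 ∨ y₂ i ≠ 0}) *
          Y ^ (Nat.card {i | y₁ i ≠ 0 ∨ y₂ i ≠ 0}))
      = ∑ y₂ ∈ hfd2.toFinset,
          X ^ (n - Nat.card {i | y₁ i ≠ 0 ∨ y₂ i ≠ 0}) *
            Y ^ (Nat.card {i | y₁ i ≠ 0 ∨ y₂ i ≠ 0}) := by
    intro y₁
    rw [finsum_mem_eq_finite_toFinset_sum _ hfd2]
  simp only [hinner]
  rw [finsum_mem_eq_finite_toFinset_sum _ hfin1]
  have hinner2 : ∀ c₁ : Fin n → F,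
      (∑ᶠ c₂ ∈ (C₂ : Set (Fin n → F)),
        (X + (q' ^ 2 - 1) * Y) ^ (n - Nat.card {i | c₁ i ≠ 0 ∨ c₂ i ≠ 0}) *
          (X - Y) ^ (Nat.card {i | c₁ i ≠ 0 ∨ c₂ i ≠ 0}))
      = ∑ c₂ ∈ s₂,
          (X + (q' ^ 2 - 1) * Y) ^ (n - Nat.card {i | c₁ i ≠ 0 ∨ c₂ i ≠ 0}) *
            (X - Y) ^ (Nat.card {i | c₁ i ≠ 0 ∨ c₂ i ≠ 0}) := by
    intro c₁
    rw [finsum_mem_eq_finite_toFinset_sum _ hfin2]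
  simp only [hinner2]
  -- rewrite the weights as products
  simp only [mw_weight_prod]
  -- convert dual-set finset sums into sums over univ with indicators
  have ht₁ : hfd1.toFinset
      = Finset.univ.filter (fun y => ∀ x ∈ C₁, ∑ i, x i * y i = 0) := by
    ext y
    simp [Set.Finite.mem_toFinset]
  have ht₂ : hfd2.toFinset
      = Finset.univ.filter (fun y => ∀ x ∈ C₂, ∑ i, x i * y i = 0) := by
    ext y
    simp [Set.Finite.mem_toFinset]
  rw [ht₁]
  simp only [ht₂, Finset.sum_filter]
  -- now the main computation
  -- step 2 : handle the inner sum over y₂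
  have step2 : ∀ y₁ : Fin n → F,
      (Nat.card C₂ : ℚ) * (q' - 1) *
        (∑ y₂ : Fin n → F, if (∀ x ∈ C₂, ∑ i, x i * y₂ i = 0) then
            ∏ i, (if y₁ i = 0 ∧ y₂ i = 0 then X else Y) else 0)
      = ∑ c₂ ∈ s₂, (q' - 1) *
          ∏ i, (if y₁ i = 0 then (if c₂ i = 0 then X + (q' - 1) * Y else X - Y)
            else (if c₂ i = 0 then q' * Y else 0)) := by
    intro y₁
    rw [Finset.mul_sum]
    have e1 : ∀ y₂ : Fin n → F,
        (Nat.card C₂ : ℚ) * (q' - 1) *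
          (if (∀ x ∈ C₂, ∑ i, x i * y₂ i = 0) then
            ∏ i, (if y₁ i = 0 ∧ y₂ i = 0 then X else Y) else 0)
        = (∑ c₂ ∈ s₂, (q' * (if (∑ i, c₂ i * y₂ i) = 0 then 1 else 0) - 1)) *
            ∏ i, (if y₁ i = 0 ∧ y₂ i = 0 then X else Y) := by
      intro y₂
      rw [mw_dual_indicator n C₂ s₂ hs₂ y₂]
      split_ifs <;> ring
    simp only [e1, Finset.sum_mul]
    rw [Finset.sum_comm]
    refine Finset.sum_congr rfl (fun c₂ _ => ?_)
    -- inner application of lemM2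
    have hW : ∀ y₂ : Fin n → F,
        (q' * (if (∑ i, c₂ i * y₂ i) = 0 then (1:ℚ) else 0) - 1) *
          ∏ i, (if y₁ i = 0 ∧ y₂ i = 0 then X else Y)
        = (q' * (if (∑ i, c₂ i * y₂ i) = 0 then (1:ℚ) else 0) - 1) *
          ∏ i, (if y₂ i = 0 then (if y₁ i = 0 then X else Y) else Y) := by
      intro y₂
      congr 1
      refine Finset.prod_congr rfl (fun i _ => ?_)
      by_cases h1 : y₁ i = 0 <;> by_cases h2 : y₂ i = 0 <;> simp [h1, h2]
    simp only [hW]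
    rw [mw_lemM2 n c₂ (fun i => if y₁ i = 0 then X else Y) (fun _ => Y)]
    congr 1
    refine Finset.prod_congr rfl (fun i _ => ?_)
    by_cases h1 : c₂ i = 0 <;> by_cases h2 : y₁ i = 0 <;> simp only [h1, h2,
      eq_self_iff_true, if_true, if_false] <;> ring
  -- step 1 : handle the outer sum over y₁
  have step1 :
      (Nat.card C₁ : ℚ) * (q' - 1) *
        (∑ y₁ : Fin n → F, if (∀ x ∈ C₁, ∑ i, x i * y₁ i = 0) then
          (∑ c₂ ∈ s₂, (q' - 1) *
            ∏ i, (if y₁ i = 0 then (if c₂ i = 0 then X + (q' - 1) * Y else X - Y)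
              else (if c₂ i = 0 then q' * Y else 0))) else 0)
      = ∑ c₁ ∈ s₁, ∑ c₂ ∈ s₂, (q' - 1) * ((q' - 1) *
          ∏ i, (if c₁ i = 0 ∧ c₂ i = 0 then X + (q' ^ 2 - 1) * Y else X - Y)) := by
    rw [Finset.mul_sum]
    have e1 : ∀ y₁ : Fin n → F,
        (Nat.card C₁ : ℚ) * (q' - 1) *
          (if (∀ x ∈ C₁, ∑ i, x i * y₁ i = 0) then
            (∑ c₂ ∈ s₂, (q' - 1) *
              ∏ i, (if y₁ i = 0 then (if c₂ i = 0 then X + (q' - 1) * Y else X - Y)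
                else (if c₂ i = 0 then q' * Y else 0))) else 0)
        = (∑ c₁ ∈ s₁, (q' * (if (∑ i, c₁ i * y₁ i) = 0 then 1 else 0) - 1)) *
            (∑ c₂ ∈ s₂, (q' - 1) *
              ∏ i, (if y₁ i = 0 then (if c₂ i = 0 then X + (q' - 1) * Y else X - Y)
                else (if c₂ i = 0 then q' * Y else 0))) := by
      intro y₁
      rw [mw_dual_indicator n C₁ s₁ hs₁ y₁]
      split_ifs <;> ring
    simp only [e1, Finset.sum_mul]
    rw [Finset.sum_comm]
    refine Finset.sum_congr rfl (fun c₁ _ => ?_)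
    have e2 : ∀ y₁ : Fin n → F,
        (q' * (if (∑ i, c₁ i * y₁ i) = 0 then (1:ℚ) else 0) - 1) *
          (∑ c₂ ∈ s₂, (q' - 1) *
            ∏ i, (if y₁ i = 0 then (if c₂ i = 0 then X + (q' - 1) * Y else X - Y)
              else (if c₂ i = 0 then q' * Y else 0)))
        = ∑ c₂ ∈ s₂, (q' - 1) *
            ((q' * (if (∑ i, c₁ i * y₁ i) = 0 then (1:ℚ) else 0) - 1) *
              ∏ i, (if y₁ i = 0 then (if c₂ i = 0 then X + (q' - 1) * Y else X - Y)
                else (if c₂ i = 0 then q' * Y else 0))) := by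
      intro y₁
      rw [Finset.mul_sum]
      exact Finset.sum_congr rfl (fun c₂ _ => by ring)
    simp only [e2]
    rw [Finset.sum_comm]
    refine Finset.sum_congr rfl (fun c₂ _ => ?_)
    rw [← Finset.mul_sum]
    congr 1
    rw [mw_lemM2 n c₁
      (fun i => if c₂ i = 0 then X + (q' - 1) * Y else X - Y)
      (fun i => if c₂ i = 0 then q' * Y else 0)]
    congr 1
    refine Finset.prod_congr rfl (fun i _ => ?_)
    by_cases h1 : c₁ i = 0 <;> by_cases h2 : c₂ i = 0 <;> simp only [h1, h2,
      eq_self_iff_true, if_true, if_false, true_and, false_and] <;> ring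
  -- combine
  have hKne : ((Nat.card C₁ : ℚ) * (q' - 1) * ((Nat.card C₂ : ℚ) * (q' - 1))) ≠ 0 :=
    mul_ne_zero (mul_ne_zero hM₁ hq1) (mul_ne_zero hM₂ hq1)
  rw [← mul_right_inj' hKne]
  have hy₁ : ∀ y₁ : Fin n → F,
      ((Nat.card C₂ : ℚ) * (q' - 1)) *
        (if (∀ x ∈ C₁, ∑ i, x i * y₁ i = 0) then
          (∑ y₂ : Fin n → F, if (∀ x ∈ C₂, ∑ i, x i * y₂ i = 0) then
            ∏ i, (if y₁ i = 0 ∧ y₂ i = 0 then X else Y) else 0) else 0)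
      = if (∀ x ∈ C₁, ∑ i, x i * y₁ i = 0) then
          (∑ c₂ ∈ s₂, (q' - 1) *
            ∏ i, (if y₁ i = 0 then (if c₂ i = 0 then X + (q' - 1) * Y else X - Y)
              else (if c₂ i = 0 then q' * Y else 0))) else 0 := by
    intro y₁
    split_ifs
    · exact step2 y₁
    · ring
  calc ((Nat.card C₁ : ℚ) * (q' - 1) * ((Nat.card C₂ : ℚ) * (q' - 1))) *
        ∑ y₁ : Fin n → F, (if (∀ x ∈ C₁, ∑ i, x i * y₁ i = 0) then
          (∑ y₂ : Fin n → F, if (∀ x ∈ C₂, ∑ i, x i * y₂ i = 0) then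
            ∏ i, (if y₁ i = 0 ∧ y₂ i = 0 then X else Y) else 0) else 0)
      = (Nat.card C₁ : ℚ) * (q' - 1) *
          ∑ y₁ : Fin n → F, ((Nat.card C₂ : ℚ) * (q' - 1)) *
            (if (∀ x ∈ C₁, ∑ i, x i * y₁ i = 0) then
              (∑ y₂ : Fin n → F, if (∀ x ∈ C₂, ∑ i, x i * y₂ i = 0) then
                ∏ i, (if y₁ i = 0 ∧ y₂ i = 0 then X else Y) else 0) else 0) := by
        rw [Finset.mul_sum]
        rw [Finset.mul_sum]
        rw [← Finset.mul_sum]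
        rw [Finset.mul_sum]
        exact Finset.sum_congr rfl (fun y₁ _ => by ring)
    _ = (Nat.card C₁ : ℚ) * (q' - 1) *
          ∑ y₁ : Fin n → F, (if (∀ x ∈ C₁, ∑ i, x i * y₁ i = 0) then
            (∑ c₂ ∈ s₂, (q' - 1) *
              ∏ i, (if y₁ i = 0 then (if c₂ i = 0 then X + (q' - 1) * Y else X - Y)
                else (if c₂ i = 0 then q' * Y else 0))) else 0) := by
        simp only [hy₁]
    _ = ∑ c₁ ∈ s₁, ∑ c₂ ∈ s₂, (q' - 1) * ((q' - 1) *
          ∏ i, (if c₁ i = 0 ∧ c₂ i = 0 then X + (q' ^ 2 - 1) * Y else X - Y)) := step1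
    _ = ((Nat.card C₁ : ℚ) * (q' - 1) * ((Nat.card C₂ : ℚ) * (q' - 1))) *
          (1 / ((Nat.card C₁ : ℚ) * (Nat.card C₂ : ℚ)) *
            ∑ c₁ ∈ s₁, ∑ c₂ ∈ s₂,
              ∏ i, (if c₁ i = 0 ∧ c₂ i = 0 then X + (q' ^ 2 - 1) * Y else X - Y)) := by
        rw [Finset.mul_sum, Finset.mul_sum]
        refine Finset.sum_congr rfl (fun c₁ _ => ?_)
        rw [Finset.mul_sum, Finset.mul_sum]
        refine Finset.sum_congr rfl (fun c₂ _ => ?_)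
        field_simp
end

section
/- Let Ω be a set of n distinct points in the projective plane P² over a field, with n ≤ 2d+2. Then Ω fails to impose independent conditions on curves of degree d if and only if either d+2 of the points of Ω are collinear, or n = 2d+2 and Ω is contained in a conic. -/
open MvPolynomial

namespace EGH

variable {K : Type*} [Field K]

/-- Equivalence between degree-`e` exponents and multisets of size `e`. -/
noncomputable def expEquivSym (e : ℕ) : {m : Fin 3 →₀ ℕ | m.degree = e} ≃ Sym (Fin 3) e where
  toFun m := ⟨Finsupp.toMultiset m.1, by
    have h := Finsupp.card_toMultiset m.1
    have : (m.1.sum fun _ => id) = m.1.degree := by rw [Finsupp.degree_apply]; rfl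
    rw [h, this]; exact m.2⟩
  invFun s := ⟨Multiset.toFinsupp s.1, by
    have h : Finsupp.toMultiset (Multiset.toFinsupp (s.1)) = s.1 := Multiset.toFinsupp_toMultiset _
    have h2 := Finsupp.card_toMultiset (Multiset.toFinsupp (s.1))
    have h3 : ((Multiset.toFinsupp (s.1)).sum fun _ => id) = (Multiset.toFinsupp (s.1)).degree := by
      rw [Finsupp.degree_apply]; rfl
    simp only [Set.mem_setOf_eq, ← h3, ← h2, h]
    exact s.2⟩
  left_inv m := by
    ext1
    classical
    exact Finsupp.toMultiset_toFinsupp _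
  right_inv s := by
    ext1
    exact Multiset.toFinsupp_toMultiset _

lemma finrank_homog (e : ℕ) :
    Module.finrank K ↥(homogeneousSubmodule (Fin 3) K e) = (e + 2).choose 2 := by
  rw [homogeneousSubmodule_eq_finsupp_supported]
  haveI : Fintype ↥{m : Fin 3 →₀ ℕ | m.degree = e} := Fintype.ofEquiv _ (expEquivSym e).symm
  rw [show (AddMonoidAlgebra.supported K K {d : Fin 3 →₀ ℕ | d.degree = e}) = restrictSupport K {m : Fin 3 →₀ ℕ | m.degree = e} from rfl]
  rw [Module.finrank_eq_card_basis (basisRestrictSupport K {m : Fin 3 →₀ ℕ | m.degree = e})]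
  rw [Fintype.card_congr (expEquivSym e)]
  rw [Sym.card_sym_eq_multichoose, Fintype.card_fin, Nat.multichoose_eq]
  have : 3 + e - 1 = e + 2 := by omega
  rw [this, ← Nat.choose_symm (by omega : 2 ≤ e + 2), Nat.add_sub_cancel]

instance finDimHomog (e : ℕ) : FiniteDimensional K ↥(homogeneousSubmodule (Fin 3) K e) := by
  rw [homogeneousSubmodule_eq_finsupp_supported]
  rw [show (AddMonoidAlgebra.supported K K {d : Fin 3 →₀ ℕ | d.degree = e}) = restrictSupport K {m : Fin 3 →₀ ℕ | m.degree = e} from rfl]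
  haveI : Finite ↥{m : Fin 3 →₀ ℕ | m.degree = e} := Finite.of_equiv _ (expEquivSym e).symm
  exact Module.Finite.of_basis (basisRestrictSupport K {m : Fin 3 →₀ ℕ | m.degree = e})


section Ev

local notation "Pt" => Projectivization K (Fin 3 → K)

lemma aeval_self (v : Fin 3 → K) (f : MvPolynomial (Fin 3) K) :
    aeval (R := K) v f = eval v f := rfl

/-- The evaluation map of degree-`e` forms at the representatives of a finite set of points. -/
noncomputable def EvMap (S : Finset Pt) (e : ℕ) :
    ↥(homogeneousSubmodule (Fin 3) K e) →ₗ[K] (↥S → K) :=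
  LinearMap.pi fun p =>
    ((aeval (R := K) (p : Pt).rep).toLinearMap).comp (homogeneousSubmodule (Fin 3) K e).subtype

@[simp] lemma EvMap_apply (S : Finset Pt) (e : ℕ) (f : ↥(homogeneousSubmodule (Fin 3) K e))
    (p : ↥S) : EvMap S e f p = eval (p : Pt).rep (f : MvPolynomial (Fin 3) K) := rfl

/-- `S` imposes independent conditions on degree-`e` forms. -/
def Indep (S : Finset Pt) (e : ℕ) : Prop := Function.Surjective (EvMap (K := K) S e)

theorem not_indep_iff_fails (S : Finset Pt) (e : ℕ) :
    ¬ Indep S e ↔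
      (Module.finrank K (homogeneousSubmodule (Fin 3) K e) -
        Module.finrank K ↥(homogeneousSubmodule (Fin 3) K e ⊓
          ⨅ p ∈ S, LinearMap.ker (aeval (R := K) p.rep).toLinearMap) ≠ S.card) := by
  have hker : LinearMap.ker (EvMap (K := K) S e) =
      Submodule.comap (homogeneousSubmodule (Fin 3) K e).subtype
        (homogeneousSubmodule (Fin 3) K e ⊓
          ⨅ p ∈ S, LinearMap.ker (aeval (R := K) p.rep).toLinearMap) := by
    ext f
    simp only [LinearMap.mem_ker, Submodule.mem_comap, Submodule.mem_inf, Submodule.mem_iInf,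
      LinearMap.mem_ker, AlgHom.toLinearMap_apply]
    constructor
    · intro h
      refine ⟨f.2, fun p hp => ?_⟩
      have := congrFun h ⟨p, hp⟩
      simpa [EvMap_apply] using this
    · intro h
      funext p
      have := h.2 (p : Pt) p.2
      simpa [EvMap_apply] using this
  have hrank := LinearMap.finrank_range_add_finrank_ker (EvMap (K := K) S e)
  have hGamma : Module.finrank K ↥(homogeneousSubmodule (Fin 3) K e ⊓
      ⨅ p ∈ S, LinearMap.ker (aeval (R := K) p.rep).toLinearMap)
      = Module.finrank K ↥(LinearMap.ker (EvMap (K := K) S e)) := by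
    rw [hker]
    exact (Submodule.comapSubtypeEquivOfLe inf_le_left).finrank_eq.symm
  have hcard : Module.finrank K (↥S → K) = S.card := by
    rw [Module.finrank_fintype_fun_eq_card, Fintype.card_coe]
  rw [hGamma]
  have hpos : Indep S e ↔
      Module.finrank K ↥(LinearMap.range (EvMap (K := K) S e)) = S.card := by
    constructor
    · intro hs
      have : LinearMap.range (EvMap (K := K) S e) = ⊤ := LinearMap.range_eq_top.2 hs
      rw [this, finrank_top, hcard]
    · intro heq
      have : LinearMap.range (EvMap (K := K) S e) = ⊤ :=
        Submodule.eq_top_of_finrank_eq (by rw [heq, hcard])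
      exact LinearMap.range_eq_top.1 this
  rw [not_iff_comm, not_not, hpos]
  omega

theorem Indep.subset {S T : Finset Pt} (hTS : T ⊆ S) {e : ℕ} (h : Indep S e) : Indep T e := by
  classical
  intro c
  obtain ⟨f, hf⟩ := h (fun p => if hp : (p : Pt) ∈ T then c ⟨(p : Pt), hp⟩ else 0)
  refine ⟨f, funext fun q => ?_⟩
  have := congrFun hf ⟨(q : Pt), hTS q.2⟩
  simp only [EvMap_apply] at this ⊢
  rw [this, dif_pos q.2]

theorem indep_of_separators {S : Finset Pt} {e : ℕ}
    (h : ∀ p ∈ S, ∃ f : MvPolynomial (Fin 3) K, f ∈ homogeneousSubmodule (Fin 3) K e ∧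
      eval (Projectivization.rep p) f ≠ 0 ∧ ∀ q ∈ S, q ≠ p → eval q.rep f = 0) :
    Indep S e := by
  classical
  choose F hF1 hF2 hF3 using h
  intro c
  refine ⟨∑ p ∈ S.attach,
    (c p * (eval (p : Pt).rep (F (p : Pt) p.2))⁻¹) • ⟨F (p : Pt) p.2, hF1 (p : Pt) p.2⟩, ?_⟩
  funext q
  rw [map_sum]
  rw [Finset.sum_apply]
  rw [Finset.sum_eq_single_of_mem q (S.mem_attach q)]
  · simp only [EvMap_apply, Submodule.coe_smul, smul_eval, smul_eq_mul]
    rw [mul_assoc, inv_mul_cancel₀ (hF2 (q : Pt) q.2), mul_one]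
  · intro p _ hpq
    simp only [EvMap_apply, Submodule.coe_smul, smul_eval, smul_eq_mul]
    rw [hF3 (p : Pt) p.2 (q : Pt) q.2 (fun hq => hpq (Subtype.ext hq).symm), mul_zero]

theorem not_indep_of_forced {S : Finset Pt} {e : ℕ} {p₀ : Pt} (hp₀ : p₀ ∈ S)
    (h : ∀ f : MvPolynomial (Fin 3) K, f ∈ homogeneousSubmodule (Fin 3) K e →
      (∀ q ∈ S, q ≠ p₀ → eval q.rep f = 0) → eval p₀.rep f = 0) :
    ¬ Indep S e := by
  classical
  intro hs
  obtain ⟨f, hf⟩ := hs (fun q => if (q : Pt) = p₀ then 1 else 0)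
  have h1 : eval p₀.rep (f : MvPolynomial (Fin 3) K) = 1 := by
    have := congrFun hf ⟨p₀, hp₀⟩
    simpa [EvMap_apply] using this
  have h0 : ∀ q ∈ S, q ≠ p₀ → eval q.rep (f : MvPolynomial (Fin 3) K) = 0 := by
    intro q hq hne
    have := congrFun hf ⟨q, hq⟩
    simpa [EvMap_apply, hne] using this
  have := h (f : MvPolynomial (Fin 3) K) f.2 h0
  rw [h1] at this
  exact one_ne_zero this


/-- Linear polynomial associated to a dual functional. -/
noncomputable def linOf (φ : (Fin 3 → K) →ₗ[K] K) : MvPolynomial (Fin 3) K :=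
  ∑ i, C (φ (fun j => if i = j then 1 else 0)) * X i

lemma linOf_isHomogeneous (φ : (Fin 3 → K) →ₗ[K] K) : (linOf φ).IsHomogeneous 1 :=
  IsHomogeneous.sum _ _ _ fun i _ => isHomogeneous_C_mul_X _ _

lemma eval_linOf (φ : (Fin 3 → K) →ₗ[K] K) (v : Fin 3 → K) : eval v (linOf φ) = φ v := by
  rw [LinearMap.pi_apply_eq_sum_univ φ v, linOf, map_sum]
  refine Finset.sum_congr rfl fun i _ => ?_
  simp [mul_comm]

lemma linOf_ne_zero {φ : (Fin 3 → K) →ₗ[K] K} (hφ : φ ≠ 0) : linOf φ ≠ 0 := by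
  intro h
  refine hφ (LinearMap.ext fun v => ?_)
  rw [← eval_linOf φ v, h, map_zero, LinearMap.zero_apply]

lemma exists_functional_vanishing {W : Submodule K (Fin 3 → K)} {x : Fin 3 → K}
    (hx : x ∉ W) : ∃ φ : (Fin 3 → K) →ₗ[K] K, φ x ≠ 0 ∧ ∀ w ∈ W, φ w = 0 := by
  obtain ⟨f, hf1, hf2⟩ := Submodule.exists_dual_map_eq_bot_of_notMem hx inferInstance
  refine ⟨f, hf1, fun w hw => ?_⟩
  have : f w ∈ Submodule.map f W := Submodule.mem_map_of_mem hw
  rwa [hf2, Submodule.mem_bot] at this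

lemma eq_of_smul_rep {p q : Pt} {a : K} (ha : a • q.rep = p.rep) : p = q := by
  have := (Projectivization.mk_eq_mk_iff' K p.rep q.rep p.rep_nonzero q.rep_nonzero).2 ⟨a, ha⟩
  rwa [Projectivization.mk_rep, Projectivization.mk_rep] at this

lemma exists_lin_nonzero (p : Pt) : ∃ ℓ : MvPolynomial (Fin 3) K,
    ℓ.IsHomogeneous 1 ∧ eval p.rep ℓ ≠ 0 := by
  have hx : p.rep ∉ (⊥ : Submodule K (Fin 3 → K)) := by
    simpa using p.rep_nonzero
  obtain ⟨φ, hφ1, _⟩ := exists_functional_vanishing hx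
  exact ⟨linOf φ, linOf_isHomogeneous φ, by rwa [eval_linOf]⟩

lemma exists_lin_separating {p q : Pt} (hpq : p ≠ q) : ∃ ℓ : MvPolynomial (Fin 3) K,
    ℓ.IsHomogeneous 1 ∧ eval q.rep ℓ = 0 ∧ eval p.rep ℓ ≠ 0 := by
  have hx : p.rep ∉ Submodule.span K {q.rep} := by
    intro hmem
    obtain ⟨a, ha⟩ := Submodule.mem_span_singleton.1 hmem
    exact hpq (eq_of_smul_rep ha)
  obtain ⟨φ, hφ1, hφ2⟩ := exists_functional_vanishing hx
  exact ⟨linOf φ, linOf_isHomogeneous φ,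
    by rw [eval_linOf]; exact hφ2 _ (Submodule.mem_span_singleton_self _),
    by rwa [eval_linOf]⟩

lemma exists_line_through {p q : Pt} (hpq : p ≠ q) : ∃ ℓ : MvPolynomial (Fin 3) K,
    ℓ ≠ 0 ∧ ℓ.IsHomogeneous 1 ∧ eval p.rep ℓ = 0 ∧ eval q.rep ℓ = 0 := by
  classical
  have hW : Submodule.span K {p.rep, q.rep} ≠ ⊤ := by
    intro htop
    have h3 : Module.finrank K (Fin 3 → K) = 3 := by
      rw [Module.finrank_fintype_fun_eq_card, Fintype.card_fin]
    have hc : ({p.rep, q.rep} : Set (Fin 3 → K)).toFinset.card ≤ 2 := by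
      rw [Set.toFinset_insert, Set.toFinset_singleton]
      exact (Finset.card_insert_le _ _).trans (by simp)
    have hle := (finrank_span_le_card (R := K) ({p.rep, q.rep} : Set (Fin 3 → K))).trans hc
    rw [htop, finrank_top, h3] at hle
    omega
  obtain ⟨x, hx⟩ : ∃ x, x ∉ Submodule.span K {p.rep, q.rep} := by
    by_contra hc
    push_neg at hc
    exact hW (Submodule.eq_top_iff'.2 hc)
  obtain ⟨φ, hφ1, hφ2⟩ := exists_functional_vanishing hx
  refine ⟨linOf φ, linOf_ne_zero (fun hz => hφ1 (by rw [hz, LinearMap.zero_apply])),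
    linOf_isHomogeneous φ, ?_, ?_⟩
  · rw [eval_linOf]
    exact hφ2 _ (Submodule.subset_span (by simp))
  · rw [eval_linOf]
    exact hφ2 _ (Submodule.subset_span (by simp))

/-- Any set of at most `e+1` points imposes independent conditions on degree-`e` forms. -/
theorem indep_of_card_le {S : Finset Pt} {e : ℕ} (h : S.card ≤ e + 1) : Indep S e := by
  classical
  apply indep_of_separators
  intro p hp
  have hch : ∀ q : ↥(S.erase p), ∃ ℓ : MvPolynomial (Fin 3) K,
      ℓ.IsHomogeneous 1 ∧ eval (q : Pt).rep ℓ = 0 ∧ eval p.rep ℓ ≠ 0 := fun q =>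
    exists_lin_separating (fun hpq => (Finset.mem_erase.1 q.2).1 hpq.symm)
  choose L hL1 hL2 hL3 using hch
  obtain ⟨ℓp, hℓp1, hℓp2⟩ := exists_lin_nonzero p
  refine ⟨(∏ q ∈ (S.erase p).attach, L q) * ℓp ^ (e - (S.card - 1)), ?_, ?_, ?_⟩
  · rw [mem_homogeneousSubmodule]
    have hdeg1 : ((S.erase p).attach.card) = S.card - 1 := by
      rw [Finset.card_attach, Finset.card_erase_of_mem hp]
    have hprod : (∏ q ∈ (S.erase p).attach, L q).IsHomogeneous (S.card - 1) := by
      have := IsHomogeneous.prod (S.erase p).attach L (fun _ => 1) (fun q _ => hL1 q)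
      simpa [Finset.sum_const, hdeg1] using this
    have hpow : (ℓp ^ (e - (S.card - 1))).IsHomogeneous (e - (S.card - 1)) := by
      have := hℓp1.pow (e - (S.card - 1))
      simpa using this
    have hmul := hprod.mul hpow
    have harith : (S.card - 1) + (e - (S.card - 1)) = e := by omega
    rwa [harith] at hmul
  · rw [map_mul, map_pow, map_prod]
    exact mul_ne_zero (Finset.prod_ne_zero_iff.2 fun q _ => hL3 q) (pow_ne_zero _ hℓp2)
  · intro q hq hne
    rw [map_mul, map_prod]
    have hqmem : q ∈ S.erase p := Finset.mem_erase.2 ⟨hne, hq⟩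
    have hz : eval q.rep (L (⟨q, hqmem⟩ : ↥(S.erase p))) = 0 := hL2 ⟨q, hqmem⟩
    rw [Finset.prod_eq_zero (Finset.mem_attach _ (⟨q, hqmem⟩ : ↥(S.erase p))) hz, zero_mul]


/-- Residuation: points on the curve `h = 0` independent in degree `e`, points off the curve
independent in degree `e - r`, implies `S` independent in degree `e`. -/
theorem indep_residuation {S A B : Finset Pt} {e r : ℕ} (hre : r ≤ e)
    {h : MvPolynomial (Fin 3) K} (hh : h.IsHomogeneous r)
    (hcover : ∀ p ∈ S, (p ∈ A ∧ eval p.rep h = 0) ∨ (p ∈ B ∧ eval p.rep h ≠ 0))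
    (hA : Indep A e) (hB : Indep B (e - r)) : Indep S e := by
  classical
  intro c
  obtain ⟨f1, hf1⟩ := hA (fun q => if hq : (q : Pt) ∈ S then c ⟨_, hq⟩ else 0)
  obtain ⟨g, hg⟩ := hB (fun q => if hq : (q : Pt) ∈ S then
     (c ⟨_, hq⟩ - eval (q : Pt).rep (f1 : MvPolynomial (Fin 3) K)) *
       (eval (q : Pt).rep h)⁻¹ else 0)
  have hmem : (f1 : MvPolynomial (Fin 3) K) + h * (g : MvPolynomial (Fin 3) K) ∈
      homogeneousSubmodule (Fin 3) K e := by
    rw [mem_homogeneousSubmodule]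
    have h2 : (h * (g : MvPolynomial (Fin 3) K)).IsHomogeneous e := by
      have := hh.mul ((mem_homogeneousSubmodule _ _).1 g.2)
      rwa [Nat.add_sub_cancel' hre] at this
    exact ((mem_homogeneousSubmodule _ _).1 f1.2).add h2
  refine ⟨⟨_, hmem⟩, ?_⟩
  funext p
  rw [EvMap_apply]
  rcases hcover (p : Pt) p.2 with ⟨hpA, hp0⟩ | ⟨hpB, hpn⟩
  · have hv := congrFun hf1 ⟨(p : Pt), hpA⟩
    rw [EvMap_apply] at hv
    rw [map_add, map_mul, hp0, zero_mul, add_zero, hv, dif_pos p.2]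
  · have hv := congrFun hg ⟨(p : Pt), hpB⟩
    rw [EvMap_apply] at hv
    rw [map_add, map_mul, hv, dif_pos p.2, mul_comm (eval (p : Pt).rep h), mul_assoc,
      inv_mul_cancel₀ hpn, mul_one]
    ring

/-- No three points of `S` are collinear. -/
def NoThree (S : Finset Pt) : Prop := ∀ T ⊆ S,
  (∃ ℓ : MvPolynomial (Fin 3) K, ℓ ≠ 0 ∧ ℓ.IsHomogeneous 1 ∧ ∀ p ∈ T, eval p.rep ℓ = 0) →
  T.card ≤ 2

theorem indep_of_no_three : ∀ (e : ℕ) (S : Finset Pt), NoThree S → S.card ≤ 2 * e + 1 →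
    Indep S e := by
  intro e
  induction e with
  | zero => exact fun S _ hcard => indep_of_card_le (by omega)
  | succ e ih =>
    intro S h3 hcard
    by_cases hsmall : S.card ≤ e + 2
    · exact indep_of_card_le (by omega)
    · have hex : ∃ a ∈ S, ∃ b ∈ S, a ≠ b := Finset.one_lt_card.1 (by omega)
      obtain ⟨p, hp, q, hq, hpq⟩ := hex
      obtain ⟨ℓ, hℓ0, hℓ1, hℓp, hℓq⟩ := exists_line_through hpq
      classical
      set A := S.filter (fun x => eval x.rep ℓ = 0) with hAdef
      set B := S.filter (fun x => ¬ eval x.rep ℓ = 0) with hBdef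
      have hAsub : A ⊆ S := Finset.filter_subset _ _
      have hAcard : A.card ≤ 2 :=
        h3 A hAsub ⟨ℓ, hℓ0, hℓ1, fun x hx => (Finset.mem_filter.1 hx).2⟩
      have hABcard : A.card + B.card = S.card :=
        Finset.card_filter_add_card_filter_not _
      have hpA : p ∈ A := Finset.mem_filter.2 ⟨hp, hℓp⟩
      have hqA : q ∈ A := Finset.mem_filter.2 ⟨hq, hℓq⟩
      have hA2 : 1 < A.card := Finset.one_lt_card.2 ⟨p, hpA, q, hqA, hpq⟩
      have hBind : Indep B e :=
        ih B (fun T hT => h3 T (hT.trans (Finset.filter_subset _ _))) (by omega)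
      have hAind : Indep A (e + 1) := indep_of_card_le (S := A) (e := e + 1) (by omega)
      refine indep_residuation (show 1 ≤ e + 1 by omega) hℓ1 ?_ hAind hBind
      intro x hx
      by_cases hev : eval x.rep ℓ = 0
      · exact Or.inl ⟨Finset.mem_filter.2 ⟨hx, hev⟩, hev⟩
      · exact Or.inr ⟨Finset.mem_filter.2 ⟨hx, hev⟩, hev⟩

lemma degree_eq_sum_univ (m : Fin 3 →₀ ℕ) : m.degree = ∑ i, m i := by
  rw [Finsupp.degree]
  exact Finset.sum_subset (Finset.subset_univ _)
    (fun i _ hi => Finsupp.notMem_support_iff.1 hi)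

lemma mem_support_degree {f : MvPolynomial (Fin 3) K} {n : ℕ} (hf : f.IsHomogeneous n)
    {m : Fin 3 →₀ ℕ} (hm : m ∈ f.support) : m.degree = n := by
  by_contra hne
  exact (mem_support_iff.1 hm) (hf.coeff_eq_zero hne)

lemma eval_smul_of_homog {f : MvPolynomial (Fin 3) K} {n : ℕ} (hf : f.IsHomogeneous n)
    (c : K) (w : Fin 3 → K) : eval (c • w) f = c ^ n * eval w f := by
  rw [eval_eq', eval_eq', Finset.mul_sum]
  refine Finset.sum_congr rfl fun m hm => ?_
  have hdeg : ∑ i, m i = n := by rw [← degree_eq_sum_univ]; exact mem_support_degree hf hm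
  have hpr : ∏ i, (c • w) i ^ m i = c ^ n * ∏ i, w i ^ m i := by
    have h1 : ∀ i : Fin 3, (c • w) i ^ m i = c ^ m i * w i ^ m i := by
      intro i; rw [Pi.smul_apply, smul_eq_mul, mul_pow]
    rw [Finset.prod_congr rfl (fun i _ => h1 i), Finset.prod_mul_distrib,
      Finset.prod_pow_eq_pow_sum, hdeg]
  rw [hpr]
  ring

lemma polyEval (g : Fin 3 → Polynomial K) (x : K) (f : MvPolynomial (Fin 3) K) :
    Polynomial.eval x (aeval g f) = eval (fun i => Polynomial.eval x (g i)) f := by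
  induction f using MvPolynomial.induction_on with
  | C a => simp
  | add p q hp hq => simp [hp, hq]
  | mul_X p i hp => simp [hp]

lemma natDegree_linear_le (a c : K) :
    (Polynomial.C a * Polynomial.X + Polynomial.C c).natDegree ≤ 1 := by
  refine (Polynomial.natDegree_add_le _ _).trans (max_le ?_ ?_)
  · exact (Polynomial.natDegree_C_mul_le _ _).trans (by simp)
  · simp

lemma natDegree_aeval_le {f : MvPolynomial (Fin 3) K} {n : ℕ} (hf : f.IsHomogeneous n)
    (g : Fin 3 → Polynomial K) (hg : ∀ i, (g i).natDegree ≤ 1) :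
    (aeval g f).natDegree ≤ n := by
  conv_lhs => rw [f.as_sum, map_sum]
  refine Polynomial.natDegree_sum_le_of_forall_le _ _ fun m hm => ?_
  rw [aeval_monomial]
  refine (Polynomial.natDegree_mul_le).trans ?_
  have h1 : ((algebraMap K (Polynomial K)) (coeff m f)).natDegree = 0 := by
    simp [Polynomial.algebraMap_apply]
  rw [h1, zero_add, Finsupp.prod]
  refine (Polynomial.natDegree_prod_le _ _).trans ?_
  have h2 : ∀ i ∈ m.support, (g i ^ m i).natDegree ≤ m i := fun i _ =>
    (Polynomial.natDegree_pow_le).trans (by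
      calc m i * (g i).natDegree ≤ m i * 1 := Nat.mul_le_mul_left _ (hg i)
      _ = m i := mul_one _)
  refine (Finset.sum_le_sum h2).trans ?_
  rw [← Finsupp.degree_apply, mem_support_degree hf hm]

lemma coeff_pow_linear (a c : K) (k : ℕ) :
    ((Polynomial.C a * Polynomial.X + Polynomial.C c) ^ k).coeff k = a ^ k := by
  induction k with
  | zero => simp
  | succ k ih =>
    rw [pow_succ, Polynomial.coeff_mul_add_eq_of_natDegree_le
      ((Polynomial.natDegree_pow_le).trans (by
        calc k * (Polynomial.C a * Polynomial.X + Polynomial.C c).natDegree ≤ k * 1 :=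
          Nat.mul_le_mul_left _ (natDegree_linear_le a c)
        _ = k := mul_one _))
      (natDegree_linear_le a c), ih]
    have hc1 : (Polynomial.C a * Polynomial.X + Polynomial.C c).coeff 1 = a := by
      simp [Polynomial.coeff_add, Polynomial.coeff_C_mul, Polynomial.coeff_C]
    rw [hc1, pow_succ]

lemma coeff_prod_nat {ι : Type*} (s : Finset ι) (P : ι → Polynomial K) (n : ι → ℕ)
    (h : ∀ i ∈ s, (P i).natDegree ≤ n i) :
    (∏ i ∈ s, P i).coeff (∑ i ∈ s, n i) = ∏ i ∈ s, (P i).coeff (n i) := by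
  classical
  induction s using Finset.induction_on with
  | empty => simp
  | @insert x s' hx ih =>
    rw [Finset.prod_insert hx, Finset.sum_insert hx,
      Polynomial.coeff_mul_add_eq_of_natDegree_le (h x (Finset.mem_insert_self _ _))
        ((Polynomial.natDegree_prod_le _ _).trans
          (Finset.sum_le_sum fun i hi => h i (Finset.mem_insert_of_mem hi))),
      ih (fun i hi => h i (Finset.mem_insert_of_mem hi)), Finset.prod_insert hx]

lemma coeff_top_aeval {f : MvPolynomial (Fin 3) K} {n : ℕ} (hf : f.IsHomogeneous n)
    (u v : Fin 3 → K) :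
    (aeval (fun i => Polynomial.C (u i) * Polynomial.X + Polynomial.C (v i)) f).coeff n
      = eval u f := by
  conv_lhs => rw [f.as_sum, map_sum]
  rw [Polynomial.finset_sum_coeff, eval_eq]
  refine Finset.sum_congr rfl fun m hm => ?_
  rw [aeval_monomial,
    show (algebraMap K (Polynomial K)) (coeff m f) = Polynomial.C (coeff m f) from rfl,
    Polynomial.coeff_C_mul, Finsupp.prod]
  congr 1
  have hdeg : n = ∑ i ∈ m.support, m i := by
    rw [← Finsupp.degree_apply]; exact (mem_support_degree hf hm).symm
  rw [hdeg, coeff_prod_nat m.support _ (fun i => m i) (fun i _ =>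
    (Polynomial.natDegree_pow_le).trans (by
      calc m i * (Polynomial.C (u i) * Polynomial.X + Polynomial.C (v i)).natDegree
          ≤ m i * 1 := Nat.mul_le_mul_left _ (natDegree_linear_le _ _)
      _ = m i := mul_one _))]
  exact Finset.prod_congr rfl fun i _ => coeff_pow_linear (u i) (v i) (m i)

lemma degree_one_single {m : Fin 3 →₀ ℕ} (h : m.degree = 1) :
    ∃ i, m = Finsupp.single i 1 := by
  rw [degree_eq_sum_univ, Fin.sum_univ_three] at h
  rcases (by omega : (m 0 = 1 ∧ m 1 = 0 ∧ m 2 = 0) ∨ (m 0 = 0 ∧ m 1 = 1 ∧ m 2 = 0) ∨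
      (m 0 = 0 ∧ m 1 = 0 ∧ m 2 = 1)) with ⟨a, b, c⟩ | ⟨a, b, c⟩ | ⟨a, b, c⟩
  · exact ⟨0, Finsupp.ext fun j => by fin_cases j <;> simp [a, b, c, Finsupp.single_apply]⟩
  · exact ⟨1, Finsupp.ext fun j => by fin_cases j <;> simp [a, b, c, Finsupp.single_apply]⟩
  · exact ⟨2, Finsupp.ext fun j => by fin_cases j <;> simp [a, b, c, Finsupp.single_apply]⟩

lemma homog_one_linear {ℓ : MvPolynomial (Fin 3) K} (h1 : ℓ.IsHomogeneous 1) :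
    ∃ φ : (Fin 3 → K) →ₗ[K] K, (∀ v, eval v ℓ = φ v) ∧ (ℓ ≠ 0 → φ ≠ 0) := by
  classical
  refine ⟨{ toFun := fun v => ∑ i, coeff (Finsupp.single i 1) ℓ * v i,
            map_add' := fun v w => by
              simp only [Pi.add_apply, mul_add]
              rw [Finset.sum_add_distrib],
            map_smul' := fun r v => by
              simp only [Pi.smul_apply, smul_eq_mul, RingHom.id_apply, Finset.mul_sum]
              exact Finset.sum_congr rfl fun i _ => by ring }, ?_, ?_⟩
  · intro v
    simp only [LinearMap.coe_mk, AddHom.coe_mk]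
    rw [eval_eq]
    have hsub : ℓ.support ⊆ Finset.univ.image (fun i : Fin 3 => Finsupp.single i 1) := by
      intro m hm
      obtain ⟨i, rfl⟩ := degree_one_single (mem_support_degree h1 hm)
      exact Finset.mem_image.2 ⟨i, Finset.mem_univ _, rfl⟩
    rw [Finset.sum_subset hsub (fun m _ hm => by
      rw [notMem_support_iff.1 hm, zero_mul])]
    rw [Finset.sum_image (fun i _ j _ h =>
      by_contra fun hne => (Finsupp.single_left_injective one_ne_zero).ne hne h)]
    refine Finset.sum_congr rfl fun i _ => ?_
    congr 1
    rw [Finsupp.support_single_ne_zero _ one_ne_zero, Finset.prod_singleton,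
      Finsupp.single_eq_same, pow_one]
  · intro hl0 hφ
    refine hl0 (MvPolynomial.ext _ _ fun m => ?_)
    rw [coeff_zero]
    by_cases hm : m ∈ ℓ.support
    · obtain ⟨i, rfl⟩ := degree_one_single (mem_support_degree h1 hm)
      have hcf := congrFun (congrArg DFunLike.coe hφ) (Pi.single i 1)
      simp only [LinearMap.coe_mk, AddHom.coe_mk, LinearMap.zero_apply] at hcf
      rw [Finset.sum_eq_single i (fun j _ hj => by
          rw [Pi.single_eq_of_ne hj, mul_zero]) (fun h => absurd (Finset.mem_univ i) h)] at hcf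
      rwa [Pi.single_eq_same, mul_one] at hcf
    · exact notMem_support_iff.1 hm

theorem line_dependent {T : Finset Pt} {d : ℕ} {ℓ : MvPolynomial (Fin 3) K}
    (hl0 : ℓ ≠ 0) (hl1 : ℓ.IsHomogeneous 1) (hvan : ∀ p ∈ T, eval p.rep ℓ = 0)
    (hcard : T.card = d + 2) : ¬ Indep T d := by
  classical
  obtain ⟨p₀, hp₀⟩ := Finset.card_pos.1 (show 0 < T.card by omega)
  obtain ⟨q₀, hq₀⟩ := Finset.card_pos.1
    (show 0 < (T.erase p₀).card by rw [Finset.card_erase_of_mem hp₀]; omega)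
  have hq₀T : q₀ ∈ T := Finset.mem_of_mem_erase hq₀
  have hq₀ne : q₀ ≠ p₀ := (Finset.mem_erase.1 hq₀).1
  set u := q₀.rep with hu
  set v := p₀.rep with hv
  obtain ⟨φ, hφe, hφn⟩ := homog_one_linear hl1
  have hφ0 := hφn hl0
  have h3 : Module.finrank K (Fin 3 → K) = 3 := by
    rw [Module.finrank_fintype_fun_eq_card, Fintype.card_fin]
  have hWdim : Module.finrank K ↥(LinearMap.ker φ) = 2 := by
    have hrn := LinearMap.finrank_range_add_finrank_ker φ
    rw [h3] at hrn
    obtain ⟨x, hx⟩ : ∃ x, φ x ≠ 0 := by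
      by_contra hc
      push_neg at hc
      exact hφ0 (LinearMap.ext fun y => by rw [hc y, LinearMap.zero_apply])
    have hr1 : Module.finrank K ↥(LinearMap.range φ) = 1 := by
      have hle : Module.finrank K ↥(LinearMap.range φ) ≤ 1 := by
        have hfl := Submodule.finrank_le (LinearMap.range φ)
        rwa [Module.finrank_self] at hfl
      have hge : 1 ≤ Module.finrank K ↥(LinearMap.range φ) := by
        have hsp : Submodule.span K {φ x} ≤ LinearMap.range φ := by
          rw [Submodule.span_singleton_le_iff_mem]
          exact ⟨x, rfl⟩
        have hm := Submodule.finrank_mono hsp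
        rwa [finrank_span_singleton hx] at hm
      omega
    omega
  have huv : LinearIndependent K ![u, v] := by
    rw [LinearIndependent.pair_iff]
    intro s t hst
    by_cases ht : t = 0
    · subst ht
      rw [zero_smul, add_zero] at hst
      rcases smul_eq_zero.1 hst with hs | hu0
      · exact ⟨hs, rfl⟩
      · exact absurd hu0 q₀.rep_nonzero
    · exfalso
      have h2 : t • v + s • u = 0 := by rw [add_comm]; exact hst
      have h4 : t • v = (-s) • u := by
        rw [neg_smul, eq_neg_iff_add_eq_zero]
        exact h2
      have h5 := congrArg (fun w => t⁻¹ • w) h4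
      simp only [smul_smul, inv_mul_cancel₀ ht, one_smul] at h5
      have hveq : (-(t⁻¹ * s)) • u = v := by
        rw [h5]
        congr 1
        ring
      exact hq₀ne (eq_of_smul_rep hveq).symm
  have hkeru : u ∈ LinearMap.ker φ := by
    rw [LinearMap.mem_ker, ← hφe]
    exact hvan q₀ hq₀T
  have hkerv : v ∈ LinearMap.ker φ := by
    rw [LinearMap.mem_ker, ← hφe]
    exact hvan p₀ hp₀
  have hspan : Submodule.span K {u, v} = LinearMap.ker φ := by
    refine Submodule.eq_of_le_of_finrank_le ?_ ?_
    · rw [Submodule.span_le]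
      intro x hx
      simp only [Set.mem_insert_iff, Set.mem_singleton_iff] at hx
      rcases hx with rfl | rfl
      · exact hkeru
      · exact hkerv
    · have hset : Set.range ![u, v] = ({u, v} : Set (Fin 3 → K)) := by
        ext x
        simp only [Set.mem_range, Set.mem_insert_iff, Set.mem_singleton_iff]
        constructor
        · rintro ⟨i, rfl⟩
          fin_cases i
          · exact Or.inl rfl
          · exact Or.inr rfl
        · rintro (rfl | rfl)
          exacts [⟨0, rfl⟩, ⟨1, rfl⟩]
      have hfr := finrank_span_eq_card huv
      rw [hset] at hfr
      rw [hWdim, hfr, Fintype.card_fin]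
  have hco : ∀ x ∈ T, ∃ c : K × K, c.1 • u + c.2 • v = Projectivization.rep x := by
    intro x hx
    have hxk : Projectivization.rep x ∈ Submodule.span K {u, v} := by
      rw [hspan, LinearMap.mem_ker, ← hφe]
      exact hvan x hx
    obtain ⟨c1, c2, hc⟩ := Submodule.mem_span_pair.1 hxk
    exact ⟨(c1, c2), hc⟩
  choose! ab hab using hco
  refine not_indep_of_forced hp₀ ?_
  intro f hfmem hfvan
  have hfh : f.IsHomogeneous d := (mem_homogeneousSubmodule _ _).1 hfmem
  set Pf := aeval (fun i => Polynomial.C (u i) * Polynomial.X + Polynomial.C (v i)) f with hPf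
  have hPdeg : Pf.natDegree ≤ d := natDegree_aeval_le hfh _ (fun i => natDegree_linear_le _ _)
  have hPev : ∀ x : K, Pf.eval x = eval (x • u + v) f := by
    intro x
    have harg : (fun i => Polynomial.eval x (Polynomial.C (u i) * Polynomial.X +
        Polynomial.C (v i))) = x • u + v := by
      funext i
      rw [Polynomial.eval_add, Polynomial.eval_mul, Polynomial.eval_C, Polynomial.eval_C,
        Polynomial.eval_X, Pi.add_apply, Pi.smul_apply, smul_eq_mul, mul_comm]
    rw [hPf, polyEval, harg]
  have hPtop : Pf.coeff d = eval u f := coeff_top_aeval hfh u v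
  have hval : ∀ x ∈ T.erase p₀, eval (Projectivization.rep x) f = 0 := fun x hx =>
    hfvan x (Finset.mem_of_mem_erase hx) ((Finset.mem_erase.1 hx).1)
  have hroot : ∀ x ∈ T.erase p₀, (ab x).2 ≠ 0 → Pf.eval ((ab x).1 * ((ab x).2)⁻¹) = 0 := by
    intro x hx hbx
    rw [hPev]
    have hx' : ((ab x).1 * ((ab x).2)⁻¹) • u + v = ((ab x).2)⁻¹ • (Projectivization.rep x) := by
      rw [← hab x (Finset.mem_of_mem_erase hx), smul_add, smul_smul, smul_smul,
        inv_mul_cancel₀ hbx, one_smul, mul_comm]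
    rw [hx', eval_smul_of_homog hfh, hval x hx, mul_zero]
  have hinj : ∀ x ∈ T.erase p₀, ∀ y ∈ T.erase p₀, (ab x).2 ≠ 0 → (ab y).2 ≠ 0 →
      (ab x).1 * ((ab x).2)⁻¹ = (ab y).1 * ((ab y).2)⁻¹ → x = y := by
    intro x hx y hy hbx hby heq
    have heq' : (ab x).1 * (ab y).2 = (ab y).1 * (ab x).2 := by
      calc (ab x).1 * (ab y).2
          = ((ab x).1 * ((ab x).2)⁻¹) * (ab x).2 * (ab y).2 := by field_simp
      _ = ((ab y).1 * ((ab y).2)⁻¹) * (ab x).2 * (ab y).2 := by rw [heq]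
      _ = (ab y).1 * (ab x).2 := by field_simp
    have hay : ((ab y).2 * ((ab x).2)⁻¹) • (Projectivization.rep x) = Projectivization.rep y := by
      rw [← hab x (Finset.mem_of_mem_erase hx), ← hab y (Finset.mem_of_mem_erase hy),
        smul_add, smul_smul, smul_smul,
        show (ab y).2 * ((ab x).2)⁻¹ * (ab x).1 = (ab y).1 from by
          field_simp
          linear_combination heq',
        show (ab y).2 * ((ab x).2)⁻¹ * (ab x).2 = (ab y).2 from by
          rw [mul_assoc, inv_mul_cancel₀ hbx, mul_one]]
    exact (eq_of_smul_rep hay).symm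
  set R := (T.erase p₀).filter (fun x => (ab x).2 ≠ 0) with hR
  set Z := (T.erase p₀).filter (fun x => ¬ (ab x).2 ≠ 0) with hZ
  have herase : (T.erase p₀).card = d + 1 := by
    rw [Finset.card_erase_of_mem hp₀, hcard]
    omega
  have hRZ : R.card + Z.card = d + 1 := by
    rw [hR, hZ, Finset.card_filter_add_card_filter_not, herase]
  have hZle : Z.card ≤ 1 := by
    rw [Finset.card_le_one]
    intro x hxZ y hyZ
    have hxe := Finset.mem_filter.1 hxZ
    have hye := Finset.mem_filter.1 hyZ
    have hbx : (ab x).2 = 0 := not_not.1 hxe.2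
    have hby : (ab y).2 = 0 := not_not.1 hye.2
    have hxrep : Projectivization.rep x = (ab x).1 • u := by
      rw [← hab x (Finset.mem_of_mem_erase hxe.1), hbx, zero_smul, add_zero]
    have hyrep : Projectivization.rep y = (ab y).1 • u := by
      rw [← hab y (Finset.mem_of_mem_erase hye.1), hby, zero_smul, add_zero]
    have hay2 : (ab y).1 ≠ 0 := fun h =>
      Projectivization.rep_nonzero y (by rw [hyrep, h, zero_smul])
    have hsm : ((ab x).1 * ((ab y).1)⁻¹) • Projectivization.rep y = Projectivization.rep x := by
      rw [hxrep, hyrep, smul_smul, mul_assoc, inv_mul_cancel₀ hay2, mul_one]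
    exact eq_of_smul_rep hsm
  set roots := R.image (fun x => (ab x).1 * ((ab x).2)⁻¹) with hroots
  have hrcard : roots.card = R.card := Finset.card_image_of_injOn (fun x hx y hy h =>
    hinj x (Finset.mem_filter.1 hx).1 y (Finset.mem_filter.1 hy).1
      (Finset.mem_filter.1 hx).2 (Finset.mem_filter.1 hy).2 h)
  have hrootval : ∀ r ∈ roots, Pf.eval r = 0 := by
    intro r hr
    obtain ⟨x, hxR, rfl⟩ := Finset.mem_image.1 hr
    exact hroot x (Finset.mem_filter.1 hxR).1 (Finset.mem_filter.1 hxR).2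
  have hPf0 : Pf = 0 := by
    rcases (by omega : Z.card = 0 ∨ Z.card = 1) with hz | hz
    · refine Polynomial.eq_zero_of_natDegree_lt_card_of_eval_eq_zero' Pf roots hrootval ?_
      rw [hrcard]
      omega
    · obtain ⟨x₀, hx₀⟩ := Finset.card_pos.1 (show 0 < Z.card by omega)
      have hbx₀ : (ab x₀).2 = 0 := not_not.1 (Finset.mem_filter.1 hx₀).2
      have hx₀rep : Projectivization.rep x₀ = (ab x₀).1 • u := by
        rw [← hab x₀ (Finset.mem_of_mem_erase (Finset.mem_filter.1 hx₀).1), hbx₀,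
          zero_smul, add_zero]
      have hax₀ : (ab x₀).1 ≠ 0 := fun h =>
        Projectivization.rep_nonzero x₀ (by rw [hx₀rep, h, zero_smul])
      have hu0 : eval u f = 0 := by
        have h5 : eval ((ab x₀).1 • u) f = 0 := by
          rw [← hx₀rep]
          exact hval x₀ (Finset.mem_filter.1 hx₀).1
        rw [eval_smul_of_homog hfh] at h5
        rcases mul_eq_zero.1 h5 with h6 | h6
        · exact absurd h6 (pow_ne_zero _ hax₀)
        · exact h6
      have hcoeff : Pf.coeff d = 0 := by rw [hPtop, hu0]
      by_contra hne
      have hdlt : Pf.natDegree < d := by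
        rcases lt_or_eq_of_le hPdeg with h | h
        · exact h
        · exact absurd (Polynomial.leadingCoeff_eq_zero.1
            (by rw [Polynomial.leadingCoeff, h, hcoeff])) hne
      exact hne (Polynomial.eq_zero_of_natDegree_lt_card_of_eval_eq_zero' Pf roots hrootval
        (by rw [hrcard]; omega))
  have hfinal := hPev 0
  rw [hPf0, Polynomial.eval_zero] at hfinal
  rw [zero_smul, zero_add] at hfinal
  exact hfinal.symm

lemma choose_two_step (n : ℕ) : (n + 1).choose 2 = n.choose 2 + n := by
  simp [Nat.choose]
  omega

lemma choose_id (d : ℕ) : (d + 2).choose 2 = d.choose 2 + (2 * d + 1) := by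
  have h1 := choose_two_step (d + 1)
  have h2 := choose_two_step d
  rw [show d + 1 + 1 = d + 2 from rfl] at h1
  omega

theorem conic_dependent {S : Finset Pt} {d : ℕ} {Q : MvPolynomial (Fin 3) K}
    (hQ0 : Q ≠ 0) (hQ2 : Q.IsHomogeneous 2) (hvan : ∀ p ∈ S, eval p.rep Q = 0)
    (hcard : S.card = 2 * d + 2) : ¬ Indep S d := by
  intro hs
  have hrange : Module.finrank K ↥(LinearMap.range (EvMap (K := K) S d)) = 2 * d + 2 := by
    rw [LinearMap.range_eq_top.2 hs, finrank_top, Module.finrank_fintype_fun_eq_card,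
      Fintype.card_coe, hcard]
  have hrn := LinearMap.finrank_range_add_finrank_ker (EvMap (K := K) S d)
  rw [finrank_homog d, hrange] at hrn
  rcases d with _ | _ | e
  · have hch : (0 + 2).choose 2 = 1 := by decide
    omega
  · have hch : (0 + 1 + 2).choose 2 = 3 := by decide
    omega
  · rw [show e + 1 + 1 = e + 2 from rfl] at hrn hcard
    set M : ↥(homogeneousSubmodule (Fin 3) K e) →ₗ[K]
        ↥(homogeneousSubmodule (Fin 3) K (e + 2)) :=
      { toFun := fun g => ⟨Q * (g : MvPolynomial (Fin 3) K), by
          rw [mem_homogeneousSubmodule]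
          have := hQ2.mul ((mem_homogeneousSubmodule _ _).1 g.2)
          rwa [show 2 + e = e + 2 by omega] at this⟩,
        map_add' := fun g h => by
          apply Subtype.ext
          simp [mul_add],
        map_smul' := fun r g => by
          apply Subtype.ext
          simp [mul_smul_comm] } with hM
    have hMinj : Function.Injective M := by
      intro g h hEq
      apply Subtype.ext
      have hval := congrArg (Subtype.val) hEq
      simp only [hM, LinearMap.coe_mk, AddHom.coe_mk] at hval
      exact mul_left_cancel₀ hQ0 hval
    have hk : Module.finrank K ↥(homogeneousSubmodule (Fin 3) K e) ≤
        Module.finrank K ↥(LinearMap.ker (EvMap (K := K) S (e + 2))) := by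
      rw [← LinearMap.finrank_range_of_inj hMinj]
      refine Submodule.finrank_mono ?_
      rintro x ⟨g, rfl⟩
      rw [LinearMap.mem_ker]
      funext p
      rw [EvMap_apply]
      simp only [hM, LinearMap.coe_mk, AddHom.coe_mk]
      rw [map_mul, hvan (p : Pt) p.2, zero_mul, Pi.zero_apply]
    rw [finrank_homog e] at hk
    have hcid := choose_id (e + 2)
    have hcid2 := choose_id e
    omega

theorem exists_conic {S : Finset Pt} (hle : S.card ≤ 6) (h6 : S.card = 6 → ¬ Indep S 2) :
    ∃ g : MvPolynomial (Fin 3) K, g ≠ 0 ∧ g.IsHomogeneous 2 ∧ ∀ p ∈ S, eval p.rep g = 0 := by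
  have hne : LinearMap.ker (EvMap (K := K) S 2) ≠ ⊥ := by
    intro hbot
    have hinj : Function.Injective (EvMap (K := K) S 2) := LinearMap.ker_eq_bot.1 hbot
    have h1 : Module.finrank K ↥(LinearMap.range (EvMap (K := K) S 2)) = 6 := by
      rw [LinearMap.finrank_range_of_inj hinj, finrank_homog 2]
      decide
    have h2 : Module.finrank K ↥(LinearMap.range (EvMap (K := K) S 2)) ≤ S.card := by
      have hb := Submodule.finrank_le (LinearMap.range (EvMap (K := K) S 2))
      rwa [Module.finrank_fintype_fun_eq_card, Fintype.card_coe] at hb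
    have hc6 : S.card = 6 := by omega
    refine h6 hc6 ?_
    have htop : LinearMap.range (EvMap (K := K) S 2) = ⊤ :=
      Submodule.eq_top_of_finrank_eq
        (by rw [h1, Module.finrank_fintype_fun_eq_card, Fintype.card_coe, hc6])
    exact LinearMap.range_eq_top.1 htop
  obtain ⟨g, hgk, hg0⟩ := (Submodule.ne_bot_iff _).1 hne
  refine ⟨(g : MvPolynomial (Fin 3) K), fun h => hg0 (ZeroMemClass.coe_eq_zero.1 h),
    (mem_homogeneousSubmodule _ _).1 g.2, fun p hp => ?_⟩
  have := congrFun (LinearMap.mem_ker.1 hgk) ⟨p, hp⟩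
  simpa [EvMap_apply] using this

/-- Main forward direction: a dependent set of at most `2d+2` points has `d+2` collinear
points, or `2d+2` points on a conic. -/
theorem main_forward (d : ℕ) : ∀ S : Finset Pt, S.card ≤ 2 * d + 2 → ¬ Indep S d →
    (∃ T ⊆ S, T.card = d + 2 ∧ ∃ ℓ : MvPolynomial (Fin 3) K, ℓ ≠ 0 ∧
        ℓ.IsHomogeneous 1 ∧ ∀ p ∈ T, eval p.rep ℓ = 0) ∨
      (S.card = 2 * d + 2 ∧ ∃ g : MvPolynomial (Fin 3) K, g ≠ 0 ∧
        g.IsHomogeneous 2 ∧ ∀ p ∈ S, eval p.rep g = 0) := by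
  induction d with
  | zero =>
    intro S hcard hni
    have h2 : S.card = 2 := by
      by_contra hne
      exact hni (indep_of_card_le (by omega))
    have hex : ∃ a ∈ S, ∃ b ∈ S, a ≠ b := Finset.one_lt_card.1 (by omega)
    obtain ⟨p, hp, q, hq, hpq⟩ := hex
    obtain ⟨ℓ, hl0, hl1, hlp, hlq⟩ := exists_line_through hpq
    left
    refine ⟨S, Finset.Subset.refl _, by omega, ℓ, hl0, hl1, ?_⟩
    intro x hx
    have hxpq : x = p ∨ x = q := by
      by_contra hc
      push_neg at hc
      have h3 : 2 < S.card := Finset.two_lt_card.2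
        ⟨p, hp, q, hq, x, hx, hpq, Ne.symm hc.1, Ne.symm hc.2⟩
      omega
    rcases hxpq with rfl | rfl
    · exact hlp
    · exact hlq
  | succ e ih =>
    intro S hcard hni
    by_cases hcoll : ∃ T ⊆ S, T.card = (e + 1) + 2 ∧ ∃ ℓ : MvPolynomial (Fin 3) K, ℓ ≠ 0 ∧
        ℓ.IsHomogeneous 1 ∧ ∀ p ∈ T, eval p.rep ℓ = 0
    · exact Or.inl hcoll
    have hnoline : ∀ (ℓ : MvPolynomial (Fin 3) K), ℓ ≠ 0 → ℓ.IsHomogeneous 1 →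
        ∀ T ⊆ S, (∀ p ∈ T, eval p.rep ℓ = 0) → T.card ≤ e + 2 := by
      intro ℓ h0 h1 T hTS hv
      by_contra hgt
      push_neg at hgt
      obtain ⟨T', hT'sub, hT'card⟩ := Finset.exists_subset_card_eq
        (show (e + 1) + 2 ≤ T.card by omega)
      exact hcoll ⟨T', hT'sub.trans hTS, hT'card, ℓ, h0, h1, fun x hx => hv x (hT'sub hx)⟩
    have hlb : (e + 1) + 2 ≤ S.card := by
      by_contra hlt
      exact hni (indep_of_card_le (by omega))
    have hex : ∃ a ∈ S, ∃ b ∈ S, a ≠ b := Finset.one_lt_card.1 (by omega)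
    obtain ⟨p, hp, q, hq, hpq⟩ := hex
    classical
    set P : ℕ → Prop := fun k => ∃ T ⊆ S, T.card = k ∧ ∃ ℓ : MvPolynomial (Fin 3) K,
      ℓ ≠ 0 ∧ ℓ.IsHomogeneous 1 ∧ ∀ x ∈ T, eval x.rep ℓ = 0 with hPdef
    have hP2 : P 2 := by
      obtain ⟨ℓ, h0, h1, hlp, hlq⟩ := exists_line_through hpq
      refine ⟨{p, q}, ?_, ?_, ℓ, h0, h1, ?_⟩
      · intro x hx
        rcases Finset.mem_insert.1 hx with rfl | hx
        · exact hp
        · rw [Finset.mem_singleton.1 hx]; exact hq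
      · rw [Finset.card_insert_of_notMem (by simp [hpq]), Finset.card_singleton]
      · intro x hx
        rcases Finset.mem_insert.1 hx with rfl | hx
        · exact hlp
        · rw [Finset.mem_singleton.1 hx]; exact hlq
    set k := Nat.findGreatest P S.card with hkdef
    have hk2 : 2 ≤ k := Nat.le_findGreatest (by omega) hP2
    have hPk : P k := Nat.findGreatest_spec (m := 2) (by omega) hP2
    have hkmax : ∀ j, P j → j ≤ k := by
      intro j hj
      obtain ⟨T, hTS, hTcard, -⟩ := id hj
      exact Nat.le_findGreatest (hTcard ▸ Finset.card_le_card hTS) hj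
    have hkle : k ≤ e + 2 := by
      obtain ⟨T, hTS, hTcard, ℓ, h0, h1, hv⟩ := hPk
      rw [← hTcard]
      exact hnoline ℓ h0 h1 T hTS hv
    obtain ⟨T₀, hT₀S, hT₀card, ℓ₀, hℓ₀0, hℓ₀1, hℓ₀v⟩ := hPk
    set A := S.filter (fun x => eval x.rep ℓ₀ = 0) with hA
    set B := S.filter (fun x => ¬ eval x.rep ℓ₀ = 0) with hB
    have hT₀A : T₀ ⊆ A := fun x hx => Finset.mem_filter.2 ⟨hT₀S hx, hℓ₀v x hx⟩
    have hAub : A.card ≤ k := hkmax A.card ⟨A, Finset.filter_subset _ _, rfl, ℓ₀, hℓ₀0, hℓ₀1,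
      fun x hx => (Finset.mem_filter.1 hx).2⟩
    have hAlb : k ≤ A.card := by
      rw [← hT₀card]
      exact Finset.card_le_card hT₀A
    have hABcard : A.card + B.card = S.card :=
      Finset.card_filter_add_card_filter_not _
    have hcover : ∀ x ∈ S, (x ∈ A ∧ eval x.rep ℓ₀ = 0) ∨ (x ∈ B ∧ eval x.rep ℓ₀ ≠ 0) := by
      intro x hx
      by_cases hev : eval x.rep ℓ₀ = 0
      · exact Or.inl ⟨Finset.mem_filter.2 ⟨hx, hev⟩, hev⟩
      · exact Or.inr ⟨Finset.mem_filter.2 ⟨hx, hev⟩, hev⟩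
    have hBni : ¬ Indep B e := by
      intro hBind
      exact hni (indep_residuation (show 1 ≤ e + 1 by omega) hℓ₀1 hcover
        (indep_of_card_le (S := A) (e := e + 1) (by omega)) hBind)
    have hBcard : B.card ≤ 2 * e + 2 := by omega
    rcases ih B hBcard hBni with ⟨T', hT'B, hT'card, M, hM0, hM1, hMv⟩ | ⟨hBc, Q, hQ0, hQ2, hQv⟩
    · -- Case I : e+2 points of B collinear
      have hPe2 : P (e + 2) := ⟨T', hT'B.trans (Finset.filter_subset _ _), hT'card, M, hM0,
        hM1, hMv⟩
      have hke2 : k = e + 2 := le_antisymm hkle (hkmax _ hPe2)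
      have hBlb : e + 2 ≤ B.card := by
        rw [← hT'card]
        exact Finset.card_le_card hT'B
      have hT'B' : T' = B := Finset.eq_of_subset_of_card_le hT'B (by omega)
      right
      refine ⟨by omega, ℓ₀ * M, mul_ne_zero hℓ₀0 hM0, hℓ₀1.mul hM1, ?_⟩
      intro x hx
      rw [map_mul]
      by_cases hev : eval x.rep ℓ₀ = 0
      · rw [hev, zero_mul]
      · have hxB : x ∈ B := Finset.mem_filter.2 ⟨hx, hev⟩
        rw [hMv x (by rw [hT'B']; exact hxB), mul_zero]
    · -- Case II : B of size 2e+2 lies on a conic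
      have hk2' : k = 2 := by omega
      have hScard : S.card = 2 * (e + 1) + 2 := by omega
      have hno3 : NoThree S := by
        intro T hTS hcT
        by_contra hgt
        push_neg at hgt
        obtain ⟨T3, hT3, hT3card⟩ := Finset.exists_subset_card_eq (show 3 ≤ T.card by omega)
        obtain ⟨ℓ, hl0, hl1, hlv⟩ := hcT
        have hP3 : P 3 := ⟨T3, hT3.trans hTS, hT3card, ℓ, hl0, hl1,
          fun x hx => hlv x (hT3 hx)⟩
        have := hkmax 3 hP3
        omega
      rcases Nat.lt_or_ge e 2 with he | he
      · rcases (by omega : e = 0 ∨ e = 1) with rfl | rfl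
        · -- degree 1, four points
          have hexB : ∃ a ∈ B, ∃ b ∈ B, a ≠ b := Finset.one_lt_card.1 (by omega)
          obtain ⟨b1, hb1, b2, hb2, hb12⟩ := hexB
          obtain ⟨M, hM0, hM1, hMb1, hMb2⟩ := exists_line_through hb12
          right
          refine ⟨hScard, ℓ₀ * M, mul_ne_zero hℓ₀0 hM0, hℓ₀1.mul hM1, ?_⟩
          intro x hx
          rw [map_mul]
          by_cases hev : eval x.rep ℓ₀ = 0
          · rw [hev, zero_mul]
          · have hxB : x ∈ B := Finset.mem_filter.2 ⟨hx, hev⟩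
            have hxb : x = b1 ∨ x = b2 := by
              by_contra hc
              push_neg at hc
              have h3 : 2 < B.card := Finset.two_lt_card.2
                ⟨b1, hb1, b2, hb2, x, hxB, hb12, Ne.symm hc.1, Ne.symm hc.2⟩
              omega
            rcases hxb with rfl | rfl
            · rw [hMb1, mul_zero]
            · rw [hMb2, mul_zero]
        · -- degree 2, six points
          right
          refine ⟨hScard, ?_⟩
          refine exists_conic (by omega) (fun _ => ?_)
          exact hni
      · -- degree ≥ 3 : conic residuation
        set A' := S.filter (fun x => eval x.rep Q = 0) with hA'
        set B' := S.filter (fun x => ¬ eval x.rep Q = 0) with hB'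
        have hA'B' : A'.card + B'.card = S.card :=
          Finset.card_filter_add_card_filter_not _
        have hBA' : B ⊆ A' := fun x hx =>
          Finset.mem_filter.2 ⟨(Finset.mem_filter.1 hx).1, hQv x hx⟩
        by_cases hB'0 : B' = ∅
        · right
          refine ⟨hScard, Q, hQ0, hQ2, fun x hx => ?_⟩
          by_contra hev
          have hmem : x ∈ B' := Finset.mem_filter.2 ⟨hx, hev⟩
          rw [hB'0] at hmem
          exact absurd hmem (Finset.notMem_empty x)
        · exfalso
          have hB'pos : 1 ≤ B'.card :=
            Finset.card_pos.2 (Finset.nonempty_iff_ne_empty.2 hB'0)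
          have hA'lb : 2 * e + 2 ≤ A'.card := by
            rw [← hBc]
            exact Finset.card_le_card hBA'
          have hA'ind : Indep A' (e + 1) := indep_of_no_three (e + 1) A'
            (fun T hT => hno3 T (hT.trans (Finset.filter_subset _ _))) (by omega)
          have hB'ind : Indep B' (e + 1 - 2) := indep_of_card_le (by omega)
          have hcover' : ∀ x ∈ S, (x ∈ A' ∧ eval x.rep Q = 0) ∨
              (x ∈ B' ∧ eval x.rep Q ≠ 0) := by
            intro x hx
            by_cases hev : eval x.rep Q = 0
            · exact Or.inl ⟨Finset.mem_filter.2 ⟨hx, hev⟩, hev⟩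
            · exact Or.inr ⟨Finset.mem_filter.2 ⟨hx, hev⟩, hev⟩
          exact hni (indep_residuation (show 2 ≤ e + 1 by omega) hQ2 hcover' hA'ind hB'ind)

end Ev

end EGH

/-- **(Eisenbud–Green–Harris.)**  Let `Ω` be a set of `n` distinct points in `P²` over a field,
with `n ≤ 2d+2`.  Then `Ω` fails to impose independent conditions on curves of degree `d`
(i.e. the subspace of degree-`d` forms vanishing on `Ω` has codimension `≠ |Ω|` in the space of
all degree-`d` forms) if and only if either `d+2` of the points of `Ω` are collinear, or
`n = 2d+2` and `Ω` is contained in a conic. -/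
theorem fails_independent_conditions_iff (K : Type*) [Field K] (d : ℕ)
    (Ω : Finset (Projectivization K (Fin 3 → K))) (hcard : Ω.card ≤ 2 * d + 2) :
    (Module.finrank K (homogeneousSubmodule (Fin 3) K d) -
        Module.finrank K ↥(homogeneousSubmodule (Fin 3) K d ⊓
          ⨅ p ∈ Ω, LinearMap.ker (aeval (R := K) p.rep).toLinearMap) ≠ Ω.card) ↔
      ((∃ T ⊆ Ω, T.card = d + 2 ∧ ∃ ℓ : MvPolynomial (Fin 3) K, ℓ ≠ 0 ∧
          ℓ.IsHomogeneous 1 ∧ ∀ p ∈ T, eval p.rep ℓ = 0) ∨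
        (Ω.card = 2 * d + 2 ∧ ∃ g : MvPolynomial (Fin 3) K, g ≠ 0 ∧
          g.IsHomogeneous 2 ∧ ∀ p ∈ Ω, eval p.rep g = 0)) := by
  rw [← EGH.not_indep_iff_fails Ω d]
  constructor
  · intro h
    exact EGH.main_forward d Ω hcard h
  · rintro (⟨T, hTsub, hTcard, ℓ, h0, h1, hv⟩ | ⟨hc, Q, hQ0, hQ2, hQv⟩)
    · intro hind
      exact EGH.line_dependent h0 h1 hv hTcard (EGH.Indep.subset hTsub hind)
    · exact EGH.conic_dependent hQ0 hQ2 hQv hc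
end

section
/- Let c be a nonzero codeword of the dual code C_{2,3}^⊥ of the projective Reed-Muller code of plane cubics over F_q. Then wt(c) ≥ 5, and if wt(c) ∈ {5,6,7} then the support of c consists of wt(c) collinear points of P²(F_q). -/
open MvPolynomial

namespace DualCubicAux

open scoped Classical

variable {F : Type*} [Field F]

/-- dot product on `Fin 3 → F`. -/
def dot (a v : Fin 3 → F) : F := a 0 * v 0 + a 1 * v 1 + a 2 * v 2

/-- cross product on `Fin 3 → F`. -/
def cross (a b : Fin 3 → F) : Fin 3 → F :=
  ![a 1 * b 2 - a 2 * b 1, a 2 * b 0 - a 0 * b 2, a 0 * b 1 - a 1 * b 0]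

lemma dot_cross_left (a b : Fin 3 → F) : dot (cross a b) a = 0 := by
  simp [dot, cross]; ring

lemma dot_cross_right (a b : Fin 3 → F) : dot (cross a b) b = 0 := by
  simp [dot, cross]; ring

lemma ne_zero_iff_exists {v : Fin 3 → F} : v ≠ 0 ↔ ∃ i, v i ≠ 0 := by
  rw [Function.ne_iff]; simp

lemma exists_smul_of_cross_eq_zero {v w : Fin 3 → F} (h : cross v w = 0) (hv : v ≠ 0) :
    ∃ t : F, w = t • v := by
  have h0 := congrFun h 0
  have h1 := congrFun h 1
  have h2 := congrFun h 2
  simp [cross] at h0 h1 h2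
  obtain ⟨i, hi⟩ := ne_zero_iff_exists.mp hv
  fin_cases i
  · have hi' : v 0 ≠ 0 := by simpa using hi
    refine ⟨w 0 / v 0, funext fun j => ?_⟩
    fin_cases j
    · show w 0 = w 0 / v 0 * v 0
      field_simp
    · show w 1 = w 0 / v 0 * v 1
      rw [div_mul_eq_mul_div, eq_div_iff hi']
      linear_combination h2
    · show w 2 = w 0 / v 0 * v 2
      rw [div_mul_eq_mul_div, eq_div_iff hi']
      linear_combination -h1
  · have hi' : v 1 ≠ 0 := by simpa using hi
    refine ⟨w 1 / v 1, funext fun j => ?_⟩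
    fin_cases j
    · show w 0 = w 1 / v 1 * v 0
      rw [div_mul_eq_mul_div, eq_div_iff hi']
      linear_combination -h2
    · show w 1 = w 1 / v 1 * v 1
      field_simp
    · show w 2 = w 1 / v 1 * v 2
      rw [div_mul_eq_mul_div, eq_div_iff hi']
      linear_combination h0
  · have hi' : v 2 ≠ 0 := by simpa using hi
    refine ⟨w 2 / v 2, funext fun j => ?_⟩
    fin_cases j
    · show w 0 = w 2 / v 2 * v 0
      rw [div_mul_eq_mul_div, eq_div_iff hi']
      linear_combination h1
    · show w 1 = w 2 / v 2 * v 1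
      rw [div_mul_eq_mul_div, eq_div_iff hi']
      linear_combination -h0
    · show w 2 = w 2 / v 2 * v 2
      field_simp

lemma cross_ne_zero {v w : Fin 3 → F} (hv : v ≠ 0) (hw : ∀ t : F, w ≠ t • v) :
    cross v w ≠ 0 := fun h => by
  obtain ⟨t, ht⟩ := exists_smul_of_cross_eq_zero h hv
  exact hw t ht

lemma kernel_cross {a b x : Fin 3 → F} (ha : dot a x = 0) (hb : dot b x = 0) :
    cross x (cross a b) = 0 := by
  simp [dot] at ha hb
  funext j
  fin_cases j <;> simp [cross] <;>
    [ linear_combination a 0 * hb - b 0 * ha;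
      linear_combination a 1 * hb - b 1 * ha;
      linear_combination a 2 * hb - b 2 * ha]

end DualCubicAux

namespace DualCubicAux

variable {F : Type*} [Field F]

local notation "Pt" => Projectivization F (Fin 3 → F)

lemma dot_smul (t : F) (a v : Fin 3 → F) : dot (t • a) v = t * dot a v := by
  simp [dot]; ring

lemma eq_of_rep_smul {p q : Pt} {t : F} (h : q.rep = t • p.rep) : p = q := by
  rw [← Projectivization.mk_rep p, ← Projectivization.mk_rep q]
  exact ((Projectivization.mk_eq_mk_iff' F q.rep p.rep q.rep_nonzero p.rep_nonzero).2
    ⟨t, h.symm⟩).symm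

lemma indep_reps {p q : Pt} (h : p ≠ q) : ∀ t : F, q.rep ≠ t • p.rep :=
  fun _ ht => h (eq_of_rep_smul ht)

lemma exists_line_through (v : Fin 3 → F) (hv : v ≠ 0) :
    ∃ a : Fin 3 → F, a ≠ 0 ∧ dot a v = 0 := by
  obtain ⟨i, hi⟩ := ne_zero_iff_exists.mp hv
  fin_cases i
  · exact ⟨![-(v 1), v 0, 0], ne_zero_iff_exists.mpr ⟨1, by simpa using hi⟩,
      by simp [dot]; ring⟩
  · exact ⟨![v 1, -(v 0), 0], ne_zero_iff_exists.mpr ⟨0, by simpa using hi⟩,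
      by simp [dot]; ring⟩
  · exact ⟨![v 2, 0, -(v 0)], ne_zero_iff_exists.mpr ⟨0, by simpa using hi⟩,
      by simp [dot]; ring⟩

lemma exists_dual_ne (v : Fin 3 → F) (hv : v ≠ 0) : ∃ a : Fin 3 → F, dot a v ≠ 0 := by
  obtain ⟨i, hi⟩ := ne_zero_iff_exists.mp hv
  fin_cases i
  · exact ⟨![1, 0, 0], by simpa [dot] using hi⟩
  · exact ⟨![0, 1, 0], by simpa [dot] using hi⟩
  · exact ⟨![0, 0, 1], by simpa [dot] using hi⟩

/-- Three (projective) points are collinear. -/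
def collin (p q r : Pt) : Prop :=
  ∃ a : Fin 3 → F, a ≠ 0 ∧ dot a p.rep = 0 ∧ dot a q.rep = 0 ∧ dot a r.rep = 0

lemma line_exists₂ (p q : Pt) : ∃ a : Fin 3 → F, a ≠ 0 ∧ dot a p.rep = 0 ∧ dot a q.rep = 0 := by
  by_cases h : p = q
  · subst h
    obtain ⟨a, ha, hd⟩ := exists_line_through p.rep p.rep_nonzero
    exact ⟨a, ha, hd, hd⟩
  · exact ⟨cross p.rep q.rep,
      cross_ne_zero p.rep_nonzero (indep_reps h),
      dot_cross_left _ _, dot_cross_right _ _⟩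

lemma collin_self_left (p q : Pt) : collin p p q := by
  obtain ⟨a, ha, h1, h2⟩ := line_exists₂ p q
  exact ⟨a, ha, h1, h1, h2⟩

lemma collin_refl (p q : Pt) : collin p q q := by
  obtain ⟨a, ha, h1, h2⟩ := line_exists₂ p q
  exact ⟨a, ha, h1, h2, h2⟩

lemma collin_swap {p q r : Pt} (h : collin p q r) : collin p r q := by
  obtain ⟨a, ha, h1, h2, h3⟩ := h
  exact ⟨a, ha, h1, h3, h2⟩

lemma line_avoid {x p0 : Pt} (h : x ≠ p0) :
    ∃ a : Fin 3 → F, dot a x.rep = 0 ∧ dot a p0.rep ≠ 0 := by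
  set v := x.rep with hv
  set w := p0.rep with hw
  have hcr : cross v w ≠ 0 := cross_ne_zero x.rep_nonzero (indep_reps h)
  obtain ⟨k, hk⟩ := ne_zero_iff_exists.mp hcr
  fin_cases k
  · refine ⟨![0, -(v 2), v 1], by simp [dot]; ring, ?_⟩
    have : dot ![0, -(v 2), v 1] w = cross v w 0 := by simp [dot, cross]; ring
    rw [this]; simpa using hk
  · refine ⟨![v 2, 0, -(v 0)], by simp [dot]; ring, ?_⟩
    have : dot ![v 2, 0, -(v 0)] w = cross v w 1 := by simp [dot, cross]; ring
    rw [this]; simpa using hk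
  · refine ⟨![-(v 1), v 0, 0], by simp [dot]; ring, ?_⟩
    have : dot ![-(v 1), v 0, 0] w = cross v w 2 := by simp [dot, cross]; ring
    rw [this]; simpa using hk

lemma line_pair_avoid {p0 x y : Pt} (h : ¬ collin p0 x y) :
    ∃ a : Fin 3 → F, dot a p0.rep ≠ 0 ∧ dot a x.rep = 0 ∧ dot a y.rep = 0 := by
  have hx : x ≠ p0 := by rintro rfl; exact h (collin_self_left x y)
  have hy : y ≠ p0 := by rintro rfl; exact h (collin_swap (collin_self_left y x))
  by_cases hxy : x = y
  · subst hxy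
    obtain ⟨a, h1, h2⟩ := line_avoid hx
    exact ⟨a, h2, h1, h1⟩
  · refine ⟨cross x.rep y.rep, fun h0 => h ?_, dot_cross_left _ _, dot_cross_right _ _⟩
    exact ⟨cross x.rep y.rep, cross_ne_zero x.rep_nonzero (indep_reps hxy), h0,
      dot_cross_left _ _, dot_cross_right _ _⟩

lemma rep_eq_aux {x y : Pt} {z : Fin 3 → F} (hz : z ≠ 0)
    (h1 : cross x.rep z = 0) (h2 : cross y.rep z = 0) : x = y := by
  obtain ⟨t, ht⟩ := exists_smul_of_cross_eq_zero h1 x.rep_nonzero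
  obtain ⟨u, hu⟩ := exists_smul_of_cross_eq_zero h2 y.rep_nonzero
  have hune : u ≠ 0 := by rintro rfl; rw [zero_smul] at hu; exact hz hu
  have : y.rep = (u⁻¹ * t) • x.rep := by
    rw [mul_smul, ← ht, hu, ← mul_smul, inv_mul_cancel₀ hune, one_smul]
  exact eq_of_rep_smul this

lemma collin_trans {p0 q r s : Pt} (h1 : collin p0 q r) (h2 : collin p0 r s)
    (hr : r ≠ p0) : collin p0 q s := by
  obtain ⟨a, ha0, hap, haq, har⟩ := h1
  obtain ⟨b, hb0, hbp, hbr, hbs⟩ := h2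
  by_cases hab : ∃ t : F, b = t • a
  · obtain ⟨t, rfl⟩ := hab
    have ht : t ≠ 0 := by rintro rfl; rw [zero_smul] at hb0; exact hb0 rfl
    have hs : dot a s.rep = 0 := by
      have := hbs; rw [dot_smul] at this
      exact (mul_eq_zero.mp this).resolve_left ht
    exact ⟨a, ha0, hap, haq, hs⟩
  · have hcr : cross a b ≠ 0 := cross_ne_zero ha0 (fun t ht => hab ⟨t, ht⟩)
    have k1 : cross p0.rep (cross a b) = 0 := kernel_cross hap hbp
    have k2 : cross r.rep (cross a b) = 0 := kernel_cross har hbr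
    exact absurd (rep_eq_aux hcr k1 k2).symm hr

lemma eq_of_common_perp {b b' : Fin 3 → F} (hb : b ≠ 0) (hnp : ∀ t : F, b' ≠ t • b)
    {x y : Pt} (hx : dot b x.rep = 0) (hx' : dot b' x.rep = 0)
    (hy : dot b y.rep = 0) (hy' : dot b' y.rep = 0) : x = y := by
  have hcr : cross b b' ≠ 0 := cross_ne_zero hb hnp
  exact rep_eq_aux hcr (kernel_cross hx hx') (kernel_cross hy hy')

/-- the unique line through two distinct points, killing everything collinear with them. -/
lemma thru_line {p0 q : Pt} (h : q ≠ p0) :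
    ∃ b : Fin 3 → F, b ≠ 0 ∧ dot b p0.rep = 0 ∧ dot b q.rep = 0 ∧
      ∀ r : Pt, collin p0 q r → dot b r.rep = 0 := by
  refine ⟨cross p0.rep q.rep,
    cross_ne_zero p0.rep_nonzero (indep_reps (Ne.symm h)), dot_cross_left _ _,
    dot_cross_right _ _, ?_⟩
  intro r hr
  obtain ⟨a, ha0, hap, haq, har⟩ := hr
  set b := cross p0.rep q.rep with hbdef
  have hb0 : b ≠ 0 := cross_ne_zero p0.rep_nonzero (indep_reps (Ne.symm h))
  by_cases hab : ∃ t : F, a = t • b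
  · obtain ⟨t, rfl⟩ := hab
    have ht : t ≠ 0 := by rintro rfl; rw [zero_smul] at ha0; exact ha0 rfl
    rw [dot_smul] at har
    exact (mul_eq_zero.mp har).resolve_left ht
  · exfalso
    have hcr : cross b a ≠ 0 := cross_ne_zero hb0 (fun t ht => hab ⟨t, ht⟩)
    have k1 : cross p0.rep (cross b a) = 0 := kernel_cross (dot_cross_left _ _) hap
    have k2 : cross q.rep (cross b a) = 0 := kernel_cross (dot_cross_right _ _) haq
    exact h (rep_eq_aux hcr k2 k1)

end DualCubicAux


namespace DualCubicAux

open Finset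
open scoped Classical

variable {α : Type*} (R : α → α → Prop)

lemma exists_three_cover (V : Finset α) (d : α) (h : V.card ≤ 3) :
    ∃ x y z : α, V ⊆ {x, y, z} := by
  interval_cases h3 : V.card
  · exact ⟨d, d, d, by simp [Finset.card_eq_zero.mp h3]⟩
  · obtain ⟨a, ha⟩ := Finset.card_eq_one.mp h3
    exact ⟨a, a, a, by simp [ha]⟩
  · obtain ⟨a, b, _, hab⟩ := Finset.card_eq_two.mp h3
    exact ⟨a, b, b, by intro x hx; rw [hab] at hx; simp at hx ⊢; tauto⟩
  · obtain ⟨a, b, c, _, _, _, habc⟩ := Finset.card_eq_three.mp h3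
    exact ⟨a, b, c, by rw [habc]⟩

lemma M4 (V : Finset α) (hcard : V.card = 4)
    (hrefl : ∀ x, R x x) (hsymm : ∀ x y, R x y → R y x)
    (htrans : ∀ x y z, x ∈ V → y ∈ V → z ∈ V → R x y → R y z → R x z)
    (hcl : ∀ x ∈ V, (V.filter (R x)).card ≤ 2) :
    ∃ x1 y1 x2 y2 : α, ¬ R x1 y1 ∧ ¬ R x2 y2 ∧ V ⊆ {x1, y1, x2, y2} := by
  by_cases hex : ∃ u ∈ V, ∃ w ∈ V, u ≠ w ∧ R u w
  · obtain ⟨u, hu, w, hw, huw, hR⟩ := hex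
    have hsub : ({u, w} : Finset α) ⊆ V.filter (R u) := by
      intro z hz
      rcases Finset.mem_insert.mp hz with rfl | hz
      · exact Finset.mem_filter.mpr ⟨hu, hrefl _⟩
      · rw [Finset.mem_singleton.mp hz]; exact Finset.mem_filter.mpr ⟨hw, hR⟩
    have hfeq : V.filter (R u) = {u, w} :=
      (Finset.eq_of_subset_of_card_le hsub
        (le_trans (hcl u hu) (by rw [Finset.card_pair huw]))).symm
    have huwV : ({u, w} : Finset α) ⊆ V := by
      intro z hz
      rcases Finset.mem_insert.mp hz with rfl | hz
      · exact hu
      · rw [Finset.mem_singleton.mp hz]; exact hw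
    have hV' : (V \ {u, w}).card = 2 := by
      rw [Finset.card_sdiff_of_subset huwV, Finset.card_pair huw, hcard]
    obtain ⟨s, t, hst, hV'eq⟩ := Finset.card_eq_two.mp hV'
    have hs : s ∈ V \ {u, w} := by rw [hV'eq]; simp
    have ht : t ∈ V \ {u, w} := by rw [hV'eq]; simp
    have hsV : s ∈ V := (Finset.mem_sdiff.mp hs).1
    have htV : t ∈ V := (Finset.mem_sdiff.mp ht).1
    have hsnot : s ∉ ({u, w} : Finset α) := (Finset.mem_sdiff.mp hs).2
    have htnot : t ∉ ({u, w} : Finset α) := (Finset.mem_sdiff.mp ht).2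
    refine ⟨u, s, w, t, ?_, ?_, ?_⟩
    · intro hRus
      have : s ∈ V.filter (R u) := Finset.mem_filter.mpr ⟨hsV, hRus⟩
      rw [hfeq] at this; exact hsnot this
    · intro hRwt
      have hRut : R u t := htrans u w t hu hw htV hR hRwt
      have : t ∈ V.filter (R u) := Finset.mem_filter.mpr ⟨htV, hRut⟩
      rw [hfeq] at this; exact htnot this
    · intro x hx
      by_cases hxm : x ∈ ({u, w} : Finset α)
      · simp at hxm ⊢; tauto
      · have : x ∈ V \ {u, w} := Finset.mem_sdiff.mpr ⟨hx, hxm⟩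
        rw [hV'eq] at this; simp at this ⊢; tauto
  · push_neg at hex
    have hV4 : 0 < V.card := by omega
    obtain ⟨a, ha⟩ := Finset.card_pos.mp hV4
    have hVa : 0 < (V.erase a).card := by rw [Finset.card_erase_of_mem ha]; omega
    obtain ⟨b, hb⟩ := Finset.card_pos.mp hVa
    have hbV : b ∈ V := Finset.mem_of_mem_erase hb
    have hab : a ≠ b := (Finset.ne_of_mem_erase hb).symm
    have habV : ({a, b} : Finset α) ⊆ V := by
      intro z hz
      rcases Finset.mem_insert.mp hz with rfl | hz
      · exact ha
      · rw [Finset.mem_singleton.mp hz]; exact hbV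
    have hV' : (V \ {a, b}).card = 2 := by
      rw [Finset.card_sdiff_of_subset habV, Finset.card_pair hab, hcard]
    obtain ⟨s, t, hst, hV'eq⟩ := Finset.card_eq_two.mp hV'
    have hs : s ∈ V \ {a, b} := by rw [hV'eq]; simp
    have ht : t ∈ V \ {a, b} := by rw [hV'eq]; simp
    refine ⟨a, b, s, t, hex a ha b hbV hab,
      hex s (Finset.mem_sdiff.mp hs).1 t (Finset.mem_sdiff.mp ht).1 hst, ?_⟩
    intro x hx
    by_cases hxm : x ∈ ({a, b} : Finset α)
    · simp at hxm ⊢; tauto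
    · have : x ∈ V \ {a, b} := Finset.mem_sdiff.mpr ⟨hx, hxm⟩
      rw [hV'eq] at this; simp at this ⊢; tauto

end DualCubicAux


namespace DualCubicAux

open Finset
open scoped Classical

variable {α : Type*} (R : α → α → Prop)

lemma pair_subset {a b : α} {V : Finset α} (ha : a ∈ V) (hb : b ∈ V) :
    ({a, b} : Finset α) ⊆ V := by
  intro z hz
  rcases Finset.mem_insert.mp hz with h | h
  · rwa [h]
  · rw [Finset.mem_singleton.mp h]; exact hb

lemma M6 (V : Finset α) (hcard : V.card = 6)
    (hrefl : ∀ x, R x x) (hsymm : ∀ x y, R x y → R y x)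
    (htrans : ∀ x y z, x ∈ V → y ∈ V → z ∈ V → R x y → R y z → R x z)
    (hcl : ∀ x ∈ V, (V.filter (R x)).card ≤ 3) :
    ∃ x1 y1 x2 y2 x3 y3 : α, ¬R x1 y1 ∧ ¬R x2 y2 ∧ ¬R x3 y3 ∧
      V ⊆ {x1, y1, x2, y2, x3, y3} := by
  by_cases hA : ∃ x ∈ V, 3 ≤ (V.filter (R x)).card
  · obtain ⟨x, hx, h3⟩ := hA
    set C := V.filter (R x) with hCdef
    have hC3 : C.card = 3 := le_antisymm (hcl x hx) h3
    have hxC : x ∈ C := mem_filter.mpr ⟨hx, hrefl x⟩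
    have hCV : C ⊆ V := filter_subset _ _
    by_cases hA1 : ∃ y ∈ V, y ∉ C ∧ 3 ≤ (V.filter (R y)).card
    · obtain ⟨y, hy, hyC, h3y⟩ := hA1
      set D := V.filter (R y) with hDdef
      have hD3 : D.card = 3 := le_antisymm (hcl y hy) h3y
      have hDV : D ⊆ V := filter_subset _ _
      have hdisj : Disjoint C D := by
        rw [Finset.disjoint_left]
        intro z hzC hzD
        have hzV : z ∈ V := hCV hzC
        have hRxz : R x z := (mem_filter.mp hzC).2
        have hRyz : R y z := (mem_filter.mp hzD).2
        have hRxy : R x y := htrans x z y hx hzV hy hRxz (hsymm _ _ hRyz)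
        exact hyC (mem_filter.mpr ⟨hy, hRxy⟩)
      have hunion : C ∪ D = V := by
        apply eq_of_subset_of_card_le (union_subset hCV hDV)
        rw [card_union_of_disjoint hdisj, hC3, hD3, hcard]
      have hcross : ∀ cc ∈ C, ∀ dd ∈ D, ¬ R cc dd := by
        intro cc hcc dd hdd hR
        have hRxdd : R x dd :=
          htrans x cc dd hx (hCV hcc) (hDV hdd) (mem_filter.mp hcc).2 hR
        exact (Finset.disjoint_left.mp hdisj)
          (mem_filter.mpr ⟨hDV hdd, hRxdd⟩) hdd
      obtain ⟨c1, c2, c3, hc12, hc13, hc23, hCeq⟩ := card_eq_three.mp hC3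
      obtain ⟨d1, d2, d3, hd12, hd13, hd23, hDeq⟩ := card_eq_three.mp hD3
      have memc : c1 ∈ C ∧ c2 ∈ C ∧ c3 ∈ C := by rw [hCeq]; simp
      have memd : d1 ∈ D ∧ d2 ∈ D ∧ d3 ∈ D := by rw [hDeq]; simp
      refine ⟨c1, d1, c2, d2, c3, d3, hcross _ memc.1 _ memd.1,
        hcross _ memc.2.1 _ memd.2.1, hcross _ memc.2.2 _ memd.2.2, ?_⟩
      intro z hz
      rw [← hunion] at hz
      rcases mem_union.mp hz with hz | hz
      · rw [hCeq] at hz; simp at hz ⊢; tauto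
      · rw [hDeq] at hz; simp at hz ⊢; tauto
    · push_neg at hA1
      have hVC : 0 < (V \ C).card := by rw [card_sdiff_of_subset hCV]; omega
      obtain ⟨y, hy⟩ := card_pos.mp hVC
      have hyV : y ∈ V := (mem_sdiff.mp hy).1
      have hyC : y ∉ C := (mem_sdiff.mp hy).2
      have hxy : x ≠ y := fun h => hyC (h ▸ hxC)
      have hnRxy : ¬ R x y := fun h => hyC (mem_filter.mpr ⟨hyV, h⟩)
      set V' := V \ {x, y} with hV'def
      have hV'card : V'.card = 4 := by
        rw [hV'def, card_sdiff_of_subset (pair_subset hx hyV), card_pair hxy, hcard]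
      have hV'V : V' ⊆ V := sdiff_subset
      have hcl' : ∀ z ∈ V', (V'.filter (R z)).card ≤ 2 := by
        intro z hz
        have hzV : z ∈ V := hV'V hz
        by_cases hzC : z ∈ C
        · have hsub : V'.filter (R z) ⊆ C.erase x := by
            intro w hw
            have hwV' : w ∈ V' := (mem_filter.mp hw).1
            have hwV : w ∈ V := hV'V hwV'
            have hRzw : R z w := (mem_filter.mp hw).2
            have hRxz : R x z := (mem_filter.mp hzC).2
            have hRxw : R x w := htrans x z w hx hzV hwV hRxz hRzw
            refine mem_erase.mpr ⟨?_, mem_filter.mpr ⟨hwV, hRxw⟩⟩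
            intro hwx
            have : w ∉ ({x, y} : Finset α) := (mem_sdiff.mp hwV').2
            exact this (by rw [hwx]; simp)
          calc (V'.filter (R z)).card ≤ (C.erase x).card := card_le_card hsub
            _ = 2 := by rw [card_erase_of_mem hxC, hC3]
        · have hsub : V'.filter (R z) ⊆ V.filter (R z) :=
            filter_subset_filter _ hV'V
          have := hA1 z hzV hzC
          have := card_le_card hsub
          omega
      obtain ⟨x2, y2, x3, y3, h2, h3', hcov⟩ :=
        M4 R V' hV'card hrefl hsymm
          (fun a b cc hha hhb hhc => htrans a b cc (hV'V hha) (hV'V hhb) (hV'V hhc)) hcl'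
      refine ⟨x, y, x2, y2, x3, y3, hnRxy, h2, h3', ?_⟩
      intro z hz
      by_cases hzm : z ∈ ({x, y} : Finset α)
      · simp at hzm ⊢; tauto
      · have : z ∈ V' := mem_sdiff.mpr ⟨hz, hzm⟩
        have := hcov this
        simp at this ⊢; tauto
  · push_neg at hA
    have hV6 : 0 < V.card := by omega
    obtain ⟨u, hu⟩ := card_pos.mp hV6
    have hfu : (V.filter (R u)).card ≤ 3 := hcl u hu
    have hVu : 0 < (V \ V.filter (R u)).card := by
      rw [card_sdiff_of_subset (filter_subset _ _)]; omega
    obtain ⟨s, hs⟩ := card_pos.mp hVu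
    have hsV : s ∈ V := (mem_sdiff.mp hs).1
    have hnRus : ¬ R u s := fun h => (mem_sdiff.mp hs).2 (mem_filter.mpr ⟨hsV, h⟩)
    have hus : u ≠ s := fun h => hnRus (h ▸ hrefl u)
    set V' := V \ {u, s} with hV'def
    have hV'card : V'.card = 4 := by
      rw [hV'def, card_sdiff_of_subset (pair_subset hu hsV), card_pair hus, hcard]
    have hV'V : V' ⊆ V := sdiff_subset
    have hcl' : ∀ z ∈ V', (V'.filter (R z)).card ≤ 2 := by
      intro z hz
      have hsub : V'.filter (R z) ⊆ V.filter (R z) := filter_subset_filter _ hV'V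
      have h1 := hA z (hV'V hz)
      have h2 := card_le_card hsub
      omega
    obtain ⟨x2, y2, x3, y3, h2, h3', hcov⟩ :=
      M4 R V' hV'card hrefl hsymm
        (fun a b cc hha hhb hhc => htrans a b cc (hV'V hha) (hV'V hhb) (hV'V hhc)) hcl'
    refine ⟨u, s, x2, y2, x3, y3, hnRus, h2, h3', ?_⟩
    intro z hz
    by_cases hzm : z ∈ ({u, s} : Finset α)
    · simp at hzm ⊢; tauto
    · have : z ∈ V' := mem_sdiff.mpr ⟨hz, hzm⟩
      have := hcov this
      simp at this ⊢; tauto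

end DualCubicAux


namespace DualCubicAux

open Finset
open scoped Classical

variable {α : Type*} (R : α → α → Prop)

lemma cover_pairs (V : Finset α) (d : α) (hcard : V.card ≤ 6)
    (hrefl : ∀ x, R x x) (hsymm : ∀ x y, R x y → R y x)
    (htrans : ∀ x y z, x ∈ V → y ∈ V → z ∈ V → R x y → R y z → R x z)
    (hcl3 : ∀ x ∈ V, (V.filter (R x)).card ≤ 3)
    (hcl2 : V.card ≤ 4 → ∀ x ∈ V, (V.filter (R x)).card ≤ 2) :
    ∃ x1 y1 x2 y2 x3 y3 : α, (x1 = y1 ∨ ¬R x1 y1) ∧ (x2 = y2 ∨ ¬R x2 y2) ∧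
      (x3 = y3 ∨ ¬R x3 y3) ∧ V ⊆ {x1, y1, x2, y2, x3, y3} := by
  by_cases h3 : V.card ≤ 3
  · obtain ⟨x, y, z, hxyz⟩ := exists_three_cover V d h3
    refine ⟨x, x, y, y, z, z, Or.inl rfl, Or.inl rfl, Or.inl rfl, ?_⟩
    intro w hw
    have := hxyz hw
    simp at this ⊢; tauto
  · have h456 : V.card = 4 ∨ V.card = 5 ∨ V.card = 6 := by omega
    rcases h456 with h4 | h5 | h6
    · obtain ⟨x1, y1, x2, y2, h1, h2, hcov⟩ :=
        M4 R V h4 hrefl hsymm htrans (hcl2 (by omega))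
      refine ⟨x1, y1, x2, y2, d, d, Or.inr h1, Or.inr h2, Or.inl rfl, ?_⟩
      intro w hw
      have := hcov hw
      simp at this ⊢; tauto
    · -- card 5
      have hV5 : 0 < V.card := by omega
      obtain ⟨u, hu⟩ := card_pos.mp hV5
      have hVu : 0 < (V \ V.filter (R u)).card := by
        rw [card_sdiff_of_subset (filter_subset _ _)]
        have := hcl3 u hu; omega
      obtain ⟨y, hy⟩ := card_pos.mp hVu
      have hyV : y ∈ V := (mem_sdiff.mp hy).1
      have hnRuy : ¬ R u y := fun h => (mem_sdiff.mp hy).2 (mem_filter.mpr ⟨hyV, h⟩)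
      have huy : u ≠ y := fun h => hnRuy (h ▸ hrefl u)
      set V' := V \ {u, y} with hV'def
      have hV'card : V'.card = 3 := by
        rw [hV'def, card_sdiff_of_subset (pair_subset hu hyV), card_pair huy, h5]
      have hV'V : V' ⊆ V := sdiff_subset
      by_cases hex : ∃ z ∈ V', ∃ w ∈ V', ¬ R z w
      · obtain ⟨z, hz, w, hw, hnRzw⟩ := hex
        have hzw : z ≠ w := fun h => hnRzw (h ▸ hrefl z)
        set V'' := V' \ {z, w} with hV''def
        have hV''card : V''.card = 1 := by
          rw [hV''def, card_sdiff_of_subset (pair_subset hz hw), card_pair hzw, hV'card]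
        obtain ⟨t, hteq⟩ := card_eq_one.mp hV''card
        refine ⟨u, y, z, w, t, t, Or.inr hnRuy, Or.inr hnRzw, Or.inl rfl, ?_⟩
        intro q hq
        by_cases hq1 : q ∈ ({u, y} : Finset α)
        · simp at hq1 ⊢; tauto
        · have hqV' : q ∈ V' := mem_sdiff.mpr ⟨hq, hq1⟩
          by_cases hq2 : q ∈ ({z, w} : Finset α)
          · simp at hq2 ⊢; tauto
          · have : q ∈ V'' := mem_sdiff.mpr ⟨hqV', hq2⟩
            rw [hteq] at this
            simp at this ⊢; tauto
      · push_neg at hex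
        obtain ⟨a, b, cc, hab, hac, hbc, hV'eq⟩ := card_eq_three.mp hV'card
        have mema : a ∈ V' := by rw [hV'eq]; simp
        have memb : b ∈ V' := by rw [hV'eq]; simp
        have memc : cc ∈ V' := by rw [hV'eq]; simp
        have hCsub : V' ⊆ V.filter (R a) := by
          intro w hw
          exact mem_filter.mpr ⟨hV'V hw, hex a mema w hw⟩
        have hfeqa : V' = V.filter (R a) :=
          eq_of_subset_of_card_le hCsub (by rw [hV'card]; exact hcl3 a (hV'V mema))
        have hDsub : V' ⊆ V.filter (R b) := by
          intro w hw
          exact mem_filter.mpr ⟨hV'V hw, hex b memb w hw⟩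
        have hfeqb : V' = V.filter (R b) :=
          eq_of_subset_of_card_le hDsub (by rw [hV'card]; exact hcl3 b (hV'V memb))
        have huV' : u ∉ V' := by rw [hV'def]; simp
        have hyV' : y ∉ V' := by rw [hV'def]; simp
        have hnRua : ¬ R u a := by
          intro h
          have : u ∈ V.filter (R a) := mem_filter.mpr ⟨hu, hsymm _ _ h⟩
          rw [← hfeqa] at this; exact huV' this
        have hnRyb : ¬ R y b := by
          intro h
          have : y ∈ V.filter (R b) := mem_filter.mpr ⟨hyV, hsymm _ _ h⟩
          rw [← hfeqb] at this; exact hyV' this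
        refine ⟨u, a, y, b, cc, cc, Or.inr hnRua, Or.inr hnRyb, Or.inl rfl, ?_⟩
        intro q hq
        by_cases hq1 : q ∈ ({u, y} : Finset α)
        · simp at hq1 ⊢; tauto
        · have hqV' : q ∈ V' := mem_sdiff.mpr ⟨hq, hq1⟩
          rw [hV'eq] at hqV'
          simp at hqV' ⊢; tauto
    · obtain ⟨x1, y1, x2, y2, x3, y3, h1, h2, h3', hcov⟩ :=
        M6 R V h6 hrefl hsymm htrans hcl3
      exact ⟨x1, y1, x2, y2, x3, y3, Or.inr h1, Or.inr h2, Or.inr h3', hcov⟩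

end DualCubicAux

namespace DualCubicAux

open Finset
open scoped Classical

variable {F : Type*} [Field F]

local notation "Pt" => Projectivization F (Fin 3 → F)

open MvPolynomial

/-- the linear form with coefficient vector `a`. -/
noncomputable def lin (a : Fin 3 → F) : MvPolynomial (Fin 3) F :=
  C (a 0) * X 0 + C (a 1) * X 1 + C (a 2) * X 2

lemma lin_homog (a : Fin 3 → F) : (lin a).IsHomogeneous 1 := by
  have h : ∀ i : Fin 3, (C (a i) * X i : MvPolynomial (Fin 3) F).IsHomogeneous 1 := by
    intro i
    simpa using (isHomogeneous_C (Fin 3) (a i)).mul (isHomogeneous_X _ i)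
  exact ((h 0).add (h 1)).add (h 2)

lemma eval_lin (a v : Fin 3 → F) : eval v (lin a) = dot a v := by
  simp [lin, dot]

lemma lin_ne_zero {a : Fin 3 → F} (ha : a ≠ 0) : lin a ≠ 0 := by
  intro h
  apply ha
  have e0 := congrArg (eval (![1, 0, 0] : Fin 3 → F)) h
  have e1 := congrArg (eval (![0, 1, 0] : Fin 3 → F)) h
  have e2 := congrArg (eval (![0, 0, 1] : Fin 3 → F)) h
  rw [eval_lin] at e0 e1 e2
  simp [dot] at e0 e1 e2
  funext i
  fin_cases i <;> simpa

lemma no_small_cover [Fintype Pt] (c : Pt → F)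
    (hdual : ∀ f : MvPolynomial (Fin 3) F, f.IsHomogeneous 3 → ∑ p, eval p.rep f * c p = 0)
    {p0 : Pt} (h0 : c p0 ≠ 0) (a1 a2 a3 : Fin 3 → F)
    (ha1 : dot a1 p0.rep ≠ 0) (ha2 : dot a2 p0.rep ≠ 0) (ha3 : dot a3 p0.rep ≠ 0)
    (hcov : ∀ q : Pt, c q ≠ 0 → q ≠ p0 →
      dot a1 q.rep = 0 ∨ dot a2 q.rep = 0 ∨ dot a3 q.rep = 0) : False := by
  have hf : (lin a1 * (lin a2 * lin a3)).IsHomogeneous 3 :=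
    (lin_homog a1).mul ((lin_homog a2).mul (lin_homog a3))
  have hsum := hdual _ hf
  rw [Finset.sum_eq_single_of_mem p0 (Finset.mem_univ _) ?side] at hsum
  case side =>
    intro b _ hb
    by_cases hcb : c b = 0
    · rw [hcb, mul_zero]
    · rcases hcov b hcb hb with h | h | h <;> simp [map_mul, eval_lin, h]
  have hne : eval p0.rep (lin a1 * (lin a2 * lin a3)) ≠ 0 := by
    simp only [map_mul, eval_lin]
    exact mul_ne_zero ha1 (mul_ne_zero ha2 ha3)
  rcases mul_eq_zero.mp hsum with h | h
  · exact hne h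
  · exact h0 h

/-- a linear form nonvanishing at `p0` and vanishing at `x` if `x ≠ p0`. -/
lemma slot_line (p0 x : Pt) :
    ∃ a : Fin 3 → F, dot a p0.rep ≠ 0 ∧ (x ≠ p0 → dot a x.rep = 0) := by
  by_cases h : x = p0
  · obtain ⟨a, ha⟩ := exists_dual_ne p0.rep p0.rep_nonzero
    exact ⟨a, ha, fun hx => absurd h hx⟩
  · obtain ⟨a, h1, h2⟩ := line_avoid h
    exact ⟨a, h2, fun _ => h1⟩

lemma slot_line₂ (p0 x y : Pt) (h : x = y ∨ ¬ collin p0 x y) :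
    ∃ a : Fin 3 → F, dot a p0.rep ≠ 0 ∧ (x ≠ p0 → dot a x.rep = 0) ∧
      (y ≠ p0 → dot a y.rep = 0) := by
  rcases h with rfl | h
  · obtain ⟨a, h1, h2⟩ := slot_line p0 x
    exact ⟨a, h1, h2, h2⟩
  · obtain ⟨a, h1, h2, h3⟩ := line_pair_avoid h
    exact ⟨a, h1, fun _ => h2, fun _ => h3⟩

end DualCubicAux

open MvPolynomial
open DualCubicAux
open scoped Classical

set_option maxHeartbeats 1000000 in
/-- Supports of low-weight codewords of the dual `C_{2,3}^⊥` of the projective Reed–Muller code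
of plane cubics over `F_q` with `q > 2`: a nonzero dual codeword `c` has weight `≥ 5`, and if
`wt(c) ∈ {5,6,7}` then the support of `c` consists of `wt(c)` collinear points of `P²(F_q)`. -/
theorem dual_cubic_code_low_weight_supports (F : Type*) [Field F] [Fintype F]
    [Fintype (Projectivization F (Fin 3 → F))] (hq : 2 < Fintype.card F)
    (c : Projectivization F (Fin 3 → F) → F)
    (hdual : ∀ f : MvPolynomial (Fin 3) F, f.IsHomogeneous 3 → ∑ p, eval p.rep f * c p = 0)
    (hc : c ≠ 0) :
    5 ≤ Nat.card {p | c p ≠ 0} ∧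
    ((Nat.card {p | c p ≠ 0} = 5 ∨ Nat.card {p | c p ≠ 0} = 6 ∨
        Nat.card {p | c p ≠ 0} = 7) →
      ∃ ℓ : MvPolynomial (Fin 3) F, ℓ ≠ 0 ∧ ℓ.IsHomogeneous 1 ∧
        ∀ p, c p ≠ 0 → eval p.rep ℓ = 0) := by
  classical
  set S : Finset (Projectivization F (Fin 3 → F)) :=
    Finset.univ.filter (fun p => c p ≠ 0) with hSdef
  have hmemS : ∀ p, p ∈ S ↔ c p ≠ 0 := by intro p; simp [hSdef]
  have hcardeq : Nat.card {p | c p ≠ 0} = S.card := by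
    have h1 : {p | c p ≠ 0} = (↑S : Set _) := by ext p; simp [hSdef]
    rw [h1, Nat.card_coe_set_eq, Set.ncard_coe_finset]
  obtain ⟨p0, hp0⟩ : ∃ p, c p ≠ 0 := by
    by_contra h; push_neg at h; exact hc (funext h)
  -- Part 1: the weight is at least 5.
  have part1 : 4 < S.card := by
    by_contra hle
    push_neg at hle
    have hp0S : p0 ∈ S := (hmemS p0).mpr hp0
    have hV : (S.erase p0).card ≤ 3 := by
      rw [Finset.card_erase_of_mem hp0S]; omega
    obtain ⟨x, y, z, hxyz⟩ := exists_three_cover (S.erase p0) p0 hV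
    obtain ⟨a1, ha1, hb1⟩ := slot_line p0 x
    obtain ⟨a2, ha2, hb2⟩ := slot_line p0 y
    obtain ⟨a3, ha3, hb3⟩ := slot_line p0 z
    apply no_small_cover c hdual hp0 a1 a2 a3 ha1 ha2 ha3
    intro q hq hqp
    have hqV : q ∈ S.erase p0 := Finset.mem_erase.mpr ⟨hqp, (hmemS q).mpr hq⟩
    have hq3 := hxyz hqV
    simp at hq3
    rcases hq3 with rfl | rfl | rfl
    · exact Or.inl (hb1 hqp)
    · exact Or.inr (Or.inl (hb2 hqp))
    · exact Or.inr (Or.inr (hb3 hqp))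
  refine ⟨by rw [hcardeq]; omega, ?_⟩
  -- Part 2.
  intro hn
  rw [hcardeq] at hn
  by_contra hL
  push_neg at hL
  have hnc : ∀ a : Fin 3 → F, a ≠ 0 → ∃ p, c p ≠ 0 ∧ dot a p.rep ≠ 0 := by
    intro a ha
    obtain ⟨p, hp1, hp2⟩ := hL (lin a) (lin_ne_zero ha) (lin_homog a)
    rw [eval_lin] at hp2
    exact ⟨p, hp1, hp2⟩
  by_cases hI : ∃ p1, c p1 ≠ 0 ∧ ∃ a : Fin 3 → F, dot a p1.rep ≠ 0 ∧
      ∀ q, c q ≠ 0 → q ≠ p1 → dot a q.rep = 0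
  · obtain ⟨p1, hp1, a, haa, hall⟩ := hI
    exact no_small_cover c hdual hp1 a a a haa haa haa
      (fun q hq hqp => Or.inl (hall q hq hqp))
  push_neg at hI
  have offline : ∀ a : Fin 3 → F, a ≠ 0 →
      ∃ p q, p ≠ q ∧ c p ≠ 0 ∧ c q ≠ 0 ∧ dot a p.rep ≠ 0 ∧ dot a q.rep ≠ 0 := by
    intro a ha
    obtain ⟨p, hp, hpa⟩ := hnc a ha
    obtain ⟨q, hq, hqp, hqa⟩ := hI p hp a hpa
    exact ⟨p, q, Ne.symm hqp, hp, hq, hpa, hqa⟩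
  have line_card : ∀ a : Fin 3 → F, a ≠ 0 →
      (S.filter (fun p => dot a p.rep = 0)).card + 2 ≤ S.card := by
    intro a ha
    obtain ⟨p, q, hpq, hp, hq, hpa, hqa⟩ := offline a ha
    have hsub : ({p, q} : Finset _) ⊆ S.filter (fun r => ¬ dot a r.rep = 0) := by
      intro w hw
      rcases Finset.mem_insert.mp hw with h | h
      · rw [h]; exact Finset.mem_filter.mpr ⟨(hmemS p).mpr hp, hpa⟩
      · rw [Finset.mem_singleton.mp h]
        exact Finset.mem_filter.mpr ⟨(hmemS q).mpr hq, hqa⟩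
    have h2 : 2 ≤ (S.filter (fun r => ¬ dot a r.rep = 0)).card := by
      rw [← Finset.card_pair hpq]; exact Finset.card_le_card hsub
    have h3 := Finset.card_filter_add_card_filter_not
      (s := S) (p := fun r => dot a r.rep = 0)
    omega
  -- the class of q (w.r.t. a point p1 of the support) lies on the line through p1 and q
  have class_line : ∀ p1, c p1 ≠ 0 → ∀ q ∈ S.erase p1,
      ∃ b : Fin 3 → F, b ≠ 0 ∧ dot b p1.rep = 0 ∧
        insert p1 ((S.erase p1).filter (fun r => collin p1 q r)) ⊆
          S.filter (fun r => dot b r.rep = 0) := by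
    intro p1 hp1 q hqV
    have hq : q ≠ p1 := (Finset.mem_erase.mp hqV).1
    obtain ⟨b, hb0, hbp, hbq, hball⟩ := thru_line hq
    refine ⟨b, hb0, hbp, ?_⟩
    intro w hw
    rcases Finset.mem_insert.mp hw with h | h
    · rw [h]; exact Finset.mem_filter.mpr ⟨(hmemS p1).mpr hp1, hbp⟩
    · obtain ⟨hwV, hwc⟩ := Finset.mem_filter.mp h
      exact Finset.mem_filter.mpr ⟨Finset.mem_of_mem_erase hwV, hball w hwc⟩
  have class_card : ∀ p1, c p1 ≠ 0 → ∀ q ∈ S.erase p1,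
      ((S.erase p1).filter (fun r => collin p1 q r)).card + 3 ≤ S.card := by
    intro p1 hp1 q hqV
    obtain ⟨b, hb0, hbp, hsub⟩ := class_line p1 hp1 q hqV
    have hnotmem : p1 ∉ (S.erase p1).filter (fun r => collin p1 q r) :=
      fun h => (Finset.mem_erase.mp (Finset.mem_filter.mp h).1).1 rfl
    have hci := Finset.card_insert_of_notMem hnotmem
    have h1 := Finset.card_le_card hsub
    have h2 := line_card b hb0
    omega
  have hScard : S.card ≤ 7 := by omega
  -- choose a good base point p1 with all classes of size at most 3
  have hex_p1 : ∃ p1, c p1 ≠ 0 ∧ ∀ q ∈ S.erase p1,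
      ((S.erase p1).filter (fun r => collin p1 q r)).card ≤ 3 := by
    by_cases hbig : ∃ b : Fin 3 → F, b ≠ 0 ∧
        5 ≤ (S.filter (fun p => dot b p.rep = 0)).card
    · obtain ⟨b, hb0, hb5⟩ := hbig
      obtain ⟨p, q', hpq', hp, hq', hpa, hqa'⟩ := offline b hb0
      refine ⟨p, hp, ?_⟩
      intro q hqV
      by_contra hgt
      push_neg at hgt
      obtain ⟨b', hb'0, hb'p, hsub⟩ := class_line p hp q hqV
      have hnotmem : p ∉ (S.erase p).filter (fun r => collin p q r) :=
        fun h => (Finset.mem_erase.mp (Finset.mem_filter.mp h).1).1 rfl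
      have hci := Finset.card_insert_of_notMem hnotmem
      have h1 := Finset.card_le_card hsub
      have h5' : 5 ≤ (S.filter (fun r => dot b' r.rep = 0)).card := by omega
      have hnp : ∀ t : F, b' ≠ t • b := by
        intro t ht
        have hdt : dot b' p.rep = t * dot b p.rep := by rw [ht, dot_smul]
        rw [hb'p] at hdt
        have ht0 : t = 0 := by
          rcases mul_eq_zero.mp hdt.symm with h | h
          · exact h
          · exact absurd h hpa
        rw [ht0, zero_smul] at ht
        exact hb'0 ht
      have hint : (S.filter (fun r => dot b r.rep = 0) ∩
          S.filter (fun r => dot b' r.rep = 0)).card ≤ 1 := by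
        apply Finset.card_le_one.mpr
        intro u hu v hv
        rw [Finset.mem_inter] at hu hv
        exact eq_of_common_perp hb0 hnp
          (Finset.mem_filter.mp hu.1).2 (Finset.mem_filter.mp hu.2).2
          (Finset.mem_filter.mp hv.1).2 (Finset.mem_filter.mp hv.2).2
      have huni := Finset.card_union_add_card_inter
        (S.filter (fun r => dot b r.rep = 0)) (S.filter (fun r => dot b' r.rep = 0))
      have hsubS : (S.filter (fun r => dot b r.rep = 0)) ∪
          (S.filter (fun r => dot b' r.rep = 0)) ⊆ S :=
        Finset.union_subset (Finset.filter_subset _ _) (Finset.filter_subset _ _)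
      have hus := Finset.card_le_card hsubS
      omega
    · push_neg at hbig
      refine ⟨p0, hp0, ?_⟩
      intro q hqV
      by_contra hgt
      push_neg at hgt
      obtain ⟨b', hb'0, hb'p, hsub⟩ := class_line p0 hp0 q hqV
      have hnotmem : p0 ∉ (S.erase p0).filter (fun r => collin p0 q r) :=
        fun h => (Finset.mem_erase.mp (Finset.mem_filter.mp h).1).1 rfl
      have hci := Finset.card_insert_of_notMem hnotmem
      have h1 := Finset.card_le_card hsub
      have h5' := hbig b' hb'0
      omega
  obtain ⟨p1, hp1, hcl3⟩ := hex_p1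
  have hp1S : p1 ∈ S := (hmemS p1).mpr hp1
  set V : Finset (Projectivization F (Fin 3 → F)) := S.erase p1 with hVdef
  have hVcard : V.card = S.card - 1 := by rw [hVdef, Finset.card_erase_of_mem hp1S]
  have hV6 : V.card ≤ 6 := by omega
  have hVne : ∀ x ∈ V, x ≠ p1 := fun x hx => (Finset.mem_erase.mp hx).1
  obtain ⟨x1, y1, x2, y2, x3, y3, hc1, hc2, hc3, hcov⟩ :=
    cover_pairs (fun x y => collin p1 x y) V p1 hV6
      (fun x => collin_refl p1 x) (fun x y h => collin_swap h)
      (fun x y z hx hy hz h1 h2 => collin_trans h1 h2 (hVne y hy))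
      hcl3
      (by
        intro h4 x hx
        show (((S.erase p1).filter fun r => collin p1 x r)).card ≤ 2
        have h5 : S.card = 5 := by omega
        have := class_card p1 hp1 x hx
        omega)
  obtain ⟨a1, ha1, hb1, hb1'⟩ := slot_line₂ p1 x1 y1 hc1
  obtain ⟨a2, ha2, hb2, hb2'⟩ := slot_line₂ p1 x2 y2 hc2
  obtain ⟨a3, ha3, hb3, hb3'⟩ := slot_line₂ p1 x3 y3 hc3
  apply no_small_cover c hdual hp1 a1 a2 a3 ha1 ha2 ha3
  intro q hq hqp
  have hqV : q ∈ V := Finset.mem_erase.mpr ⟨hqp, (hmemS q).mpr hq⟩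
  have hq6 := hcov hqV
  simp at hq6
  rcases hq6 with rfl | rfl | rfl | rfl | rfl | rfl
  · exact Or.inl (hb1 hqp)
  · exact Or.inl (hb1' hqp)
  · exact Or.inr (Or.inl (hb2 hqp))
  · exact Or.inr (Or.inl (hb2' hqp))
  · exact Or.inr (Or.inr (hb3 hqp))
  · exact Or.inr (Or.inr (hb3' hqp))
end

section
/- Fix d ≥ 1, let d+2 ≤ m ≤ q+1, and fix a set of m collinear points in P²(F_q). The number of codewords c of C_{2,d}^⊥ supported on these m points with wt(c) = m (i.e., nonzero at every one of the m points) equals f_d(m) = Σ_{i=0}^{m-d-2} (-1)^i · C(m,i) · (q^{m-d-1-i} - 1), where C(m,i) is the binomial coefficient. -/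
open MvPolynomial

/-- The linear functional `y ↦ Σ_i a i * y i` on `ι → F`. -/
noncomputable def coordPairing {F : Type*} [Field F] {ι : Type*} [Fintype ι] (a : ι → F) :
    (ι → F) →ₗ[F] F :=
  ∑ i, a i • LinearMap.proj i

/-- The dual code `C_{2,d}^⊥` of the projective Reed–Muller code of degree-`d` plane curves. -/
noncomputable def dualRMCode (F : Type*) [Field F] [Fintype F]
    [Fintype (Projectivization F (Fin 3 → F))] (d : ℕ) :
    Submodule F (Projectivization F (Fin 3 → F) → F) :=
  ⨅ f ∈ {f : MvPolynomial (Fin 3) F | f.IsHomogeneous d},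
    LinearMap.ker (coordPairing fun p => eval p.rep f)


lemma degree_one_single {σ : Type*} (μ : σ →₀ ℕ) (h : μ.degree = 1) :
    ∃ i, μ = Finsupp.single i 1 := by
  classical
  have hne : μ.support.Nonempty := by
    by_contra hc
    rw [Finset.not_nonempty_iff_eq_empty] at hc
    simp [Finsupp.degree_apply, hc] at h
  have hcard : μ.support.card ≤ 1 := by
    have h2 : ∑ _i ∈ μ.support, 1 ≤ ∑ i ∈ μ.support, μ i := by
      apply Finset.sum_le_sum
      intro i hi
      exact Nat.one_le_iff_ne_zero.2 (Finsupp.mem_support_iff.1 hi)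
    simp only [Finset.sum_const, smul_eq_mul, mul_one] at h2
    have : ∑ i ∈ μ.support, μ i = 1 := h
    omega
  obtain ⟨i, hi⟩ := hne
  have hsupp : μ.support = {i} := by
    apply Finset.eq_singleton_iff_unique_mem.2 ⟨hi, ?_⟩
    intro j hj
    by_contra hji
    have : 1 < μ.support.card := Finset.one_lt_card.2 ⟨j, hj, i, hi, hji⟩
    omega
  have hμi : μ i = 1 := by
    have hd : μ.degree = μ i := by simp [Finsupp.degree_apply, hsupp]
    rw [h] at hd; omega
  refine ⟨i, ?_⟩
  have := (Finsupp.support_eq_singleton.1 hsupp).2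
  rwa [hμi] at this

lemma eval_isHomogeneous_one {F : Type*} [CommSemiring F] {σ : Type*} [Fintype σ]
    [DecidableEq σ] {ℓ : MvPolynomial σ F} (hℓ : ℓ.IsHomogeneous 1) (v : σ → F) :
    eval v ℓ = ∑ i, ℓ.coeff (Finsupp.single i 1) * v i := by
  rw [eval_eq']
  have hsub : ℓ.support ⊆ Finset.univ.image (fun i => Finsupp.single i 1) := by
    intro μ hμ
    have hdeg : μ.degree = 1 := by
      by_contra hne
      exact (MvPolynomial.mem_support_iff.1 hμ) (hℓ.coeff_eq_zero hne)
    obtain ⟨i, rfl⟩ := degree_one_single μ hdeg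
    exact Finset.mem_image.2 ⟨i, Finset.mem_univ i, rfl⟩
  rw [Finset.sum_subset hsub (fun μ _ hμ => by
    simp [MvPolynomial.notMem_support_iff.1 hμ])]
  rw [Finset.sum_image (fun i _ j _ h => Finsupp.single_left_injective one_ne_zero h)]
  apply Finset.sum_congr rfl
  intro i _
  congr 1
  simp [Finsupp.single_apply, apply_ite, Finset.prod_ite_eq]

lemma fin2_degree (μ : Fin 2 →₀ ℕ) : μ.degree = μ 0 + μ 1 := by
  classical
  have : μ.degree = ∑ i : Fin 2, μ i := by
    rw [Finsupp.degree]
    apply Finset.sum_subset (Finset.subset_univ _)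
    intro i _ hi
    exact Finsupp.notMem_support_iff.1 hi
  rw [this, Fin.sum_univ_two]

lemma fin2_decomp (μ : Fin 2 →₀ ℕ) : μ = Finsupp.single 0 (μ 0) + Finsupp.single 1 (μ 1) := by
  ext j
  fin_cases j <;> simp [Finsupp.single_apply]

/-- Evaluation of a homogeneous binary form as a sum of its coefficients times monomials. -/
lemma binForm_eval_eq_sum {F : Type*} [CommRing F] {d : ℕ} {g : MvPolynomial (Fin 2) F}
    (hg : g.IsHomogeneous d) (x y : F) :
    eval ![x, y] g = ∑ k ∈ Finset.range (d+1),
      g.coeff (Finsupp.single 0 k + Finsupp.single 1 (d - k)) * x ^ k * y ^ (d - k) := by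
  classical
  rw [eval_eq']
  set e : ℕ → (Fin 2 →₀ ℕ) := fun k => Finsupp.single 0 k + Finsupp.single 1 (d - k) with he
  have he0 : ∀ k, e k 0 = k := by intro k; simp [he, Finsupp.single_apply]
  have he1 : ∀ k, e k 1 = d - k := by intro k; simp [he, Finsupp.single_apply]
  have hsub : g.support ⊆ (Finset.range (d+1)).image e := by
    intro μ hμ
    have hdeg : μ.degree = d := by
      by_contra hne
      exact (MvPolynomial.mem_support_iff.1 hμ) (hg.coeff_eq_zero hne)
    rw [fin2_degree] at hdeg
    refine Finset.mem_image.2 ⟨μ 0, Finset.mem_range.2 (by omega), ?_⟩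
    ext j
    fin_cases j <;> simp [he, Finsupp.single_apply] <;> omega
  rw [Finset.sum_subset hsub (fun μ _ hμ => by
    simp [MvPolynomial.notMem_support_iff.1 hμ])]
  rw [Finset.sum_image (fun i _ j _ h => by
    have := congrArg (fun μ => μ 0) h
    simpa [he0] using this)]
  apply Finset.sum_congr rfl
  intro k _
  rw [Fin.prod_univ_two, he0, he1]
  simp only [Matrix.cons_val_zero, Matrix.cons_val_one, Matrix.head_cons, mul_assoc, he]


section Moment
variable {F : Type*} [Field F] {ι : Type*} [Fintype ι] [DecidableEq ι] {d : ℕ}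
variable {a b : ι → F}

/-- Injectivity of the moment matrix given at least `d+1` pairwise non-proportional points. -/
lemma moment_inj (hab : ∀ i, ¬(a i = 0 ∧ b i = 0))
    (hdist : ∀ i j, a i * b j = a j * b i → i = j)
    (hcard : d + 1 ≤ Fintype.card ι) (c : Fin (d+1) → F)
    (hc : ∀ i, ∑ k : Fin (d+1), c k * a i ^ (k : ℕ) * b i ^ (d - (k : ℕ)) = 0) :
    c = 0 := by
  classical
  set Q : Polynomial F := ∑ k : Fin (d+1), Polynomial.C (c k) * Polynomial.X ^ (k : ℕ) with hQ
  have hQdeg : Q.natDegree ≤ d := by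
    apply Polynomial.natDegree_sum_le_of_forall_le
    intro k _
    exact (Polynomial.natDegree_C_mul_X_pow_le _ _).trans (by omega)
  have hQcoeff : ∀ k : Fin (d+1), Q.coeff (k : ℕ) = c k := by
    intro k
    rw [hQ, Polynomial.finset_sum_coeff]
    rw [Finset.sum_eq_single k]
    · simp
    · intro j _ hjk
      rw [Polynomial.coeff_C_mul, Polynomial.coeff_X_pow, if_neg (by
        simp only [Fin.val_eq_val]; exact fun h => hjk (by exact_mod_cast h.symm) ), mul_zero]
    · intro h; exact absurd (Finset.mem_univ k) h
  -- roots
  have hroot : ∀ i, b i ≠ 0 → Q.eval (a i / b i) = 0 := by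
    intro i hbi
    have h0 := hc i
    have hexp : ∀ k : Fin (d+1), c k * a i ^ (k : ℕ) * b i ^ (d - (k : ℕ))
        = b i ^ d * (c k * (a i / b i) ^ (k : ℕ)) := by
      intro k
      have hk : (k : ℕ) ≤ d := by omega
      have h1 : b i ^ d * (c k * (a i / b i) ^ (k:ℕ))
          = c k * a i ^ (k:ℕ) * (b i ^ d / b i ^ (k:ℕ)) := by
        rw [div_pow]; ring
      rw [h1, pow_sub₀ (b i) hbi hk]; ring
    rw [Finset.sum_congr rfl (fun k _ => hexp k), ← Finset.mul_sum] at h0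
    have := (mul_eq_zero.1 h0).resolve_left (pow_ne_zero d hbi)
    rw [hQ]
    simpa [Polynomial.eval_finset_sum] using this
  set B : Finset ι := Finset.univ.filter (fun i => b i ≠ 0) with hB
  have hBinj : Set.InjOn (fun i => a i / b i) B := by
    intro i hi j hj hij
    simp only [hB, Finset.coe_filter, Set.mem_setOf_eq] at hi hj
    rw [div_eq_div_iff hi.2 hj.2] at hij
    exact hdist _ _ hij
  have hBc : ∀ i j, i ∉ B → j ∉ B → i = j := by
    intro i j hi hj
    simp only [hB, Finset.mem_filter, Finset.mem_univ, true_and, not_not] at hi hj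
    apply hdist; rw [hi, hj, mul_zero, mul_zero]
  have hBcard : Fintype.card ι - 1 ≤ B.card := by
    by_contra hlt
    push_neg at hlt
    have : 2 ≤ (Finset.univ \ B).card := by
      have := Finset.card_sdiff_of_subset (Finset.subset_univ B)
      rw [Finset.card_univ] at this
      omega
    obtain ⟨x, hx, y, hy, hxy⟩ := Finset.one_lt_card.1 this
    simp only [Finset.mem_sdiff] at hx hy
    exact hxy (hBc x y hx.2 hy.2)
  -- Q has at least (card ι - 1 ≥ d) distinct roots, and at least d+1 if B = univ
  have hzero : Q = 0 := by
    by_contra hQne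
    have hrootcard : (B.image (fun i => a i / b i)).card ≤ Q.natDegree := by
      have hsub : B.image (fun i => a i / b i) ⊆ Q.roots.toFinset := by
        intro x hx
        obtain ⟨i, hi, rfl⟩ := Finset.mem_image.1 hx
        rw [Multiset.mem_toFinset, Polynomial.mem_roots hQne]
        exact hroot i (by simpa [hB] using hi)
      calc (B.image fun i => a i / b i).card ≤ Q.roots.toFinset.card := Finset.card_le_card hsub
        _ ≤ Multiset.card Q.roots := Q.roots.toFinset_card_le
        _ ≤ Q.natDegree := Q.card_roots'
    rw [Finset.card_image_of_injOn hBinj] at hrootcard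
    by_cases hall : ∀ i, b i ≠ 0
    · have : B = Finset.univ := by
        apply Finset.eq_univ_iff_forall.2; intro i; simp [hB, hall i]
      rw [this, Finset.card_univ] at hrootcard
      omega
    · push_neg at hall
      obtain ⟨i0, hi0⟩ := hall
      have hai0 : a i0 ≠ 0 := fun h => hab i0 ⟨h, hi0⟩
      -- leading coefficient vanishes
      have hcd : c (Fin.last d) = 0 := by
        have h0 := hc i0
        rw [Finset.sum_eq_single (Fin.last d)] at h0
        · simp only [Fin.val_last, hi0, Nat.sub_self, pow_zero, mul_one] at h0
          exact (mul_eq_zero.1 h0).resolve_right (pow_ne_zero d hai0)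
        · intro k _ hk
          have : (k : ℕ) < d := Fin.val_lt_last hk
          rw [hi0, zero_pow (by omega), mul_zero]
        · intro h; exact absurd (Finset.mem_univ _) h
      have hQdeg' : Q.natDegree < d := by
        rcases Nat.lt_or_ge Q.natDegree d with h | h
        · exact h
        · exfalso
          have hdeg_eq : Q.natDegree = d := le_antisymm hQdeg h
          have : Q.coeff d = 0 := by
            have := hQcoeff (Fin.last d)
            simpa [hcd] using this
          exact hQne (Polynomial.leadingCoeff_eq_zero.1 (by rwa [Polynomial.leadingCoeff, hdeg_eq]))
      omega
  funext k
  rw [← hQcoeff k, hzero]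
  simp
end Moment

section Surj
variable {F : Type*} [Field F] {ι : Type*} [Fintype ι] [DecidableEq ι] {d : ℕ}
variable {a b : ι → F}

lemma moment_surj_single (hab : ∀ i, ¬(a i = 0 ∧ b i = 0))
    (hdist : ∀ i j, a i * b j = a j * b i → i = j)
    (hcard : Fintype.card ι ≤ d + 1) (j : ι) :
    ∃ c : Fin (d+1) → F,
      (∀ i, i ≠ j → ∑ k : Fin (d+1), c k * a i ^ (k : ℕ) * b i ^ (d - (k : ℕ)) = 0) ∧
      ∑ k : Fin (d+1), c k * a j ^ (k : ℕ) * b j ^ (d - (k : ℕ)) ≠ 0 := by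
  classical
  have hn1 : 1 ≤ Fintype.card ι := Fintype.card_pos_iff.2 ⟨j⟩
  set L : MvPolynomial (Fin 2) F := if a j = 0 then X 1 else X 0 with hL
  set g : MvPolynomial (Fin 2) F :=
    (∏ i ∈ Finset.univ.erase j, (C (b i) * X 0 - C (a i) * X 1)) *
      L ^ (d + 1 - Fintype.card ι) with hg
  have hghom : g.IsHomogeneous d := by
    have h1 : (∏ i ∈ Finset.univ.erase j,
        ((C (b i) * X 0 - C (a i) * X 1 : MvPolynomial (Fin 2) F))).IsHomogeneous
        (Fintype.card ι - 1) := by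
      have h := MvPolynomial.IsHomogeneous.prod (Finset.univ.erase j)
        (fun i => (C (b i) * X 0 - C (a i) * X 1 : MvPolynomial (Fin 2) F)) (fun _ => 1)
        (fun i _ => (isHomogeneous_C_mul_X (b i) 0).sub (isHomogeneous_C_mul_X (a i) 1))
      simpa [Finset.card_erase_of_mem, Finset.card_univ] using h
    have h2 : (L ^ (d + 1 - Fintype.card ι)).IsHomogeneous (d + 1 - Fintype.card ι) := by
      rw [hL]; split_ifs <;> exact isHomogeneous_X_pow _ _
    have hdeq : (Fintype.card ι - 1) + (d + 1 - Fintype.card ι) = d := by omega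
    have h3 := MvPolynomial.IsHomogeneous.mul h1 h2
    rw [hdeq] at h3
    rw [hg]
    exact h3
  refine ⟨fun k => g.coeff (Finsupp.single 0 (k : ℕ) + Finsupp.single 1 (d - (k : ℕ))), ?_, ?_⟩
  · intro i hij
    have hsum : ∑ k : Fin (d+1),
        g.coeff (Finsupp.single 0 (k : ℕ) + Finsupp.single 1 (d - (k : ℕ)))
          * a i ^ (k : ℕ) * b i ^ (d - (k : ℕ)) = eval ![a i, b i] g := by
      rw [binForm_eval_eq_sum hghom]
      exact Fin.sum_univ_eq_sum_range
        (fun k => g.coeff (Finsupp.single 0 k + Finsupp.single 1 (d - k))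
          * a i ^ k * b i ^ (d - k)) (d+1)
    rw [hsum, hg, map_mul, map_prod]
    apply mul_eq_zero_of_left
    apply Finset.prod_eq_zero (Finset.mem_erase.2 ⟨hij, Finset.mem_univ i⟩)
    simp [mul_comm]
  · have hsum : ∑ k : Fin (d+1),
        g.coeff (Finsupp.single 0 (k : ℕ) + Finsupp.single 1 (d - (k : ℕ)))
          * a j ^ (k : ℕ) * b j ^ (d - (k : ℕ)) = eval ![a j, b j] g := by
      rw [binForm_eval_eq_sum hghom]
      exact Fin.sum_univ_eq_sum_range
        (fun k => g.coeff (Finsupp.single 0 k + Finsupp.single 1 (d - k))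
          * a j ^ k * b j ^ (d - k)) (d+1)
    rw [hsum, hg, map_mul, map_prod, map_pow]
    apply mul_ne_zero
    · rw [Finset.prod_ne_zero_iff]
      intro i hi
      have hine : i ≠ j := (Finset.mem_erase.1 hi).1
      simp only [map_sub, map_mul, eval_C, eval_X, Matrix.cons_val_zero, Matrix.cons_val_one,
        Matrix.head_cons]
      intro hzero
      have h := sub_eq_zero.1 hzero
      exact hine (hdist i j (by linear_combination -h))
    · apply pow_ne_zero
      rw [hL]
      by_cases haj : a j = 0
      · have hbj : b j ≠ 0 := fun h => hab j ⟨haj, h⟩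
        simp [haj, hbj]
      · simp [haj]
end Surj

lemma coordPairing_apply {F : Type*} [Field F] {ι : Type*} [Fintype ι] (a y : ι → F) :
    coordPairing a y = ∑ i, a i * y i := by
  simp [coordPairing, LinearMap.sum_apply, LinearMap.smul_apply, LinearMap.proj_apply]

lemma mem_dualRMCode {F : Type*} [Field F] [Fintype F]
    [Fintype (Projectivization F (Fin 3 → F))] {d : ℕ}
    (c : Projectivization F (Fin 3 → F) → F) :
    c ∈ dualRMCode F d ↔ ∀ f : MvPolynomial (Fin 3) F, f.IsHomogeneous d →
      ∑ p : Projectivization F (Fin 3 → F), eval p.rep f * c p = 0 := by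
  rw [dualRMCode]
  simp only [Submodule.mem_iInf, LinearMap.mem_ker, Set.mem_setOf_eq]
  constructor
  · intro h f hf
    have := h f hf
    rwa [coordPairing_apply] at this
  · intro h f hf
    rw [coordPairing_apply]
    exact h f hf

lemma card_codewords_subset {F : Type*} [Field F] [Fintype F]
    [Fintype (Projectivization F (Fin 3 → F))] (d : ℕ)
    (S : Finset (Projectivization F (Fin 3 → F)))
    {ℓ : MvPolynomial (Fin 3) F} (hl0 : ℓ ≠ 0) (hl1 : ℓ.IsHomogeneous 1)
    (hlS : ∀ p ∈ S, eval p.rep ℓ = 0) :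
    Nat.card {c : Projectivization F (Fin 3 → F) → F |
        c ∈ dualRMCode F d ∧ ∀ p, c p ≠ 0 → p ∈ S} =
      Fintype.card F ^ (S.card - (d + 1)) := by
  classical
  set l : Fin 3 → F := fun i => ℓ.coeff (Finsupp.single i 1) with hldef
  have heval : ∀ v : Fin 3 → F, eval v ℓ = ∑ i, l i * v i :=
    fun v => eval_isHomogeneous_one hl1 v
  obtain ⟨j, hlj⟩ : ∃ j, l j ≠ 0 := by
    by_contra hc
    push_neg at hc
    apply hl0
    apply MvPolynomial.ext
    intro μ
    rw [coeff_zero]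
    by_contra hμ
    have hdeg : μ.degree = 1 := by
      by_contra hne; exact hμ (hl1.coeff_eq_zero hne)
    obtain ⟨i, rfl⟩ := degree_one_single μ hdeg
    exact hμ (hc i)
  set A : Projectivization F (Fin 3 → F) → F := fun p => p.rep (j.succAbove 0) with hA
  set B : Projectivization F (Fin 3 → F) → F := fun p => p.rep (j.succAbove 1) with hB
  have hrel : ∀ p ∈ S,
      l j * p.rep j + (l (j.succAbove 0) * A p + l (j.succAbove 1) * B p) = 0 := by
    intro p hp
    have h := hlS p hp
    rw [heval, Fin.sum_univ_succAbove (fun i => l i * p.rep i) j, Fin.sum_univ_two] at h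
    exact h
  have hab : ∀ p ∈ S, ¬(A p = 0 ∧ B p = 0) := by
    rintro p hp ⟨h0, h1⟩
    have h2 := hrel p hp
    rw [h0, h1, mul_zero, mul_zero, add_zero, add_zero] at h2
    have hj : p.rep j = 0 := (mul_eq_zero.1 h2).resolve_left hlj
    apply Projectivization.rep_nonzero p
    funext i
    rcases eq_or_ne i j with rfl | hne
    · exact hj
    · obtain ⟨k, rfl⟩ := Fin.exists_succAbove_eq hne
      fin_cases k
      · exact h0
      · exact h1
  have hdist : ∀ p q, p ∈ S → q ∈ S → A p * B q = A q * B p → p = q := by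
    intro p q hp hq heq
    obtain ⟨lam, hlam0, h1, h2⟩ : ∃ lam : F, lam ≠ 0 ∧ A q = lam * A p ∧ B q = lam * B p := by
      by_cases hA0 : A p = 0
      · have hBp : B p ≠ 0 := fun h => hab p hp ⟨hA0, h⟩
        have hAq : A q = 0 := by
          have h3 : A q * B p = 0 := by rw [← heq, hA0, zero_mul]
          exact (mul_eq_zero.1 h3).resolve_right hBp
        refine ⟨B q / B p, div_ne_zero (fun h => hab q hq ⟨hAq, h⟩) hBp, ?_, ?_⟩
        · rw [hAq, hA0, mul_zero]
        · field_simp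
      · have hBq : A q = 0 → B q ≠ 0 := fun hAq h => hab q hq ⟨hAq, h⟩
        have hAq : A q ≠ 0 := by
          intro hAq
          have h3 : A p * B q = 0 := by rw [heq, hAq, zero_mul]
          exact hBq hAq ((mul_eq_zero.1 h3).resolve_left hA0)
        refine ⟨A q / A p, div_ne_zero hAq hA0, by field_simp, ?_⟩
        field_simp
        linear_combination heq
    have hj' : q.rep j = lam * p.rep j := by
      have e1 := hrel p hp
      have e2 := hrel q hq
      rw [h1, h2] at e2
      have h3 : l j * q.rep j = l j * (lam * p.rep j) := by linear_combination e2 - lam * e1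
      exact mul_left_cancel₀ hlj h3
    have hreps : q.rep = lam • p.rep := by
      funext i
      rcases eq_or_ne i j with rfl | hne
      · simpa using hj'
      · obtain ⟨k, rfl⟩ := Fin.exists_succAbove_eq hne
        fin_cases k
        · simpa using h1
        · simpa using h2
    rw [← Projectivization.mk_rep p, ← Projectivization.mk_rep q,
      Projectivization.mk_eq_mk_iff']
    exact ⟨lam⁻¹, by rw [hreps, smul_smul, inv_mul_cancel₀ hlam0, one_smul]⟩
  -- subtype versions
  set aa : {p // p ∈ S} → F := fun p => A p.1 with haa
  set bb : {p // p ∈ S} → F := fun p => B p.1 with hbb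
  have hab' : ∀ i : {p // p ∈ S}, ¬(aa i = 0 ∧ bb i = 0) := fun i => hab i.1 i.2
  have hdist' : ∀ i k : {p // p ∈ S}, aa i * bb k = aa k * bb i → i = k :=
    fun i k h => Subtype.ext (hdist i.1 k.1 i.2 k.2 h)
  -- the bridge
  have hbridge : ∀ c : Projectivization F (Fin 3 → F) → F, (∀ p, c p ≠ 0 → p ∈ S) →
      ((∀ f : MvPolynomial (Fin 3) F, f.IsHomogeneous d →
          ∑ p : Projectivization F (Fin 3 → F), eval p.rep f * c p = 0)
        ↔ (∀ k : Fin (d+1),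
          ∑ p : {p // p ∈ S}, c p.1 * (aa p ^ (k : ℕ) * bb p ^ (d - (k : ℕ))) = 0)) := by
    intro c hsupp
    have hrestrict : ∀ f : MvPolynomial (Fin 3) F,
        ∑ p : Projectivization F (Fin 3 → F), eval p.rep f * c p
          = ∑ p : {p // p ∈ S}, eval p.1.rep f * c p.1 := by
      intro f
      rw [← Finset.sum_subset (Finset.subset_univ S) (fun p _ hp => by
        rw [not_imp_comm.1 (hsupp p) hp, mul_zero])]
      exact (Finset.sum_coe_sort S (fun p => eval p.rep f * c p)).symm
    constructor
    · intro h k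
      set f : MvPolynomial (Fin 3) F :=
        rename j.succAbove ((X 0 : MvPolynomial (Fin 2) F) ^ (k : ℕ) * X 1 ^ (d - (k : ℕ)))
        with hf
      have hfhom : f.IsHomogeneous d := by
        have h1 := (isHomogeneous_X_pow (R := F) (0 : Fin 2) (k : ℕ)).mul
          (isHomogeneous_X_pow (1 : Fin 2) (d - (k : ℕ)))
        have hk : (k : ℕ) + (d - (k : ℕ)) = d := by have := k.isLt; omega
        rw [hk] at h1
        exact h1.rename_isHomogeneous
      have h0 := h f hfhom
      rw [hrestrict] at h0
      rw [← h0]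
      apply Finset.sum_congr rfl
      intro p _
      rw [hf, eval_rename]
      have : (p.1.rep ∘ j.succAbove) = ![aa p, bb p] := by
        funext i
        fin_cases i <;> simp [haa, hbb, hA, hB]
      rw [this]
      simp only [map_mul, map_pow, eval_X, Matrix.cons_val_zero, Matrix.cons_val_one,
        Matrix.head_cons]
      ring
    · intro h f hf
      rw [hrestrict]
      set payload : MvPolynomial (Fin 2) F :=
        C (-(l j)⁻¹ * l (j.succAbove 0)) * X 0 + C (-(l j)⁻¹ * l (j.succAbove 1)) * X 1
        with hpayload
      set subst : Fin 3 → MvPolynomial (Fin 2) F :=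
        j.insertNth payload (fun k => X k) with hsubst
      have hsubsthom : ∀ i, (subst i).IsHomogeneous 1 := by
        intro i
        rcases eq_or_ne i j with rfl | hne
        · rw [hsubst, Fin.insertNth_apply_same, hpayload]
          exact (isHomogeneous_C_mul_X _ _).add (isHomogeneous_C_mul_X _ _)
        · obtain ⟨k, rfl⟩ := Fin.exists_succAbove_eq hne
          rw [hsubst, Fin.insertNth_apply_succAbove]
          exact isHomogeneous_X _ _
      have hghom : (aeval subst f).IsHomogeneous d := by
        have := hf.aeval subst hsubsthom
        rwa [one_mul] at this
      have hpt : ∀ p : {p // p ∈ S},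
          eval ![aa p, bb p] (aeval subst f) = eval p.1.rep f := by
        intro p
        rw [aeval_def, eval_eval₂]
        have hcomp : (eval ![aa p, bb p]).comp (algebraMap F (MvPolynomial (Fin 2) F))
            = RingHom.id F := by
          ext r
          simp [MvPolynomial.algebraMap_eq]
        rw [hcomp, eval₂_id]
        have harg : (fun s => eval ![aa p, bb p] (subst s)) = p.1.rep := by
          funext i
          by_cases hij : i = j
          · subst hij
            rw [hsubst, Fin.insertNth_apply_same, hpayload]
            simp only [map_add, map_mul, eval_C, eval_X, Matrix.cons_val_zero,
              Matrix.cons_val_one, Matrix.head_cons]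
            have h2 := hrel p.1 p.2
            have haap : aa p = A p.1 := rfl
            have hbbp : bb p = B p.1 := rfl
            rw [haap, hbbp]
            have hinv : l i * (l i)⁻¹ = 1 := mul_inv_cancel₀ hlj
            apply mul_left_cancel₀ hlj
            linear_combination (-(l (i.succAbove 0) * A p.1 + l (i.succAbove 1) * B p.1)) * hinv
              - h2
          · obtain ⟨k, rfl⟩ := Fin.exists_succAbove_eq hij
            rw [hsubst, Fin.insertNth_apply_succAbove]
            fin_cases k <;> simp [haa, hbb, hA, hB]
        rw [harg]
      have hexp : ∀ p : {p // p ∈ S}, eval p.1.rep f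
          = ∑ k ∈ Finset.range (d+1),
            (aeval subst f).coeff (Finsupp.single 0 k + Finsupp.single 1 (d - k))
              * aa p ^ k * bb p ^ (d - k) := by
        intro p
        rw [← hpt p, binForm_eval_eq_sum hghom]
      calc ∑ p : {p // p ∈ S}, eval p.1.rep f * c p.1
          = ∑ p : {p // p ∈ S}, ∑ k ∈ Finset.range (d+1),
              (aeval subst f).coeff (Finsupp.single 0 k + Finsupp.single 1 (d - k))
                * (c p.1 * (aa p ^ k * bb p ^ (d - k))) := by
            apply Finset.sum_congr rfl
            intro p _
            rw [hexp p, Finset.sum_mul]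
            apply Finset.sum_congr rfl
            intro k _
            ring
        _ = ∑ k ∈ Finset.range (d+1),
              (aeval subst f).coeff (Finsupp.single 0 k + Finsupp.single 1 (d - k))
                * ∑ p : {p // p ∈ S}, c p.1 * (aa p ^ k * bb p ^ (d - k)) := by
            rw [Finset.sum_comm]
            apply Finset.sum_congr rfl
            intro k _
            rw [Finset.mul_sum]
        _ = 0 := by
            apply Finset.sum_eq_zero
            intro k hk
            have hk' : k < d + 1 := Finset.mem_range.1 hk
            have := h ⟨k, hk'⟩
            simp only at this
            rw [this, mul_zero]

  -- the moment matrix and its kernel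
  set M : Matrix {p // p ∈ S} (Fin (d+1)) F :=
    Matrix.of (fun p k => aa p ^ (k : ℕ) * bb p ^ (d - (k : ℕ))) with hM
  set K := LinearMap.ker (Matrix.vecMulLinear M) with hK
  have hKmem : ∀ v : {p // p ∈ S} → F, v ∈ K ↔
      ∀ k : Fin (d+1), ∑ p : {p // p ∈ S}, v p * (aa p ^ (k : ℕ) * bb p ^ (d - (k : ℕ))) = 0 := by
    intro v
    rw [hK, LinearMap.mem_ker, funext_iff]
    apply forall_congr'
    intro k
    simp only [Matrix.vecMulLinear_apply, Pi.zero_apply]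
    constructor
    · intro hvk
      rw [← hvk]
      simp [Matrix.vecMul, dotProduct, hM, mul_assoc]
    · intro hvk
      rw [← hvk]
      simp [Matrix.vecMul, dotProduct, hM, mul_assoc]
  -- rank computation
  have hdom : Module.finrank F ({p // p ∈ S} → F) = S.card := by
    rw [Module.finrank_fintype_fun_eq_card, Fintype.card_coe]
  have hker_eq : K = LinearMap.ker (Matrix.mulVecLin M.transpose) := by
    apply le_antisymm <;> intro v hv <;>
      simp only [hK, LinearMap.mem_ker, Matrix.mulVecLin_apply, Matrix.vecMulLinear_apply,
        Matrix.mulVec_transpose] at hv ⊢ <;> exact hv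
  have hrn1 : Module.finrank F (LinearMap.range (Matrix.mulVecLin M.transpose))
      + Module.finrank F K = S.card := by
    rw [hker_eq, ← hdom]
    exact LinearMap.finrank_range_add_finrank_ker (Matrix.mulVecLin M.transpose)
  have hrt : M.transpose.rank = M.rank := Matrix.rank_transpose M
  have hrtdef : M.transpose.rank = Module.finrank F (LinearMap.range (Matrix.mulVecLin M.transpose)) := rfl
  have hrdef : M.rank = Module.finrank F (LinearMap.range (Matrix.mulVecLin M)) := rfl
  have hΦ : ∀ cc : Fin (d+1) → F, ∀ p : {p // p ∈ S},
      Matrix.mulVecLin M cc p = ∑ k : Fin (d+1), cc k * aa p ^ (k : ℕ) * bb p ^ (d - (k : ℕ)) := by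
    intro cc p
    simp only [Matrix.mulVecLin_apply, Matrix.mulVec, dotProduct, hM, Matrix.of_apply]
    apply Finset.sum_congr rfl
    intro k _
    ring
  have hrankM : M.rank = min S.card (d + 1) := by
    rcases le_or_gt S.card (d+1) with hle | hgt
    · -- surjective case
      have hsingle : ∀ p0 : {p // p ∈ S}, Pi.single p0 (1 : F) ∈
          LinearMap.range (Matrix.mulVecLin M) := by
        intro p0
        obtain ⟨cc, hc0, hcj⟩ := moment_surj_single hab' hdist'
          (by rw [Fintype.card_coe]; exact hle) p0
        refine ⟨(∑ k : Fin (d+1), cc k * aa p0 ^ (k : ℕ) * bb p0 ^ (d - (k : ℕ)))⁻¹ • cc, ?_⟩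
        funext p
        rw [map_smul]
        by_cases hp : p = p0
        · subst hp
          simp only [Pi.smul_apply, hΦ, smul_eq_mul, Pi.single_eq_same]
          exact inv_mul_cancel₀ hcj
        · simp only [Pi.smul_apply, hΦ, smul_eq_mul, Pi.single_eq_of_ne hp]
          rw [hc0 p hp, mul_zero]
      have hrange : LinearMap.range (Matrix.mulVecLin M) = ⊤ := by
        rw [eq_top_iff]
        intro v _
        have hv : v = ∑ p : {p // p ∈ S}, Pi.single p (v p) := by
          rw [Finset.univ_sum_single v]
        rw [hv]
        apply Submodule.sum_mem
        intro p _
        have : Pi.single p (v p) = v p • (Pi.single p (1 : F) : {p // p ∈ S} → F) := by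
          funext x
          by_cases hx : x = p
          · subst hx; simp
          · simp [Pi.single_eq_of_ne hx]
        rw [this]
        exact Submodule.smul_mem _ _ (hsingle p)
      rw [hrdef, hrange]
      rw [finrank_top, hdom]
      omega
    · -- injective case
      have hinj : LinearMap.ker (Matrix.mulVecLin M) = ⊥ := by
        rw [LinearMap.ker_eq_bot']
        intro cc hcc
        apply moment_inj hab' hdist' (by rw [Fintype.card_coe]; omega) cc
        intro p
        rw [← hΦ cc p, hcc]
        rfl
      have := LinearMap.finrank_range_add_finrank_ker (Matrix.mulVecLin M)
      rw [hinj, finrank_bot, add_zero, Module.finrank_fintype_fun_eq_card, Fintype.card_fin]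
        at this
      rw [hrdef, this]
      omega
  have hrankK : Module.finrank F K = S.card - (d + 1) := by
    rw [← hrtdef, hrt, hrankM] at hrn1
    omega
  -- the equivalence between codewords supported in S and the kernel K
  have hcardK : Nat.card K = Fintype.card F ^ (S.card - (d + 1)) := by
    rw [Nat.card_eq_fintype_card, Module.card_eq_pow_finrank (K := F) (V := K), hrankK]
  rw [← hcardK]
  apply Nat.card_congr
  refine Equiv.ofBijective (fun c => ⟨fun p => c.1 p.1, ?_⟩) ⟨?_, ?_⟩
  · -- membership in K
    obtain ⟨c, hc, hcs⟩ := c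
    rw [hKmem]
    intro k
    exact (hbridge c hcs).1 ((mem_dualRMCode c).1 hc) k
  · -- injective
    rintro ⟨c1, hc1, hs1⟩ ⟨c2, hc2, hs2⟩ heq12
    have := congrArg Subtype.val heq12
    simp only at this
    apply Subtype.ext
    funext p
    show c1 p = c2 p
    by_cases hp : p ∈ S
    · exact congrFun this ⟨p, hp⟩
    · rw [not_imp_comm.1 (hs1 p) hp, not_imp_comm.1 (hs2 p) hp]
  · -- surjective
    rintro ⟨v, hv⟩
    refine ⟨⟨fun p => if h : p ∈ S then v ⟨p, h⟩ else 0, ?_, ?_⟩, ?_⟩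
    · -- in the code
      rw [mem_dualRMCode]
      apply (hbridge _ ?_).2
      · intro k
        have := (hKmem v).1 hv k
        rw [← this]
        apply Finset.sum_congr rfl
        intro p _
        simp only [dif_pos p.2, Subtype.coe_eta]
      · intro p hp
        by_contra hps
        simp only [dif_neg hps] at hp
        exact hp rfl
    · intro p hp
      by_contra hps
      simp only [dif_neg hps] at hp
      exact hp rfl
    · apply Subtype.ext
      funext p
      simp only [dif_pos p.2, Subtype.coe_eta]

lemma nat_card_setOf {α : Type*} [Fintype α] (p : α → Prop) [DecidablePred p] :
    Nat.card {x | p x} = (Finset.univ.filter p).card := by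
  rw [Nat.card_eq_fintype_card]
  exact Fintype.card_of_subtype (Finset.univ.filter p) (by simp)

lemma neg_one_pow_sub (a b : ℕ) (h : b ≤ a) : (-1 : ℤ)^(a - b) = (-1)^a * (-1)^b := by
  have h2 : a - b + 2 * b = a + b := by omega
  calc (-1 : ℤ)^(a-b) = (-1)^(a-b) * ((-1)^2)^b := by norm_num
    _ = (-1)^(a - b + 2*b) := by rw [← pow_mul, ← pow_add]
    _ = (-1)^(a+b) := by rw [h2]
    _ = (-1)^a * (-1)^b := pow_add _ _ _

lemma final_alg (q d m : ℕ) (hd : 1 ≤ d) (hm : d + 2 ≤ m) :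
    ∑ j ∈ Finset.range (m+1), (m.choose j : ℤ) * ((-1)^(m-j) * (q : ℤ)^(j - (d+1))) =
    ∑ i ∈ Finset.range (m - d - 1), (-1 : ℤ)^i * (m.choose i) * ((q : ℤ)^(m - d - 1 - i) - 1) := by
  have hrefl := Finset.sum_range_reflect
    (fun j => (m.choose j : ℤ) * ((-1)^(m-j) * (q : ℤ)^(j - (d+1)))) (m+1)
  rw [← hrefl]
  have hterm : ∀ i ∈ Finset.range (m+1),
      (m.choose (m + 1 - 1 - i) : ℤ) * ((-1)^(m - (m + 1 - 1 - i)) * (q:ℤ)^((m + 1 - 1 - i) - (d+1)))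
        = (-1 : ℤ)^i * (m.choose i) * ((q:ℤ)^(m - d - 1 - i) - 1) + (-1)^i * (m.choose i) := by
    intro i hi
    rw [Finset.mem_range] at hi
    have h1 : m + 1 - 1 - i = m - i := by omega
    have h2 : m - (m - i) = i := by omega
    have h3 : (m - i) - (d + 1) = m - d - 1 - i := by omega
    have h4 : m.choose (m - i) = m.choose i := Nat.choose_symm (by omega)
    rw [h1, h2, h3, h4]
    ring
  rw [Finset.sum_congr rfl hterm, Finset.sum_add_distrib]
  have hz : ∑ i ∈ Finset.range (m+1), (-1:ℤ)^i * (m.choose i) = 0 :=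
    Int.alternating_sum_range_choose_of_ne (by omega)
  rw [hz, add_zero]
  apply (Finset.sum_subset (Finset.range_subset_range.2 (by omega)) ?_).symm
  intro i hi hni
  rw [Finset.mem_range] at hi hni
  have : m - d - 1 - i = 0 := by omega
  rw [this, pow_zero, sub_self, mul_zero]

/-- For `d ≥ 1`, `d+2 ≤ m ≤ q+1` and a fixed set of `m` collinear points in `P²(F_q)`, the
number of codewords of `C_{2,d}^⊥` whose support is exactly this set of points equals
`f_d(m) = Σ_{i=0}^{m-d-2} (-1)^i·C(m,i)·(q^{m-d-1-i} - 1)`. -/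
theorem count_dual_codewords_full_support (F : Type*) [Field F] [Fintype F]
    [Fintype (Projectivization F (Fin 3 → F))] (q : ℕ) (hq : q = Fintype.card F)
    (d : ℕ) (hd : 1 ≤ d) (m : ℕ) (P : Finset (Projectivization F (Fin 3 → F)))
    (hP : P.card = m) (hm1 : d + 2 ≤ m) (hm2 : m ≤ q + 1)
    (hcol : ∃ ℓ : MvPolynomial (Fin 3) F, ℓ ≠ 0 ∧ ℓ.IsHomogeneous 1 ∧
      ∀ p ∈ P, eval p.rep ℓ = 0) :
    (Nat.card {c : Projectivization F (Fin 3 → F) → F |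
        c ∈ dualRMCode F d ∧ (∀ p, c p ≠ 0 → p ∈ P) ∧ ∀ p ∈ P, c p ≠ 0} : ℤ) =
      ∑ i ∈ Finset.range (m - d - 1),
        (-1 : ℤ) ^ i * (m.choose i) * ((q : ℤ) ^ (m - d - 1 - i) - 1) := by
  classical
  obtain ⟨ℓ, hl0, hl1, hlP⟩ := hcol
  subst hq
  subst hP
  set CF : Finset (Projectivization F (Fin 3 → F)) →
      Finset (Projectivization F (Fin 3 → F) → F) :=
    fun T => Finset.univ.filter (fun c => c ∈ dualRMCode F d ∧ ∀ p, c p ≠ 0 → p ∈ T) with hCF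
  have hcount : ∀ T, T ⊆ P →
      (CF T).card = Fintype.card F ^ (T.card - (d+1)) := by
    intro T hT
    have h := card_codewords_subset d T hl0 hl1 (fun p hp => hlP p (hT hp))
    rwa [nat_card_setOf] at h
  set E : Finset (Projectivization F (Fin 3 → F) → F) := Finset.univ.filter
    (fun c => c ∈ dualRMCode F d ∧ (∀ p, c p ≠ 0 → p ∈ P) ∧ ∀ p ∈ P, c p ≠ 0) with hE
  have hEcard : Nat.card {c : Projectivization F (Fin 3 → F) → F |
      c ∈ dualRMCode F d ∧ (∀ p, c p ≠ 0 → p ∈ P) ∧ ∀ p ∈ P, c p ≠ 0} = E.card :=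
    nat_card_setOf _
  rw [hEcard]
  have hIE : (E.card : ℤ) = ∑ T ∈ P.powerset, (-1:ℤ)^((P \ T).card) * ((CF T).card : ℤ) := by
    have hCFsum : ∀ T ∈ P.powerset, ((CF T).card : ℤ)
        = ∑ c ∈ CF P, (if ∀ p, c p ≠ 0 → p ∈ T then (1:ℤ) else 0) := by
      intro T hT
      rw [Finset.mem_powerset] at hT
      have hfil : CF T = (CF P).filter (fun c => ∀ p, c p ≠ 0 → p ∈ T) := by
        ext c
        simp only [hCF, Finset.mem_filter, Finset.mem_univ, true_and]
        constructor
        · rintro ⟨h1, h2⟩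
          exact ⟨⟨h1, fun p hp => hT (h2 p hp)⟩, h2⟩
        · rintro ⟨⟨h1, _⟩, h2⟩
          exact ⟨h1, h2⟩
      rw [hfil, Finset.card_filter]
      push_cast
      rfl
    calc (E.card : ℤ)
        = ∑ c ∈ CF P, (if ∀ p ∈ P, c p ≠ 0 then (1:ℤ) else 0) := by
          have hfil : E = (CF P).filter (fun c => ∀ p ∈ P, c p ≠ 0) := by
            ext c
            simp only [hE, hCF, Finset.mem_filter, Finset.mem_univ, true_and]
            tauto
          rw [hfil, Finset.card_filter]
          push_cast
          rfl
      _ = ∑ c ∈ CF P, ∑ T ∈ P.powerset, (-1:ℤ)^((P \ T).card) *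
            (if ∀ p, c p ≠ 0 → p ∈ T then 1 else 0) := by
          apply Finset.sum_congr rfl
          intro c hc
          have hsupp : ∀ p, c p ≠ 0 → p ∈ P := (Finset.mem_filter.1 hc).2.2
          set s : Finset (Projectivization F (Fin 3 → F)) :=
            P.filter (fun p => c p ≠ 0) with hs
          have hsP : s ⊆ P := Finset.filter_subset _ _
          have hcond : ∀ T ∈ P.powerset, ((∀ p, c p ≠ 0 → p ∈ T) ↔ s ⊆ T) := by
            intro T hT
            constructor
            · intro h x hx
              exact h x (Finset.mem_filter.1 hx).2
            · intro h p hp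
              exact h (Finset.mem_filter.2 ⟨hsupp p hp, hp⟩)
          rw [Finset.sum_congr rfl (fun T hT => by
            rw [mul_ite, mul_one, mul_zero, if_congr (hcond T hT) rfl rfl])]
          rw [← Finset.sum_filter]
          rw [Finset.sum_nbij' (t := (P \ s).powerset)
            (g := fun U => (-1:ℤ)^((P \ s).card) * (-1)^(U.card))
            (fun T => T \ s) (fun U => s ∪ U)
            (fun T hT => by
              simp only [Finset.mem_filter, Finset.mem_powerset] at hT
              exact Finset.mem_powerset.2 (Finset.sdiff_subset_sdiff hT.1 Finset.Subset.rfl))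
            (fun U hU => by
              rw [Finset.mem_powerset] at hU
              refine Finset.mem_filter.2 ⟨Finset.mem_powerset.2 ?_, Finset.subset_union_left⟩
              exact Finset.union_subset hsP (hU.trans (Finset.sdiff_subset)))
            (fun T hT => by
              simp only [Finset.mem_filter, Finset.mem_powerset] at hT
              exact Finset.union_sdiff_of_subset hT.2)
            (fun U hU => by
              rw [Finset.mem_powerset] at hU
              apply Finset.union_sdiff_cancel_left
              exact Finset.disjoint_left.2 (fun x hx hxU => (Finset.mem_sdiff.1 (hU hxU)).2 hx))
            (fun T hT => by
              simp only [Finset.mem_filter, Finset.mem_powerset] at hT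
              have hPT : P \ T = (P \ s) \ (T \ s) := by
                ext x
                simp only [Finset.mem_sdiff]
                have hx : x ∈ s → x ∈ T := fun h => hT.2 h
                tauto
              rw [hPT, Finset.card_sdiff_of_subset (Finset.sdiff_subset_sdiff hT.1 Finset.Subset.rfl)]
              exact neg_one_pow_sub _ _ (Finset.card_le_card
                (Finset.sdiff_subset_sdiff hT.1 Finset.Subset.rfl)))]
          rw [← Finset.mul_sum, Finset.sum_powerset_neg_one_pow_card]
          by_cases hfull : ∀ p ∈ P, c p ≠ 0
          · have hPs : P \ s = ∅ := Finset.sdiff_eq_empty_iff_subset.2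
              (fun p hp => Finset.mem_filter.2 ⟨hp, hfull p hp⟩)
            rw [if_pos hfull, if_pos hPs, hPs]
            simp
          · have hPs : P \ s ≠ ∅ := by
              intro hcon
              apply hfull
              intro p hp
              exact (Finset.mem_filter.1 (Finset.sdiff_eq_empty_iff_subset.1 hcon hp)).2
            rw [if_neg hfull, if_neg hPs, mul_zero]
      _ = ∑ T ∈ P.powerset, ∑ c ∈ CF P, (-1:ℤ)^((P \ T).card) *
            (if ∀ p, c p ≠ 0 → p ∈ T then 1 else 0) := Finset.sum_comm
      _ = ∑ T ∈ P.powerset, (-1:ℤ)^((P \ T).card) * ((CF T).card : ℤ) := by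
          apply Finset.sum_congr rfl
          intro T hT
          rw [hCFsum T hT, Finset.mul_sum]
  rw [hIE]
  have hstep : ∑ T ∈ P.powerset, (-1:ℤ)^((P \ T).card) * ((CF T).card : ℤ)
      = ∑ j ∈ Finset.range (P.card + 1), (P.card.choose j : ℤ) *
          ((-1)^(P.card - j) * (Fintype.card F : ℤ)^(j - (d+1))) := by
    rw [Finset.powerset_card_disjiUnion]
    refine (Finset.sum_disjiUnion _ _ _).trans ?_
    apply Finset.sum_congr rfl
    intro j hj
    have hconst : ∀ T ∈ Finset.powersetCard j P,
        (-1:ℤ)^((P \ T).card) * ((CF T).card : ℤ)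
          = (-1)^(P.card - j) * (Fintype.card F : ℤ)^(j - (d+1)) := by
      intro T hT
      obtain ⟨hTP, hTc⟩ := Finset.mem_powersetCard.1 hT
      rw [Finset.card_sdiff_of_subset hTP, hTc, hcount T hTP, hTc]
      push_cast
      ring
    rw [Finset.sum_congr rfl hconst, Finset.sum_const, Finset.card_powersetCard,
      nsmul_eq_mul]
  rw [hstep]
  exact final_alg (Fintype.card F) d P.card hd hm1
end
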